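/- arXiv:2008.03486 — 9 statements merged into one kernel-verified Lean document; each statement's English description precedes it below -/
import Mathlib

section
/- Let f : [0,1] → [0,1] be continuous and surjective. If there exists a positive integer k and closed subintervals A and B of [0,1] such that f(A) = f(B), A and B intersect in at most one point, A is nondegenerate, and some nondegenerate component of the preimage (f^k)⁻¹(A) is contained in A (i.e., there is a closed nondegenerate subinterval D ⊆ A with f^k(D) = A), then f admits a splitting sequence. -/
open Set Filter Topology

/-- `IsSplittingSeq f l r N S` : the sequence of closed proper subintervals
`T n = Icc (l n) (r n)` of `[0,1]` is a tight sequence for `f` (i.e. `f (T (n+1)) = T n`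
and `T n` is nondegenerate for all large `n`), and it is split by the nondegenerate
closed intervals `S n` for `n` in the infinite set `N`, meaning
`S n ∩ T n ⊆ {l n, r n}` and `f (S n) = f (T n)`. -/
def IsSplittingSeq (f : ℝ → ℝ) (l r : ℕ → ℝ) (N : Set ℕ) (S : ℕ → Set ℝ) : Prop :=
  (∀ n, l n ≤ r n) ∧
  (∀ n, Icc (l n) (r n) ⊆ Icc 0 1) ∧
  (∀ n, Icc (l n) (r n) ≠ Icc (0:ℝ) 1) ∧
  (∀ n, f '' Icc (l (n+1)) (r (n+1)) = Icc (l n) (r n)) ∧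
  (∃ m, ∀ n > m, l n < r n) ∧
  N.Infinite ∧
  (∀ n ∈ N, (∃ u v : ℝ, u < v ∧ S n = Icc u v) ∧ S n ⊆ Icc 0 1 ∧
    S n ∩ Icc (l n) (r n) ⊆ {l n, r n} ∧ f '' S n = f '' Icc (l n) (r n))

/-- `f` admits a splitting sequence. -/
def SplittingSeq (f : ℝ → ℝ) : Prop := ∃ l r N S, IsSplittingSeq f l r N S

lemma pullback_core {g : ℝ → ℝ} {u v p q : ℝ} (huv : u ≤ v)
    (hg : ContinuousOn g (Icc u v)) (hpq : p ≤ q) (hu : g u = p) (hv : g v = q) :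
    ∃ u' v', u ≤ u' ∧ u' ≤ v' ∧ v' ≤ v ∧ g '' Icc u' v' = Icc p q := by
  set Kq : Set ℝ := Icc u v ∩ g ⁻¹' {q} with hKq
  have hKqcl : IsClosed Kq := hg.preimage_isClosed_of_isClosed isClosed_Icc isClosed_singleton
  have hKqne : Kq.Nonempty := ⟨v, ⟨huv, le_rfl⟩, hv⟩
  have hKqbdd : BddBelow Kq := ⟨u, fun x hx => hx.1.1⟩
  set v' := sInf Kq with hv'
  have hv'mem : v' ∈ Kq := hKqcl.csInf_mem hKqne hKqbdd
  have hv'le : ∀ x ∈ Kq, v' ≤ x := fun x hx => csInf_le hKqbdd hx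
  have huv' : u ≤ v' := hv'mem.1.1
  have hv'v : v' ≤ v := hv'mem.1.2
  have hgv' : g v' = q := hv'mem.2
  set Kp : Set ℝ := Icc u v' ∩ g ⁻¹' {p} with hKp
  have hKpcl : IsClosed Kp :=
    (hg.mono (Icc_subset_Icc le_rfl hv'v)).preimage_isClosed_of_isClosed isClosed_Icc
      isClosed_singleton
  have hKpne : Kp.Nonempty := ⟨u, ⟨le_rfl, huv'⟩, hu⟩
  have hKpbdd : BddAbove Kp := ⟨v', fun x hx => hx.1.2⟩
  set u' := sSup Kp with hu'
  have hu'mem : u' ∈ Kp := hKpcl.csSup_mem hKpne hKpbdd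
  have hu'ge : ∀ x ∈ Kp, x ≤ u' := fun x hx => le_csSup hKpbdd hx
  have huu' : u ≤ u' := hu'mem.1.1
  have hu'v' : u' ≤ v' := hu'mem.1.2
  have hgu' : g u' = p := hu'mem.2
  have hsubI : Icc u' v' ⊆ Icc u v := Icc_subset_Icc huu' hv'v
  have hg' : ContinuousOn g (Icc u' v') := hg.mono hsubI
  refine ⟨u', v', huu', hu'v', hv'v, subset_antisymm ?_ ?_⟩
  · rintro y ⟨x, hx, rfl⟩
    constructor
    · by_contra hlt
      push_neg at hlt
      obtain ⟨y, hy, hgy⟩ := intermediate_value_Icc hx.2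
        (hg'.mono (Icc_subset_Icc hx.1 le_rfl))
        (show p ∈ Icc (g x) (g v') from ⟨hlt.le, by rw [hgv']; exact hpq⟩)
      have hyKp : y ∈ Kp := ⟨⟨huu'.trans (hx.1.trans hy.1), hy.2⟩, hgy⟩
      have hxu' : x = u' := le_antisymm (hy.1.trans (hu'ge y hyKp)) hx.1
      rw [hxu', hgu'] at hlt
      exact lt_irrefl p hlt
    · by_contra hlt
      push_neg at hlt
      obtain ⟨y, hy, hgy⟩ := intermediate_value_Icc hx.1
        (hg'.mono (Icc_subset_Icc le_rfl hx.2))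
        (show q ∈ Icc (g u') (g x) from ⟨by rw [hgu']; exact hpq, hlt.le⟩)
      have hyKq : y ∈ Kq := ⟨⟨huu'.trans hy.1, (hy.2.trans hx.2).trans hv'v⟩, hgy⟩
      have hxv' : x = v' := le_antisymm hx.2 ((hv'le y hyKq).trans hy.2)
      rw [hxv', hgv'] at hlt
      exact lt_irrefl q hlt
  · rw [← hgu', ← hgv']
    exact intermediate_value_Icc hu'v' hg'

lemma pullback {g : ℝ → ℝ} {c d p q : ℝ} (hcd : c ≤ d)
    (hg : ContinuousOn g (Icc c d)) (hpq : p ≤ q) (hsub : Icc p q ⊆ g '' Icc c d) :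
    ∃ u v, u ≤ v ∧ Icc u v ⊆ Icc c d ∧ g '' Icc u v = Icc p q := by
  obtain ⟨x, hx, hgx⟩ := hsub (left_mem_Icc.2 hpq)
  obtain ⟨y, hy, hgy⟩ := hsub (right_mem_Icc.2 hpq)
  rcases le_total x y with hxy | hyx
  · obtain ⟨u', v', h1, h2, h3, h4⟩ :=
      pullback_core hxy (hg.mono (Icc_subset_Icc hx.1 hy.2)) hpq hgx hgy
    exact ⟨u', v', h2, Icc_subset_Icc (hx.1.trans h1) (h3.trans hy.2), h4⟩
  · obtain ⟨u', v', h1, h2, h3, h4⟩ :=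
      pullback_core (g := fun x => p + q - g x) hyx
        ((continuousOn_const.sub (hg.mono (Icc_subset_Icc hy.1 hx.2))))
        hpq (by simp [hgy]) (by simp [hgx])
    refine ⟨u', v', h2, Icc_subset_Icc (hy.1.trans h1) (h3.trans hx.2), ?_⟩
    have hcomp : (fun y => p + q - y) ∘ (fun x => p + q - g x) = g := by
      funext z; simp only [Function.comp_apply]; ring
    have : g '' Icc u' v' = (fun y => p + q - y) '' Icc p q := by
      rw [← h4, ← image_comp, hcomp]
    rw [this, image_const_sub_Icc]
    congr 1 <;> ring

theorem stmt_0 (f : ℝ → ℝ) (hf : ContinuousOn f (Icc 0 1))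
    (hsurj : f '' Icc 0 1 = Icc 0 1)
    (k : ℕ) (hk : 0 < k) (a₁ a₂ b₁ b₂ d₁ d₂ : ℝ)
    (hA : Icc a₁ a₂ ⊆ Icc 0 1) (hB : Icc b₁ b₂ ⊆ Icc 0 1)
    (ha : a₁ < a₂) (hb : b₁ ≤ b₂)
    (hAB : f '' Icc a₁ a₂ = f '' Icc b₁ b₂)
    (hABcap : (Icc a₁ a₂ ∩ Icc b₁ b₂).Subsingleton)
    (hd : d₁ < d₂) (hDA : Icc d₁ d₂ ⊆ Icc a₁ a₂)
    (hDk : f^[k] '' Icc d₁ d₂ = Icc a₁ a₂) :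
    SplittingSeq f := by
  have hD01 : Icc d₁ d₂ ⊆ Icc 0 1 := fun x hx => hA (hDA hx)
  have hf01 : MapsTo f (Icc 0 1) (Icc 0 1) := fun x hx => hsurj ▸ mem_image_of_mem f hx
  have hfk : ∀ m : ℕ, ContinuousOn (f^[m]) (Icc 0 1) := by
    intro m
    induction m with
    | zero => simpa using continuousOn_id
    | succ m ih =>
      rw [Function.iterate_succ']
      exact hf.comp ih (hf01.iterate m)
  have himg_succ : ∀ (m : ℕ) (s : Set ℝ), f^[m + 1] '' s = f '' (f^[m] '' s) := by
    intro m s; rw [Function.iterate_succ', image_comp]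
  have himg_succ' : ∀ (m : ℕ) (s : Set ℝ), f^[m + 1] '' s = f^[m] '' (f '' s) := by
    intro m s; rw [Function.iterate_succ, image_comp]
  have himg_add : ∀ (m n : ℕ) (s : Set ℝ), f^[m + n] '' s = f^[m] '' (f^[n] '' s) := by
    intro m n s; rw [Function.iterate_add, image_comp]
  have hksub : k - 1 + 1 = k := Nat.succ_pred_eq_of_pos hk
  -- b₁ < b₂
  have hb' : b₁ < b₂ := by
    by_contra h
    push_neg at h
    have hBsub : Icc b₁ b₂ ⊆ {b₁} := fun x hx =>
      mem_singleton_iff.2 (le_antisymm (hx.2.trans h) hx.1)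
    have h1 : (f '' Icc a₁ a₂).Subsingleton := by
      rw [hAB]
      exact subsingleton_singleton.anti ((image_mono (f := f) hBsub).trans (by rw [image_singleton]))
    have h2 : (Icc a₁ a₂).Subsingleton := by
      rw [← hDk, ← hksub, himg_succ']
      exact ((h1.anti (image_mono (f := f) hDA)).image _)
    exact ha.ne (h2 (left_mem_Icc.2 ha.le) (right_mem_Icc.2 ha.le))
  -- A is proper
  have hAne : Icc a₁ a₂ ≠ Icc (0:ℝ) 1 := by
    intro h
    have hBA : Icc b₁ b₂ ⊆ Icc a₁ a₂ := by rw [h]; exact hB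
    have : (Icc b₁ b₂).Subsingleton := hABcap.anti (fun x hx => ⟨hBA hx, hx⟩)
    exact hb'.ne (this (left_mem_Icc.2 hb'.le) (right_mem_Icc.2 hb'.le))
  -- intersection points are endpoints of A
  have hcap : ∀ x, x ∈ Icc a₁ a₂ → x ∈ Icc b₁ b₂ → x = a₁ ∨ x = a₂ := by
    intro x hxA hxB
    have hle : max a₁ b₁ ≤ min a₂ b₂ :=
      le_trans (max_le hxA.1 hxB.1) (le_min hxA.2 hxB.2)
    have hmax : max a₁ b₁ ∈ Icc a₁ a₂ ∩ Icc b₁ b₂ :=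
      ⟨⟨le_max_left _ _, hle.trans (min_le_left _ _)⟩,
       ⟨le_max_right _ _, hle.trans (min_le_right _ _)⟩⟩
    have hmin : min a₂ b₂ ∈ Icc a₁ a₂ ∩ Icc b₁ b₂ :=
      ⟨⟨(le_max_left a₁ b₁).trans hle, min_le_left _ _⟩,
       ⟨(le_max_right a₁ b₁).trans hle, min_le_right _ _⟩⟩
    have hx1 : x = max a₁ b₁ := hABcap ⟨hxA, hxB⟩ hmax
    have hx2 : x = min a₂ b₂ := hABcap ⟨hxA, hxB⟩ hmin
    rcases max_cases a₁ b₁ with ⟨h1, _⟩ | ⟨h1, _⟩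
    · exact Or.inl (hx1.trans h1)
    · rcases min_cases a₂ b₂ with ⟨h2, _⟩ | ⟨h2, _⟩
      · exact Or.inr (hx2.trans h2)
      · exact absurd ((hx1.trans h1).symm.trans (hx2.trans h2)) hb'.ne
  -- the nested sequence D_j
  set C : ℝ × ℝ → Prop := fun p =>
    p.1 < p.2 ∧ Icc p.1 p.2 ⊆ Icc d₁ d₂ ∧ Icc p.1 p.2 ⊆ f^[k] '' Icc p.1 p.2 with hCdef
  have hC0 : C (d₁, d₂) := ⟨hd, subset_rfl, by rw [hDk]; exact hDA⟩
  have hstep : ∀ p : ℝ × ℝ, ∃ q : ℝ × ℝ, C p →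
      C q ∧ f^[k] '' Icc q.1 q.2 = Icc p.1 p.2 ∧ Icc q.1 q.2 ⊆ Icc p.1 p.2 := by
    intro p
    by_cases hp : C p
    · obtain ⟨hlt, hsubD, hself⟩ := hp
      have hcont : ContinuousOn (f^[k]) (Icc p.1 p.2) :=
        (hfk k).mono (hsubD.trans hD01)
      obtain ⟨u, v, huv, hIsub, himg⟩ := pullback hlt.le hcont hlt.le hself
      have huv' : u < v := by
        rcases lt_or_eq_of_le huv with h | h
        · exact h
        · exfalso
          rw [← h, Icc_self, image_singleton] at himg
          have h1 : p.1 = f^[k] u := by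
            rw [← mem_singleton_iff, himg]; exact left_mem_Icc.2 hlt.le
          have h2 : p.2 = f^[k] u := by
            rw [← mem_singleton_iff, himg]; exact right_mem_Icc.2 hlt.le
          exact hlt.ne (h1.trans h2.symm)
      refine ⟨(u, v), fun _ => ⟨⟨huv', (hIsub.trans hsubD : _), ?_⟩, himg, hIsub⟩⟩
      rw [himg]
      exact hIsub
    · exact ⟨p, fun h => absurd h hp⟩
  choose nxt hnxt using hstep
  set g : ℕ → ℝ × ℝ := fun n => Nat.rec (d₁, d₂) (fun _ p => nxt p) n with hgdef
  have hgC : ∀ n, C (g n) := by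
    intro n
    induction n with
    | zero => exact hC0
    | succ n ih => exact (hnxt (g n) ih).1
  have hgrel : ∀ n, f^[k] '' Icc (g (n + 1)).1 (g (n + 1)).2 = Icc (g n).1 (g n).2 :=
    fun n => (hnxt (g n) (hgC n)).2.1
  have hgnest : ∀ n, Icc (g (n + 1)).1 (g (n + 1)).2 ⊆ Icc (g n).1 (g n).2 :=
    fun n => (hnxt (g n) (hgC n)).2.2
  have hDj01 : ∀ j, Icc (g j).1 (g j).2 ⊆ Icc 0 1 := fun j => ((hgC j).2.1).trans hD01
  -- image of D_j under f^[k] is a nondegenerate interval inside A containing D_j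
  have hDkj : ∀ j, ∃ p q : ℝ, p < q ∧ f^[k] '' Icc (g j).1 (g j).2 = Icc p q ∧
      Icc p q ⊆ Icc a₁ a₂ ∧ Icc (g j).1 (g j).2 ⊆ Icc p q := by
    intro j
    cases j with
    | zero => exact ⟨a₁, a₂, ha, hDk, subset_rfl, hDA⟩
    | succ j => exact ⟨(g j).1, (g j).2, (hgC j).1, hgrel j, ((hgC j).2.1).trans hDA, hgnest j⟩
  -- the tight sequence
  set T : ℕ → Set ℝ := fun n => f^[k - n % k] '' Icc (g (n / k)).1 (g (n / k)).2 with hTdef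
  set l : ℕ → ℝ := fun n => sInf (T n) with hldef
  set r : ℕ → ℝ := fun n => sSup (T n) with hrdef
  have hTeq : ∀ n, T n = Icc (l n) (r n) := fun n =>
    ContinuousOn.image_Icc (hgC (n / k)).1.le ((hfk (k - n % k)).mono (hDj01 (n / k)))
  have hT01 : ∀ n, T n ⊆ Icc 0 1 := fun n =>
    (image_mono (hDj01 (n / k))).trans (hf01.iterate (k - n % k)).image_subset
  have hTfull : ∀ n, f^[n % k] '' T n = f^[k] '' Icc (g (n / k)).1 (g (n / k)).2 := by
    intro n
    show f^[n % k] '' (f^[k - n % k] '' _) = _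
    rw [← himg_add, Nat.add_sub_cancel' (Nat.mod_lt n hk).le]
  have hTnd : ∀ n, l n < r n := by
    intro n
    by_contra h
    push_neg at h
    have hsub : (T n).Subsingleton := by
      rw [hTeq n]
      intro x hx y hy
      have hx' : x = l n := le_antisymm (hx.2.trans h) hx.1
      have hy' : y = l n := le_antisymm (hy.2.trans h) hy.1
      rw [hx', hy']
    have h2 : (f^[n % k] '' T n).Subsingleton := hsub.image _
    rw [hTfull n] at h2
    obtain ⟨p, q, hpq, heq, -, -⟩ := hDkj (n / k)
    rw [heq] at h2
    exact hpq.ne (h2 (left_mem_Icc.2 hpq.le) (right_mem_Icc.2 hpq.le))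
  have hT0 : T 0 = Icc a₁ a₂ := by
    show f^[k - 0 % k] '' Icc (g (0 / k)).1 (g (0 / k)).2 = _
    rw [Nat.zero_mod, Nat.sub_zero, Nat.zero_div]
    exact hDk
  have harith : ∀ i : ℕ, i + 1 < k → k - (i + 1) + 1 = k - i := fun i hi => by omega
  have hTstep : ∀ n, f '' T (n + 1) = T n := by
    intro n
    have hnd := Nat.div_add_mod n k
    have hk1 : n % k < k := Nat.mod_lt n hk
    rcases Nat.lt_or_ge (n % k + 1) k with hlt | hge
    · have e1 : n + 1 = k * (n / k) + (n % k + 1) := by omega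
      have hmod : (n + 1) % k = n % k + 1 := by
        rw [e1, Nat.mul_add_mod, Nat.mod_eq_of_lt hlt]
      have hdiv : (n + 1) / k = n / k := by
        rw [e1, Nat.mul_add_div hk, Nat.div_eq_of_lt hlt, Nat.add_zero]
      show f '' (f^[k - (n + 1) % k] '' Icc (g ((n + 1) / k)).1 (g ((n + 1) / k)).2) =
        f^[k - n % k] '' Icc (g (n / k)).1 (g (n / k)).2
      rw [hmod, hdiv, ← himg_succ, harith _ hlt]
    · have hmk : n % k + 1 = k := le_antisymm (Nat.succ_le_of_lt hk1) hge
      have e1 : n + 1 = k * (n / k + 1) := by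
        calc n + 1 = k * (n / k) + (n % k + 1) := by omega
        _ = k * (n / k) + k := by rw [hmk]
        _ = k * (n / k + 1) := by ring
      have hmod : (n + 1) % k = 0 := by rw [e1]; exact Nat.mul_mod_right k _
      have hdiv : (n + 1) / k = n / k + 1 := by rw [e1]; exact Nat.mul_div_cancel_left _ hk
      have h1 : k - n % k = 1 := by omega
      show f '' (f^[k - (n + 1) % k] '' Icc (g ((n + 1) / k)).1 (g ((n + 1) / k)).2) =
        f^[k - n % k] '' Icc (g (n / k)).1 (g (n / k)).2
      rw [hmod, hdiv, Nat.sub_zero, hgrel (n / k), h1, Function.iterate_one]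
  have hTproper : ∀ n, T n ≠ Icc (0:ℝ) 1 := by
    intro n
    induction n with
    | zero => rw [hT0]; exact hAne
    | succ n ih =>
      intro h
      apply ih
      rw [← hTstep n, h, hsurj]
  -- splitting intervals
  have hsplit : ∀ n : ℕ, ∃ Sn : Set ℝ, n ∈ Set.range (fun j : ℕ => (j + 1) * k) →
      (∃ u v : ℝ, u < v ∧ Sn = Icc u v) ∧ Sn ⊆ Icc 0 1 ∧
      Sn ∩ Icc (l n) (r n) ⊆ {l n, r n} ∧ f '' Sn = f '' Icc (l n) (r n) := by
    intro n
    by_cases hn : ∃ j : ℕ, (j + 1) * k = n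
    · obtain ⟨j, rfl⟩ := hn
      have hmod : ((j + 1) * k) % k = 0 := Nat.mul_mod_left _ _
      have hdiv : ((j + 1) * k) / k = j + 1 := Nat.mul_div_cancel _ hk
      have hTn : T ((j + 1) * k) = Icc (g j).1 (g j).2 := by
        show f^[k - ((j + 1) * k) % k] '' Icc (g (((j + 1) * k) / k)).1 (g (((j + 1) * k) / k)).2 = _
        rw [hmod, Nat.sub_zero, hdiv]
        exact hgrel j
      have hlr : Icc (l ((j + 1) * k)) (r ((j + 1) * k)) = Icc (g j).1 (g j).2 := by
        rw [← hTeq, hTn]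
      have hcont : ContinuousOn f (Icc (g j).1 (g j).2) := hf.mono (hDj01 j)
      have hPicc : f '' Icc (g j).1 (g j).2 =
          Icc (sInf (f '' Icc (g j).1 (g j).2)) (sSup (f '' Icc (g j).1 (g j).2)) :=
        ContinuousOn.image_Icc (hgC j).1.le hcont
      set p := sInf (f '' Icc (g j).1 (g j).2) with hpdef
      set q := sSup (f '' Icc (g j).1 (g j).2) with hqdef
      have hpq : p < q := by
        by_contra h
        push_neg at h
        have h1 : (f '' Icc (g j).1 (g j).2).Subsingleton := by
          rw [hPicc]
          intro x hx y hy
          have hx' : x = p := le_antisymm (hx.2.trans h) hx.1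
          have hy' : y = p := le_antisymm (hy.2.trans h) hy.1
          rw [hx', hy']
        have h2 : (f^[k] '' Icc (g j).1 (g j).2).Subsingleton := by
          rw [← hksub, himg_succ']
          exact h1.image _
        obtain ⟨p', q', hp'q', heq, -, -⟩ := hDkj j
        rw [heq] at h2
        exact hp'q'.ne (h2 (left_mem_Icc.2 hp'q'.le) (right_mem_Icc.2 hp'q'.le))
      have hPB : Icc p q ⊆ f '' Icc b₁ b₂ := by
        rw [← hPicc, ← hAB]
        exact image_mono (f := f) (((hgC j).2.1).trans hDA)
      obtain ⟨u, v, huv, hSB, hSimg⟩ := pullback hb (hf.mono hB) hpq.le hPB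
      have huv' : u < v := by
        rcases lt_or_eq_of_le huv with h | h
        · exact h
        · exfalso
          rw [← h, Icc_self, image_singleton] at hSimg
          have h1 : p = f u := by
            rw [← mem_singleton_iff, hSimg]; exact left_mem_Icc.2 hpq.le
          have h2 : q = f u := by
            rw [← mem_singleton_iff, hSimg]; exact right_mem_Icc.2 hpq.le
          exact hpq.ne (h1.trans h2.symm)
      have hTA : Icc (l ((j + 1) * k)) (r ((j + 1) * k)) ⊆ Icc a₁ a₂ := by
        rw [hlr]; exact ((hgC j).2.1).trans hDA
      refine ⟨Icc u v, fun _ => ⟨⟨u, v, huv', rfl⟩, hSB.trans hB, ?_, ?_⟩⟩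
      · rintro x ⟨hxS, hxT⟩
        have hxA : x ∈ Icc a₁ a₂ := hTA hxT
        have hxB : x ∈ Icc b₁ b₂ := hSB hxS
        rcases hcap x hxA hxB with h | h
        · have hlA : a₁ ≤ l ((j + 1) * k) := (hTA (left_mem_Icc.2 (hTnd _).le)).1
          exact Or.inl (le_antisymm (by rw [h]; exact hlA) hxT.1)
        · have hrA : r ((j + 1) * k) ≤ a₂ := (hTA (right_mem_Icc.2 (hTnd _).le)).2
          exact Or.inr (le_antisymm hxT.2 (by rw [h]; exact hrA))
      · rw [hlr, hSimg, hPicc]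
    · refine ⟨∅, fun hmem => absurd ?_ hn⟩
      obtain ⟨j, hj⟩ := hmem
      exact ⟨j, hj⟩
  choose S hS using hsplit
  refine ⟨l, r, Set.range (fun j : ℕ => (j + 1) * k), S,
    fun n => (hTnd n).le, fun n => ?_, fun n => ?_, fun n => ?_,
    ⟨0, fun n _ => hTnd n⟩, ?_, hS⟩
  · rw [← hTeq]; exact hT01 n
  · rw [← hTeq]; exact hTproper n
  · rw [← hTeq, ← hTeq]; exact hTstep n
  · apply Set.infinite_range_of_injective
    intro a b hab
    have : (a + 1) * k = (b + 1) * k := hab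
    have := Nat.eq_of_mul_eq_mul_right hk this
    omega
end

section
/- Let f : [0,1] → [0,1] be continuous and surjective. If f admits a periodic point of period m for some m > 2, then f admits a splitting sequence. -/
open Set Filter Topology

/-- Exact pullback: if a nondegenerate interval `[s,t]` is contained in the image of `[u,v]`
under a continuous map, then some subinterval maps *exactly* onto `[s,t]`. -/
lemma exists_preimage_Icc {f : ℝ → ℝ} {u v s t : ℝ} (huv : u ≤ v)
    (hf : ContinuousOn f (Icc u v)) (hst : s ≤ t) (hsub : Icc s t ⊆ f '' Icc u v) :
    ∃ p q, p ≤ q ∧ Icc p q ⊆ Icc u v ∧ f '' Icc p q = Icc s t := by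
  obtain ⟨a, ha, hfa⟩ := hsub (left_mem_Icc.mpr hst)
  obtain ⟨b, hb, hfb⟩ := hsub (right_mem_Icc.mpr hst)
  rcases le_total a b with hab | hab
  · -- increasing flavor : f a = s, f b = t, a ≤ b
    have habuv : Icc a b ⊆ Icc u v := Icc_subset_Icc ha.1 hb.2
    have hfab : ContinuousOn f (Icc a b) := hf.mono habuv
    set A : Set ℝ := Icc a b ∩ f ⁻¹' {s} with hA
    have hAcl : IsClosed A := hfab.preimage_isClosed_of_isClosed isClosed_Icc isClosed_singleton
    have hAne : A.Nonempty := ⟨a, left_mem_Icc.mpr hab, by simpa using hfa⟩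
    have hAbdd : BddAbove A := (bddAbove_Icc).mono inter_subset_left
    set p := sSup A with hp
    have hpA : p ∈ A := hAcl.csSup_mem hAne hAbdd
    have hpab : p ∈ Icc a b := hpA.1
    have hfp : f p = s := hpA.2
    set B : Set ℝ := Icc p b ∩ f ⁻¹' {t} with hB
    have hfpb : ContinuousOn f (Icc p b) := hfab.mono (Icc_subset_Icc hpab.1 le_rfl)
    have hBcl : IsClosed B := hfpb.preimage_isClosed_of_isClosed isClosed_Icc isClosed_singleton
    have hBne : B.Nonempty := ⟨b, right_mem_Icc.mpr hpab.2, by simpa using hfb⟩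
    have hBbdd : BddBelow B := (bddBelow_Icc).mono inter_subset_left
    set q := sInf B with hq
    have hqB : q ∈ B := hBcl.csInf_mem hBne hBbdd
    have hqpb : q ∈ Icc p b := hqB.1
    have hfq : f q = t := hqB.2
    have hpq : p ≤ q := hqpb.1
    have hsubuv : Icc p q ⊆ Icc u v := fun z hz =>
      habuv ⟨le_trans hpab.1 hz.1, le_trans hz.2 hqpb.2⟩
    have hsubab : Icc p q ⊆ Icc a b := fun z hz =>
      ⟨le_trans hpab.1 hz.1, le_trans hz.2 hqpb.2⟩
    refine ⟨p, q, hpq, hsubuv, ?_⟩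
    apply Subset.antisymm
    · rintro _ ⟨z, hz, rfl⟩
      constructor
      · by_contra hcon
        push_neg at hcon
        have hzq : z ≤ q := hz.2
        have hcont : ContinuousOn f (Icc z q) :=
          hfab.mono (fun y hy => ⟨le_trans (hsubab hz).1 hy.1, le_trans hy.2 hqpb.2⟩)
        have : s ∈ Icc (f z) (f q) := ⟨hcon.le, by rw [hfq]; exact hst⟩
        obtain ⟨y, hy, hfy⟩ := intermediate_value_Icc hzq hcont this
        have hyA : y ∈ A := ⟨⟨le_trans (hsubab hz).1 hy.1, le_trans hy.2 hqpb.2⟩, by simpa using hfy⟩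
        have hylep : y ≤ p := le_csSup hAbdd hyA
        have hzp : p < z := by
          rcases eq_or_lt_of_le hz.1 with h | h
          · exfalso; rw [← h, hfp] at hcon; exact lt_irrefl _ hcon
          · exact h
        exact absurd hylep (not_le.mpr (lt_of_lt_of_le hzp hy.1))
      · by_contra hcon
        push_neg at hcon
        have hpz : p ≤ z := hz.1
        have hcont : ContinuousOn f (Icc p z) :=
          hfab.mono (fun y hy => ⟨le_trans hpab.1 hy.1, le_trans hy.2 (hsubab hz).2⟩)
        have : t ∈ Icc (f p) (f z) := ⟨by rw [hfp]; exact hst, hcon.le⟩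
        obtain ⟨y, hy, hfy⟩ := intermediate_value_Icc hpz hcont this
        have hyB : y ∈ B := ⟨⟨hy.1, le_trans hy.2 (hsubab hz).2⟩, by simpa using hfy⟩
        have hqley : q ≤ y := csInf_le hBbdd hyB
        have hzq : z < q := by
          rcases eq_or_lt_of_le hz.2 with h | h
          · exfalso; rw [h, hfq] at hcon; exact lt_irrefl _ hcon
          · exact h
        exact absurd (le_trans hqley hy.2) (not_le.mpr hzq)
    · have := intermediate_value_Icc hpq (hf.mono hsubuv)
      rw [hfp, hfq] at this
      exact this
  · -- decreasing flavor : f b = t, f a = s, b ≤ a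
    have habuv : Icc b a ⊆ Icc u v := Icc_subset_Icc hb.1 ha.2
    have hfab : ContinuousOn f (Icc b a) := hf.mono habuv
    set A : Set ℝ := Icc b a ∩ f ⁻¹' {t} with hA
    have hAcl : IsClosed A := hfab.preimage_isClosed_of_isClosed isClosed_Icc isClosed_singleton
    have hAne : A.Nonempty := ⟨b, left_mem_Icc.mpr hab, by simpa using hfb⟩
    have hAbdd : BddAbove A := (bddAbove_Icc).mono inter_subset_left
    set p := sSup A with hp
    have hpA : p ∈ A := hAcl.csSup_mem hAne hAbdd
    have hpab : p ∈ Icc b a := hpA.1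
    have hfp : f p = t := hpA.2
    set B : Set ℝ := Icc p a ∩ f ⁻¹' {s} with hB
    have hfpb : ContinuousOn f (Icc p a) := hfab.mono (Icc_subset_Icc hpab.1 le_rfl)
    have hBcl : IsClosed B := hfpb.preimage_isClosed_of_isClosed isClosed_Icc isClosed_singleton
    have hBne : B.Nonempty := ⟨a, right_mem_Icc.mpr hpab.2, by simpa using hfa⟩
    have hBbdd : BddBelow B := (bddBelow_Icc).mono inter_subset_left
    set q := sInf B with hq
    have hqB : q ∈ B := hBcl.csInf_mem hBne hBbdd
    have hqpb : q ∈ Icc p a := hqB.1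
    have hfq : f q = s := hqB.2
    have hpq : p ≤ q := hqpb.1
    have hsubuv : Icc p q ⊆ Icc u v := fun z hz =>
      habuv ⟨le_trans hpab.1 hz.1, le_trans hz.2 hqpb.2⟩
    have hsubab : Icc p q ⊆ Icc b a := fun z hz =>
      ⟨le_trans hpab.1 hz.1, le_trans hz.2 hqpb.2⟩
    refine ⟨p, q, hpq, hsubuv, ?_⟩
    apply Subset.antisymm
    · rintro _ ⟨z, hz, rfl⟩
      constructor
      · by_contra hcon
        push_neg at hcon
        have hpz : p ≤ z := hz.1
        have hcont : ContinuousOn f (Icc p z) :=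
          hfab.mono (fun y hy => ⟨le_trans hpab.1 hy.1, le_trans hy.2 (hsubab hz).2⟩)
        have : s ∈ Icc (f z) (f p) := ⟨hcon.le, by rw [hfp]; exact hst⟩
        obtain ⟨y, hy, hfy⟩ := intermediate_value_Icc' hpz hcont this
        have hyB : y ∈ B := ⟨⟨hy.1, le_trans hy.2 (hsubab hz).2⟩, by simpa using hfy⟩
        have hqley : q ≤ y := csInf_le hBbdd hyB
        have hzq : z < q := by
          rcases eq_or_lt_of_le hz.2 with h | h
          · exfalso; rw [h, hfq] at hcon; exact lt_irrefl _ hcon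
          · exact h
        exact absurd (le_trans hqley hy.2) (not_le.mpr hzq)
      · by_contra hcon
        push_neg at hcon
        have hzq : z ≤ q := hz.2
        have hcont : ContinuousOn f (Icc z q) :=
          hfab.mono (fun y hy => ⟨le_trans (hsubab hz).1 hy.1, le_trans hy.2 hqpb.2⟩)
        have : t ∈ Icc (f q) (f z) := ⟨by rw [hfq]; exact hst, hcon.le⟩
        obtain ⟨y, hy, hfy⟩ := intermediate_value_Icc' hzq hcont this
        have hyA : y ∈ A := ⟨⟨le_trans (hsubab hz).1 hy.1, le_trans hy.2 hqpb.2⟩, by simpa using hfy⟩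
        have hylep : y ≤ p := le_csSup hAbdd hyA
        have hzp : p < z := by
          rcases eq_or_lt_of_le hz.1 with h | h
          · exfalso; rw [← h, hfp] at hcon; exact lt_irrefl _ hcon
          · exact h
        exact absurd hylep (not_le.mpr (lt_of_lt_of_le hzp hy.1))
    · have := intermediate_value_Icc' hpq (hf.mono hsubuv)
      rw [hfp, hfq] at this
      exact this

/-- Nondegenerate version of the exact pullback. -/
lemma exists_preimage_Icc' {f : ℝ → ℝ} {u v s t : ℝ} (huv : u ≤ v)
    (hf : ContinuousOn f (Icc u v)) (hst : s < t) (hsub : Icc s t ⊆ f '' Icc u v) :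
    ∃ p q, p < q ∧ Icc p q ⊆ Icc u v ∧ f '' Icc p q = Icc s t := by
  obtain ⟨p, q, hpq, hs1, hs2⟩ := exists_preimage_Icc huv hf hst.le hsub
  rcases eq_or_lt_of_le hpq with h | h
  · exfalso
    have h1 : s ∈ f '' Icc p q := hs2.symm ▸ left_mem_Icc.mpr hst.le
    have h2 : t ∈ f '' Icc p q := hs2.symm ▸ right_mem_Icc.mpr hst.le
    rw [← h, Icc_self] at h1 h2
    simp only [image_singleton, mem_singleton_iff] at h1 h2
    exact absurd (h1 ▸ h2) hst.ne'
  · exact ⟨p, q, h, hs1, hs2⟩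

/-- Image of a nondegenerate interval within `[0,1]` is an interval within `[0,1]`. -/
lemma image_Icc_exists {f : ℝ → ℝ} (hf : ContinuousOn f (Icc 0 1))
    (hsurj : f '' Icc 0 1 = Icc 0 1) {u v : ℝ} (huv : u ≤ v) (h01 : Icc u v ⊆ Icc 0 1) :
    ∃ s t, s ≤ t ∧ f '' Icc u v = Icc s t ∧ Icc s t ⊆ Icc 0 1 := by
  have hc : ContinuousOn f (Icc u v) := hf.mono h01
  have himg := ContinuousOn.image_Icc huv hc
  refine ⟨_, _, ?_, himg, ?_⟩
  · have hne : (f '' Icc u v).Nonempty := (nonempty_Icc.mpr huv).image f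
    rw [himg] at hne
    exact nonempty_Icc.mp hne
  · rw [← himg]
    intro z hz
    rw [← hsurj]
    exact image_mono h01 hz

/-- A dependent recursion principle used to build the tight sequence. -/
noncomputable def chainRec {α : Type} (Q : ℕ → α → Prop) (R : α → α → Prop) (a0 : α)
    (h0 : Q 0 a0) (st : ∀ j a, Q j a → ∃ b, Q (j+1) b ∧ R a b) : ∀ j : ℕ, {a : α // Q j a} :=
  fun j => Nat.rec ⟨a0, h0⟩
    (fun j p => ⟨(st j p.1 p.2).choose, (st j p.1 p.2).choose_spec.1⟩) j

lemma chainRec_rel {α : Type} (Q : ℕ → α → Prop) (R : α → α → Prop) (a0 : α)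
    (h0 : Q 0 a0) (st : ∀ j a, Q j a → ∃ b, Q (j+1) b ∧ R a b) (j : ℕ) :
    R (chainRec Q R a0 h0 st j).1 (chainRec Q R a0 h0 st (j+1)).1 :=
  (st j (chainRec Q R a0 h0 st j).1 (chainRec Q R a0 h0 st j).2).choose_spec.2

lemma chainRec_zero {α : Type} (Q : ℕ → α → Prop) (R : α → α → Prop) (a0 : α)
    (h0 : Q 0 a0) (st : ∀ j a, Q j a → ∃ b, Q (j+1) b ∧ R a b) :
    (chainRec Q R a0 h0 st 0).1 = a0 := rfl

lemma Icc_eq_unit_endpoints {a1 a2 : ℝ} (ha : a1 ≤ a2) (h : Icc a1 a2 = Icc (0:ℝ) 1) :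
    a1 = 0 ∧ a2 = 1 := by
  have h0 : (0:ℝ) ∈ Icc a1 a2 := h ▸ left_mem_Icc.mpr zero_le_one
  have h1 : (1:ℝ) ∈ Icc a1 a2 := h ▸ right_mem_Icc.mpr zero_le_one
  have ha1 : a1 ∈ Icc (0:ℝ) 1 := h ▸ left_mem_Icc.mpr ha
  have ha2 : a2 ∈ Icc (0:ℝ) 1 := h ▸ right_mem_Icc.mpr ha
  exact ⟨le_antisymm (h0.1) (ha1.1), le_antisymm (ha2.2) (h1.2)⟩

lemma good_to_splitting (f : ℝ → ℝ) (hf : ContinuousOn f (Icc 0 1))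
    (hsurj : f '' Icc 0 1 = Icc 0 1)
    (a1 a2 b1 b2 k1 k2 : ℝ) (ha : a1 < a2) (hb : b1 < b2) (hk : k1 < k2)
    (hA01 : Icc a1 a2 ⊆ Icc 0 1) (hB01 : Icc b1 b2 ⊆ Icc 0 1)
    (hside : a2 ≤ b1 ∨ b2 ≤ a1)
    (hKA : Icc k1 k2 ⊆ f '' Icc a1 a2) (hKB : Icc k1 k2 ⊆ f '' Icc b1 b2)
    (n : ℕ) (hn : 1 ≤ n) (C : ℕ → ℝ × ℝ)
    (hC0 : C 0 = (k1, k2)) (hCn : C n = (a1, a2))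
    (hCle : ∀ i ≤ n, (C i).1 ≤ (C i).2) (hC01 : ∀ i ≤ n, Icc (C i).1 (C i).2 ⊆ Icc 0 1)
    (hCcov : ∀ i < n, Icc (C (i+1)).1 (C (i+1)).2 ⊆ f '' Icc (C i).1 (C i).2) :
    SplittingSeq f := by
  classical
  -- properness of A
  have hb2le1 : b2 ≤ 1 := (hB01 (right_mem_Icc.mpr hb.le)).2
  have hb1ge0 : 0 ≤ b1 := (hB01 (left_mem_Icc.mpr hb.le)).1
  have hAne : Icc a1 a2 ≠ Icc (0:ℝ) 1 := by
    intro h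
    obtain ⟨h1, h2⟩ := Icc_eq_unit_endpoints ha.le h
    rcases hside with hs | hs
    · rw [h2] at hs; linarith
    · rw [h1] at hs; linarith
  -- positions
  set pos : ℕ → ℝ × ℝ := fun j => C (n - j % (n+1)) with hpos
  have hmodle : ∀ j : ℕ, j % (n+1) ≤ n := fun j =>
    Nat.lt_succ_iff.mp (Nat.mod_lt _ (Nat.succ_pos n))
  have hposle : ∀ j, (pos j).1 ≤ (pos j).2 := fun j => hCle _ (Nat.sub_le n _)
  have hpos01 : ∀ j, Icc (pos j).1 (pos j).2 ⊆ Icc 0 1 := fun j => hC01 _ (Nat.sub_le n _)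
  have hmod_succ : ∀ j : ℕ, (j % (n+1) = n ∧ (j+1) % (n+1) = 0) ∨
      (j % (n+1) < n ∧ (j+1) % (n+1) = j % (n+1) + 1) := by
    intro j
    have h1 : (j+1) % (n+1) = (j % (n+1) + 1) % (n+1) := by
      conv_lhs => rw [Nat.add_mod]
      rw [Nat.mod_eq_of_lt (by omega : 1 < n + 1)]
    rcases eq_or_lt_of_le (hmodle j) with h | h
    · left
      exact ⟨h, by rw [h1, h, Nat.mod_self]⟩
    · right
      exact ⟨h, by rw [h1, Nat.mod_eq_of_lt (by omega)]⟩
  -- invariant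
  set Inv : ℕ → ℝ × ℝ → Prop := fun j ab =>
    ab.1 < ab.2 ∧ Icc ab.1 ab.2 ⊆ Icc (pos j).1 (pos j).2 ∧ Icc ab.1 ab.2 ≠ Icc (0:ℝ) 1
    with hInvdef
  set R : ℝ × ℝ → ℝ × ℝ → Prop := fun prev next =>
    f '' Icc next.1 next.2 = Icc prev.1 prev.2 with hRdef
  have hbase : Inv 0 (a1, a2) := by
    refine ⟨ha, ?_, hAne⟩
    have : pos 0 = (a1, a2) := by
      simp only [hpos, Nat.zero_mod, Nat.sub_zero, hCn]
    rw [this]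
  have hstep : ∀ j ab, Inv j ab → ∃ ab', Inv (j+1) ab' ∧ R ab ab' := by
    intro j ab hab
    obtain ⟨hlt, hsub, hne⟩ := hab
    have hcov : Icc ab.1 ab.2 ⊆ f '' Icc (pos (j+1)).1 (pos (j+1)).2 := by
      rcases hmod_succ j with ⟨hj, hj1⟩ | ⟨hj, hj1⟩
      · have e1 : pos j = (k1, k2) := by
          simp only [hpos, hj, Nat.sub_self, hC0]
        have e2 : pos (j+1) = (a1, a2) := by
          simp only [hpos, hj1, Nat.sub_zero, hCn]
        rw [e2]
        rw [e1] at hsub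
        exact hsub.trans hKA
      · set i := j % (n+1) with hi
        have e2 : pos (j+1) = C (n - (i+1)) := by
          simp only [hpos, hj1]
        have hidxlt : n - (i+1) < n := by omega
        have hidx1 : n - (i+1) + 1 = n - i := by omega
        have := hCcov (n - (i+1)) hidxlt
        rw [hidx1] at this
        have e1 : pos j = C (n - i) := rfl
        rw [e1] at hsub
        rw [e2]
        exact hsub.trans this
    obtain ⟨p, q, hpq, hsubpos, himg⟩ :=
      exists_preimage_Icc' (hposle (j+1)) (hf.mono (hpos01 (j+1))) hlt hcov
    refine ⟨(p, q), ⟨hpq, hsubpos, ?_⟩, himg⟩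
    intro hPQ
    apply hne
    rw [← himg, hPQ, hsurj]
  -- the tight sequence
    -- (end of hstep)
  set T := chainRec Inv R (a1, a2) hbase hstep with hT
  set l : ℕ → ℝ := fun j => ((T j).1).1 with hl
  set r : ℕ → ℝ := fun j => ((T j).1).2 with hr
  have hinv : ∀ j, Inv j (T j).1 := fun j => (T j).2
  have hrel : ∀ j, f '' Icc (l (j+1)) (r (j+1)) = Icc (l j) (r j) := fun j =>
    chainRec_rel Inv R (a1, a2) hbase hstep j
  have hT0 : (T 0).1 = (a1, a2) := rfl
  -- the splitting set
  set N : Set ℕ := {j | 0 < j ∧ j % (n+1) = 0} with hN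
  have hNinf : N.Infinite := by
    apply Set.infinite_of_injective_forall_mem
      (f := fun s : ℕ => (n+1) * (s+1))
    · intro s t hst
      simpa using Nat.eq_of_mul_eq_mul_left (Nat.succ_pos n) hst
    · intro s
      refine ⟨by positivity, by simp [Nat.mul_mod_right]⟩
  have hSex : ∀ j, ∃ Sset : Set ℝ,
      j ∈ N → ((∃ u v : ℝ, u < v ∧ Sset = Icc u v) ∧ Sset ⊆ Icc 0 1 ∧
        Sset ∩ Icc (l j) (r j) ⊆ {l j, r j} ∧ f '' Sset = f '' Icc (l j) (r j)) := by
    intro j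
    by_cases hj : j ∈ N
    swap
    · exact ⟨∅, fun h => absurd h hj⟩
    obtain ⟨hjpos, hjmod⟩ := hj
    obtain ⟨j', rfl⟩ : ∃ j', j = j' + 1 := ⟨j - 1, (Nat.succ_pred_eq_of_pos hjpos).symm⟩
    have hj'mod : j' % (n+1) = n := by
      rcases hmod_succ j' with ⟨h1, _⟩ | ⟨_, h2⟩
      · exact h1
      · omega
    have hposj' : pos j' = (k1, k2) := by
      simp only [hpos, hj'mod, Nat.sub_self, hC0]
    have hTj'sub : Icc (l j') (r j') ⊆ Icc k1 k2 := by
      have := (hinv j').2.1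
      rw [hposj'] at this
      exact this
    have hcovB : Icc (l j') (r j') ⊆ f '' Icc b1 b2 := hTj'sub.trans hKB
    obtain ⟨u, v, huv, hsubB, himgB⟩ :=
      exists_preimage_Icc' hb.le (hf.mono hB01) (hinv j').1 hcovB
    have hposj : pos (j'+1) = (a1, a2) := by
      simp only [hpos, hjmod, Nat.sub_zero, hCn]
    have hTjA : Icc (l (j'+1)) (r (j'+1)) ⊆ Icc a1 a2 := by
      have := (hinv (j'+1)).2.1
      rw [hposj] at this
      exact this
    refine ⟨Icc u v, fun _ => ⟨⟨u, v, huv, rfl⟩, hsubB.trans hB01, ?_, ?_⟩⟩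
    · intro w hw
      obtain ⟨hwS, hwT⟩ := hw
      have hwa : w ∈ Icc a1 a2 := hTjA hwT
      have hwb : w ∈ Icc b1 b2 := hsubB hwS
      have hlr := (hinv (j'+1)).1
      rcases hside with hs | hs
      · -- A left of B : w = r (j'+1)
        have hrle : r (j'+1) ≤ a2 := (hTjA (right_mem_Icc.mpr hlr.le)).2
        have : w = r (j'+1) := le_antisymm hwT.2 (by linarith [hwb.1, hwT.2])
        right; exact this
      · -- B left of A : w = l (j'+1)
        have hlge : a1 ≤ l (j'+1) := (hTjA (left_mem_Icc.mpr hlr.le)).1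
        have : w = l (j'+1) := le_antisymm (by linarith [hwb.2, hwT.1]) hwT.1
        left; exact this
    · rw [himgB, hrel j']
  choose S hS using hSex
  refine ⟨l, r, N, S, fun j => (hinv j).1.le, ?_, fun j => (hinv j).2.2, hrel,
    ⟨0, fun j _ => (hinv j).1⟩, hNinf, hS⟩
  intro j
  exact ((hinv j).2.1).trans (hpos01 j)

/-- Core lemma: an interior orbit point whose two orbit-neighbour values fold over a
nondegenerate interval `[k1,k2]` with orbit endpoints yields a splitting sequence. -/
lemma core_splitting (f : ℝ → ℝ) (hf : ContinuousOn f (Icc 0 1))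
    (hsurj : f '' Icc 0 1 = Icc 0 1) (P : Finset ℝ)
    (hP01 : ∀ y ∈ P, y ∈ Icc (0:ℝ) 1)
    (hmaps : ∀ y ∈ P, f y ∈ P)
    (hfinj : ∀ y ∈ P, ∀ z ∈ P, f y = f z → y = z)
    (htrans : ∀ y ∈ P, ∀ z ∈ P, ∃ t : ℕ, 1 ≤ t ∧ f^[t] y = z)
    (c c₁ c₂ k1 k2 : ℝ) (hcP : c ∈ P) (hc₁P : c₁ ∈ P) (hc₂P : c₂ ∈ P)
    (hk1P : k1 ∈ P) (hk2P : k2 ∈ P)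
    (hc₁ : c₁ < c) (hc₂ : c < c₂)
    (hmaxbelow : ∀ y ∈ P, y < c → y ≤ c₁) (hminabove : ∀ y ∈ P, c < y → c₂ ≤ y)
    (hk : k1 < k2) (hKA : Icc k1 k2 ⊆ f '' Icc c₁ c) (hKB : Icc k1 k2 ⊆ f '' Icc c c₂) :
    SplittingSeq f := by
  classical
  have hmapsTo : ∀ z ∈ Icc (0:ℝ) 1, f z ∈ Icc (0:ℝ) 1 := by
    intro z hz
    rw [← hsurj]
    exact mem_image_of_mem f hz
  have hK01 : Icc k1 k2 ⊆ Icc (0:ℝ) 1 :=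
    Icc_subset_Icc (hP01 k1 hk1P).1 (hP01 k2 hk2P).2
  have hA01 : Icc c₁ c ⊆ Icc (0:ℝ) 1 := Icc_subset_Icc (hP01 c₁ hc₁P).1 (hP01 c hcP).2
  have hB01 : Icc c c₂ ⊆ Icc (0:ℝ) 1 := Icc_subset_Icc (hP01 c hcP).1 (hP01 c₂ hc₂P).2
  -- iterated images of K
  set Wa : ℕ → Set ℝ := fun j => f^[j] '' Icc k1 k2 with hWa
  have hWstep : ∀ j, Wa (j+1) = f '' Wa j := by
    intro j
    simp only [hWa]
    rw [Function.iterate_succ', Set.image_comp]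
  have hWa0 : Wa 0 = Icc k1 k2 := by simp [hWa]
  have hWint : ∀ j, ∃ w : ℝ × ℝ, w.1 ≤ w.2 ∧ Wa j = Icc w.1 w.2 ∧ Icc w.1 w.2 ⊆ Icc 0 1 := by
    intro j
    induction j with
    | zero => exact ⟨(k1, k2), hk.le, hWa0, hK01⟩
    | succ j ih =>
      obtain ⟨w, hw1, hw2, hw3⟩ := ih
      obtain ⟨s, t, hst, himg, hsub⟩ := image_Icc_exists hf hsurj hw1 hw3
      refine ⟨(s, t), hst, ?_, hsub⟩
      rw [hWstep j, hw2]
      exact himg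
  choose w hw1 hw2 hw3 using hWint
  have hWmem : ∀ y ∈ P, ∀ j, y ∈ Wa j → ∀ s : ℕ, f^[s] y ∈ Wa (j + s) := by
    intro y hy j hyj s
    induction s with
    | zero => simpa using hyj
    | succ s ih =>
      rw [Function.iterate_succ_apply', ← Nat.add_assoc, hWstep (j+s)]
      exact mem_image_of_mem f ih
  -- counting
  set cnt : ℕ → ℕ := fun j => (P.filter (fun y => y ∈ Wa j)).card with hcnt
  have hcnt_step : ∀ j, cnt j ≤ cnt (j+1) := by
    intro j
    apply Finset.card_le_card_of_injOn f
    · intro y hy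
      simp only [Finset.coe_filter, Set.mem_setOf_eq] at hy ⊢
      refine ⟨hmaps y hy.1, ?_⟩
      rw [hWstep j]
      exact mem_image_of_mem f hy.2
    · intro y hy z hz hyz
      simp only [Finset.coe_filter, Set.mem_setOf_eq] at hy hz
      exact hfinj y hy.1 z hz.1 hyz
  have hcnt_mono : Monotone cnt := monotone_nat_of_le_succ hcnt_step
  have hcnt_bdd : ∀ j, cnt j ≤ P.card := fun j => Finset.card_filter_le _ _
  set V := sSup (Set.range cnt) with hV
  have hVmem : V ∈ Set.range cnt :=
    Nat.sSup_mem ⟨cnt 0, Set.mem_range_self 0⟩ ⟨P.card, by rintro _ ⟨j, rfl⟩; exact hcnt_bdd j⟩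
  obtain ⟨J, hJ⟩ := hVmem
  have hcnt_le_V : ∀ j, cnt j ≤ V := fun j =>
    le_csSup ⟨P.card, by rintro _ ⟨i, rfl⟩; exact hcnt_bdd i⟩ (Set.mem_range_self j)
  have hcnt0 : 2 ≤ cnt 0 := by
    rw [hcnt]
    have h1 : k1 ∈ P.filter (fun y => y ∈ Wa 0) := by
      rw [Finset.mem_filter, hWa0]
      exact ⟨hk1P, left_mem_Icc.mpr hk.le⟩
    have h2 : k2 ∈ P.filter (fun y => y ∈ Wa 0) := by
      rw [Finset.mem_filter, hWa0]
      exact ⟨hk2P, right_mem_Icc.mpr hk.le⟩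
    exact Finset.one_lt_card.mpr ⟨k1, h1, k2, h2, hk.ne⟩
  -- find y₀ in the stabilized filter and bring c into some W
  have hJpos : 0 < cnt J := by
    have := hcnt_le_V 0
    omega
  obtain ⟨y₀, hy₀⟩ := Finset.card_pos.mp hJpos
  rw [Finset.mem_filter] at hy₀
  obtain ⟨t, ht1, ht2⟩ := htrans y₀ hy₀.1 c hcP
  set n := J + t with hn
  have hn1 : 1 ≤ n := by omega
  have hcWn : c ∈ Wa n := ht2 ▸ hWmem y₀ hy₀.1 J hy₀.2 t
  have hcntn : cnt n = V := le_antisymm (hcnt_le_V n) (hJ ▸ hcnt_mono (by omega : J ≤ n))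
  have hcfil : c ∈ P.filter (fun y => y ∈ Wa n) := Finset.mem_filter.mpr ⟨hcP, hcWn⟩
  have h1lt : 1 < (P.filter (fun y => y ∈ Wa n)).card := by
    change 1 < cnt n
    have h0V := hcnt_le_V 0
    omega
  obtain ⟨y', hy'mem, hy'ne⟩ := Finset.exists_mem_ne h1lt c
  rw [Finset.mem_filter] at hy'mem
  obtain ⟨hy'P, hy'W⟩ := hy'mem
  -- The interval [c₁,c] or [c,c₂] is inside Wa n
  have hWnIcc : Wa n = Icc (w n).1 (w n).2 := hw2 n
  have hcmem : c ∈ Icc (w n).1 (w n).2 := hWnIcc ▸ hcWn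
  have hy'memI : y' ∈ Icc (w n).1 (w n).2 := hWnIcc ▸ hy'W
  -- choose A и B
  rcases lt_or_gt_of_ne hy'ne with hlt | hgt
  · -- y' < c : A = [c₁, c]
    have hy'c₁ : y' ≤ c₁ := hmaxbelow y' hy'P hlt
    have hAsub : Icc c₁ c ⊆ Wa n := by
      rw [hWnIcc]
      exact Icc_subset_Icc (le_trans hy'memI.1 hy'c₁) hcmem.2
    -- chain
    set C : ℕ → ℝ × ℝ := fun i => if i = 0 then (k1, k2) else if i = n then (c₁, c) else w i
      with hC
    have hCset : ∀ i < n, Icc (C i).1 (C i).2 = Wa i := by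
      intro i hi
      by_cases h0 : i = 0
      · subst h0
        simp only [hC, if_pos rfl]
        exact hWa0.symm
      · simp only [hC, if_neg h0, if_neg (Nat.ne_of_lt hi)]
        exact (hw2 i).symm
    refine good_to_splitting f hf hsurj c₁ c c c₂ k1 k2 hc₁ hc₂ hk hA01 hB01
      (Or.inl le_rfl) hKA hKB n hn1 C ?_ ?_ ?_ ?_ ?_
    · simp [hC]
    · simp only [hC, if_neg (by omega : n ≠ 0), if_pos rfl]
      simp
    · intro i hi
      by_cases h0 : i = 0
      · subst h0; simp [hC, hk.le]
      · by_cases hni : i = n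
        · subst hni; simp only [hC, if_neg h0, if_pos rfl]; exact hc₁.le
        · simp only [hC, if_neg h0, if_neg hni]; exact hw1 i
    · intro i hi
      by_cases h0 : i = 0
      · subst h0; simp only [hC, if_pos rfl]; exact hK01
      · by_cases hni : i = n
        · subst hni; simp only [hC, if_neg h0, if_pos rfl]; exact hA01
        · simp only [hC, if_neg h0, if_neg hni]; exact hw3 i
    · intro i hi
      have hrw : f '' Icc (C i).1 (C i).2 = Wa (i+1) := by
        rw [hCset i hi, ← hWstep i]
      rw [hrw]
      by_cases hni : i + 1 = n
      · have : C (i+1) = (c₁, c) := by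
          simp only [hC, if_neg (by omega : i + 1 ≠ 0), if_pos hni]
        rw [this, hni]
        exact hAsub
      · rw [hCset (i+1) (by omega)]
  · -- c < y' : A = [c, c₂]
    have hy'c₂ : c₂ ≤ y' := hminabove y' hy'P hgt
    have hAsub : Icc c c₂ ⊆ Wa n := by
      rw [hWnIcc]
      exact Icc_subset_Icc hcmem.1 (le_trans hy'c₂ hy'memI.2)
    set C : ℕ → ℝ × ℝ := fun i => if i = 0 then (k1, k2) else if i = n then (c, c₂) else w i
      with hC
    have hCset : ∀ i < n, Icc (C i).1 (C i).2 = Wa i := by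
      intro i hi
      by_cases h0 : i = 0
      · subst h0
        simp only [hC, if_pos rfl]
        exact hWa0.symm
      · simp only [hC, if_neg h0, if_neg (Nat.ne_of_lt hi)]
        exact (hw2 i).symm
    refine good_to_splitting f hf hsurj c c₂ c₁ c k1 k2 hc₂ hc₁ hk hB01 hA01
      (Or.inr le_rfl) hKB hKA n hn1 C ?_ ?_ ?_ ?_ ?_
    · simp [hC]
    · simp only [hC, if_neg (by omega : n ≠ 0), if_pos rfl]
      simp
    · intro i hi
      by_cases h0 : i = 0
      · subst h0; simp [hC, hk.le]
      · by_cases hni : i = n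
        · subst hni; simp only [hC, if_neg h0, if_pos rfl]; exact hc₂.le
        · simp only [hC, if_neg h0, if_neg hni]; exact hw1 i
    · intro i hi
      by_cases h0 : i = 0
      · subst h0; simp only [hC, if_pos rfl]; exact hK01
      · by_cases hni : i = n
        · subst hni; simp only [hC, if_neg h0, if_pos rfl]; exact hB01
        · simp only [hC, if_neg h0, if_neg hni]; exact hw3 i
    · intro i hi
      have hrw : f '' Icc (C i).1 (C i).2 = Wa (i+1) := by
        rw [hCset i hi, ← hWstep i]
      rw [hrw]
      by_cases hni : i + 1 = n
      · have : C (i+1) = (c, c₂) := by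
          simp only [hC, if_neg (by omega : i + 1 ≠ 0), if_pos hni]
        rw [this, hni]
        exact hAsub
      · rw [hCset (i+1) (by omega)]

theorem stmt_1 (f : ℝ → ℝ) (hf : ContinuousOn f (Icc 0 1))
    (hsurj : f '' Icc 0 1 = Icc 0 1)
    (x : ℝ) (hx : x ∈ Icc (0:ℝ) 1) (m : ℕ) (hm : 2 < m)
    (hper : f^[m] x = x) (hminper : ∀ j, 0 < j → j < m → f^[j] x ≠ x) :
    SplittingSeq f := by
  classical
  have hmpos : 0 < m := by omega
  have hmapsTo : ∀ z ∈ Icc (0:ℝ) 1, f z ∈ Icc (0:ℝ) 1 := by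
    intro z hz
    rw [← hsurj]
    exact mem_image_of_mem f hz
  set pf : ℕ → ℝ := fun i => f^[i] x with hpf
  have hpf01 : ∀ i, pf i ∈ Icc (0:ℝ) 1 := by
    intro i
    induction i with
    | zero => simpa [hpf] using hx
    | succ i ih =>
      have : pf (i+1) = f (pf i) := Function.iterate_succ_apply' f i x
      rw [this]
      exact hmapsTo _ ih
  have hpfm : pf m = x := hper
  have hperiodic : ∀ i, pf (i + m) = pf i := by
    intro i
    show f^[i + m] x = f^[i] x
    rw [Function.iterate_add_apply, hper]
  have hmod : ∀ i, pf (i % m) = pf i := by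
    intro i
    induction i using Nat.strong_induction_on with
    | _ i ih =>
      by_cases h : i < m
      · rw [Nat.mod_eq_of_lt h]
      · push_neg at h
        have h1 : i % m = (i - m) % m := by
          conv_lhs => rw [← Nat.sub_add_cancel h]
          rw [Nat.add_mod_right]
        have h2 : pf (i - m + m) = pf (i - m) := hperiodic (i - m)
        rw [Nat.sub_add_cancel h] at h2
        rw [h1, ih (i - m) (by omega), ← h2]
  have hinj : ∀ i < m, ∀ j < m, pf i = pf j → i = j := by
    have key : ∀ i j, i ≤ j → j < m → pf i = pf j → i = j := by
      intro i j hij hjm heq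
      by_contra hne
      have hlt : i < j := lt_of_le_of_ne hij hne
      have : f^[m - j] (pf i) = f^[m - j] (pf j) := by rw [heq]
      have h1 : f^[m - j] (pf i) = pf (m - j + i) := by
        show f^[m-j] (f^[i] x) = f^[m - j + i] x
        rw [Function.iterate_add_apply]
      have h2 : f^[m - j] (pf j) = pf (m - j + j) := by
        show f^[m-j] (f^[j] x) = f^[m - j + j] x
        rw [Function.iterate_add_apply]
      have h3 : m - j + j = m := by omega
      rw [h1, h2, h3, hpfm] at this
      exact hminper (m - j + i) (by omega) (by omega) this
    intro i hi j hj heq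
    rcases le_total i j with h | h
    · exact key i j h hj heq
    · exact (key j i h hi heq.symm).symm
  set P : Finset ℝ := (Finset.range m).image pf with hP
  have hPmem : ∀ y, y ∈ P ↔ ∃ i, i < m ∧ pf i = y := by
    intro y
    simp [hP, Finset.mem_image, Finset.mem_range]
  have hP01 : ∀ y ∈ P, y ∈ Icc (0:ℝ) 1 := by
    intro y hy
    obtain ⟨i, _, rfl⟩ := (hPmem y).mp hy
    exact hpf01 i
  have hmaps : ∀ y ∈ P, f y ∈ P := by
    intro y hy
    obtain ⟨i, hi, rfl⟩ := (hPmem y).mp hy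
    have : f (pf i) = pf (i + 1) := (Function.iterate_succ_apply' f i x).symm
    rw [this, ← hmod (i+1)]
    exact (hPmem _).mpr ⟨(i+1) % m, Nat.mod_lt _ hmpos, rfl⟩
  have hfiter : ∀ i, f (pf i) = pf (i + 1) := fun i =>
    (Function.iterate_succ_apply' f i x).symm
  have hfinj : ∀ y ∈ P, ∀ z ∈ P, f y = f z → y = z := by
    intro y hy z hz heq
    obtain ⟨i, hi, rfl⟩ := (hPmem y).mp hy
    obtain ⟨j, hj, rfl⟩ := (hPmem z).mp hz
    rw [hfiter i, hfiter j, ← hmod (i+1), ← hmod (j+1)] at heq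
    have := hinj _ (Nat.mod_lt _ hmpos) _ (Nat.mod_lt _ hmpos) heq
    -- (i+1) % m = (j+1) % m with i,j < m implies i = j
    have hij : i = j := by
      rcases Nat.lt_or_ge (i+1) m with h1 | h1 <;> rcases Nat.lt_or_ge (j+1) m with h2 | h2
      · rw [Nat.mod_eq_of_lt h1, Nat.mod_eq_of_lt h2] at this; omega
      · have hj1 : j + 1 = m := by omega
        rw [Nat.mod_eq_of_lt h1, hj1, Nat.mod_self] at this; omega
      · have hi1 : i + 1 = m := by omega
        rw [hi1, Nat.mod_self, Nat.mod_eq_of_lt h2] at this; omega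
      · omega
    rw [hij]
  have hnofix : ∀ y ∈ P, f y ≠ y := by
    intro y hy heq
    obtain ⟨i, hi, rfl⟩ := (hPmem y).mp hy
    have hxy : x = pf i := by
      have h1 : f^[m - i] (pf i) = pf (m - i + i) := by
        show f^[m-i] (f^[i] x) = f^[m - i + i] x
        rw [Function.iterate_add_apply]
      have h2 : m - i + i = m := by omega
      rw [h2, hpfm] at h1
      rw [← h1, Function.iterate_fixed heq]
    have : f x = x := by rw [hxy]; exact heq
    exact hminper 1 one_pos (by omega) (by simpa using this)
  have hno2 : ∀ y ∈ P, f (f y) ≠ y := by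
    intro y hy heq
    obtain ⟨i, hi, rfl⟩ := (hPmem y).mp hy
    -- f² fixes pf i;  x = f^[m-i] (pf i)
    have h2fix : f^[2] (pf i) = pf i := by
      rw [Function.iterate_succ_apply', Function.iterate_one]
      exact heq
    have hiter2 : ∀ k : ℕ, f^[2 * k] (pf i) = pf i := by
      intro k
      rw [Function.iterate_mul]
      exact Function.iterate_fixed h2fix k
    have hxeq : x = f^[m - i] (pf i) := by
      have h1 : f^[m - i] (pf i) = pf (m - i + i) := by
        show f^[m-i] (f^[i] x) = f^[m - i + i] x
        rw [Function.iterate_add_apply]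
      have h2 : m - i + i = m := by omega
      rw [h1, h2, hpfm]
    rcases Nat.even_or_odd (m - i) with ⟨k, hk⟩ | ⟨k, hk⟩
    · have : x = pf i := by rw [hxeq, hk, ← two_mul, hiter2 k]
      have hfix2 : f (f x) = x := by rw [this]; exact heq
      exact hminper 2 two_pos hm (by simpa [Function.iterate_succ_apply'] using hfix2)
    · have hx1 : x = f (pf i) := by
        rw [hxeq, hk, Nat.add_comm, Function.iterate_add_apply, Function.iterate_one,
          hiter2 k]
      have hfix2 : f (f x) = x := by
        rw [hx1]
        have : f (f (f (pf i))) = f (pf i) := congrArg f heq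
        exact this
      exact hminper 2 two_pos hm (by simpa [Function.iterate_succ_apply'] using hfix2)
  have htrans : ∀ y ∈ P, ∀ z ∈ P, ∃ t : ℕ, 1 ≤ t ∧ f^[t] y = z := by
    intro y hy z hz
    obtain ⟨i, hi, rfl⟩ := (hPmem y).mp hy
    obtain ⟨j, hj, rfl⟩ := (hPmem z).mp hz
    refine ⟨m + j - i, by omega, ?_⟩
    have h1 : f^[m + j - i] (pf i) = pf (m + j - i + i) := by
      show f^[m+j-i] (f^[i] x) = f^[m + j - i + i] x
      rw [Function.iterate_add_apply]
    have h2 : m + j - i + i = j + m := by omega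
    rw [h1, h2, hperiodic j]
  have hPne : P.Nonempty := ⟨x, (hPmem x).mpr ⟨0, hmpos, rfl⟩⟩
  set htop := P.max' hPne with hhtop
  set hbot := P.min' hPne with hhbot
  have hpre : ∀ z ∈ P, ∃ y ∈ P, f y = z := by
    intro z hz
    obtain ⟨j, hj, rfl⟩ := (hPmem z).mp hz
    by_cases h0 : j = 0
    · subst h0
      refine ⟨pf (m-1), (hPmem _).mpr ⟨m-1, by omega, rfl⟩, ?_⟩
      rw [hfiter (m-1)]
      have : m - 1 + 1 = m := by omega
      rw [this, hpfm]
      rfl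
    · refine ⟨pf (j-1), (hPmem _).mpr ⟨j-1, by omega, rfl⟩, ?_⟩
      rw [hfiter (j-1)]
      congr 1
      omega
  obtain ⟨ch, hchP, hch⟩ := hpre htop (P.max'_mem hPne)
  obtain ⟨cd, hcdP, hcd⟩ := hpre hbot (P.min'_mem hPne)
  have hchne : ch ≠ htop := fun h => hnofix ch hchP (by rw [hch, h])
  have hcdne : cd ≠ hbot := fun h => hnofix cd hcdP (by rw [hcd, h])
  -- main case split
  have main : ∀ c : ℝ, c ∈ P → hbot < c → c < htop →
      ((∀ y ∈ P, f y ≤ f c) ∨ (∀ y ∈ P, f c ≤ f y)) → SplittingSeq f := by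
    intro c hcP hc1 hc2 hext
    set c₁ := (P.filter (fun y => y < c)).max' ⟨hbot, by
      simp only [Finset.mem_filter]
      exact ⟨P.min'_mem hPne, hc1⟩⟩ with hc₁def
    set c₂ := (P.filter (fun y => c < y)).min' ⟨htop, by
      simp only [Finset.mem_filter]
      exact ⟨P.max'_mem hPne, hc2⟩⟩ with hc₂def
    have hc₁mem : c₁ ∈ P ∧ c₁ < c := by
      have := (P.filter (fun y => y < c)).max'_mem ⟨hbot, by
        simp only [Finset.mem_filter]; exact ⟨P.min'_mem hPne, hc1⟩⟩
      rw [Finset.mem_filter] at this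
      exact this
    have hc₂mem : c₂ ∈ P ∧ c < c₂ := by
      have := (P.filter (fun y => c < y)).min'_mem ⟨htop, by
        simp only [Finset.mem_filter]; exact ⟨P.max'_mem hPne, hc2⟩⟩
      rw [Finset.mem_filter] at this
      exact this
    have hmaxbelow : ∀ y ∈ P, y < c → y ≤ c₁ := by
      intro y hy hyc
      apply Finset.le_max'
      simp only [Finset.mem_filter]
      exact ⟨hy, hyc⟩
    have hminabove : ∀ y ∈ P, c < y → c₂ ≤ y := by
      intro y hy hyc
      apply Finset.min'_le
      simp only [Finset.mem_filter]
      exact ⟨hy, hyc⟩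
    have hfc₁ne : f c₁ ≠ f c := fun h =>
      absurd (hfinj c₁ hc₁mem.1 c hcP h) (ne_of_lt hc₁mem.2)
    have hfc₂ne : f c₂ ≠ f c := fun h =>
      absurd (hfinj c₂ hc₂mem.1 c hcP h) (ne_of_gt hc₂mem.2)
    have hcont1 : ContinuousOn f (Icc c₁ c) :=
      hf.mono (Icc_subset_Icc (hP01 c₁ hc₁mem.1).1 (hP01 c hcP).2)
    have hcont2 : ContinuousOn f (Icc c c₂) :=
      hf.mono (Icc_subset_Icc (hP01 c hcP).1 (hP01 c₂ hc₂mem.1).2)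
    rcases hext with hup | hdown
    · -- fold up : k2 = f c, k1 = max (f c₁) (f c₂)
      set k1 := max (f c₁) (f c₂) with hk1def
      have hk1P : k1 ∈ P := by
        rcases max_choice (f c₁) (f c₂) with h | h
        · rw [hk1def, h]; exact hmaps c₁ hc₁mem.1
        · rw [hk1def, h]; exact hmaps c₂ hc₂mem.1
      have hk : k1 < f c := by
        rcases max_cases (f c₁) (f c₂) with ⟨h, _⟩ | ⟨h, _⟩
        · rw [hk1def, h]
          exact lt_of_le_of_ne (hup c₁ hc₁mem.1) hfc₁ne
        · rw [hk1def, h]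
          exact lt_of_le_of_ne (hup c₂ hc₂mem.1) hfc₂ne
      have hKA : Icc k1 (f c) ⊆ f '' Icc c₁ c := by
        have := intermediate_value_Icc hc₁mem.2.le hcont1
        exact (Icc_subset_Icc (le_max_left _ _) le_rfl).trans this
      have hKB : Icc k1 (f c) ⊆ f '' Icc c c₂ := by
        have := intermediate_value_Icc' hc₂mem.2.le hcont2
        exact (Icc_subset_Icc (le_max_right _ _) le_rfl).trans this
      exact core_splitting f hf hsurj P hP01 hmaps hfinj htrans c c₁ c₂ k1 (f c)
        hcP hc₁mem.1 hc₂mem.1 hk1P (hmaps c hcP) hc₁mem.2 hc₂mem.2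
        hmaxbelow hminabove hk hKA hKB
    · -- fold down : k1 = f c, k2 = min (f c₁) (f c₂)
      set k2 := min (f c₁) (f c₂) with hk2def
      have hk2P : k2 ∈ P := by
        rcases min_choice (f c₁) (f c₂) with h | h
        · rw [hk2def, h]; exact hmaps c₁ hc₁mem.1
        · rw [hk2def, h]; exact hmaps c₂ hc₂mem.1
      have hk : f c < k2 := by
        rcases min_cases (f c₁) (f c₂) with ⟨h, _⟩ | ⟨h, _⟩
        · rw [hk2def, h]
          exact lt_of_le_of_ne (hdown c₁ hc₁mem.1) (Ne.symm hfc₁ne)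
        · rw [hk2def, h]
          exact lt_of_le_of_ne (hdown c₂ hc₂mem.1) (Ne.symm hfc₂ne)
      have hKA : Icc (f c) k2 ⊆ f '' Icc c₁ c := by
        have := intermediate_value_Icc' hc₁mem.2.le hcont1
        exact (Icc_subset_Icc le_rfl (min_le_left _ _)).trans this
      have hKB : Icc (f c) k2 ⊆ f '' Icc c c₂ := by
        have := intermediate_value_Icc hc₂mem.2.le hcont2
        exact (Icc_subset_Icc le_rfl (min_le_right _ _)).trans this
      exact core_splitting f hf hsurj P hP01 hmaps hfinj htrans c c₁ c₂ (f c) k2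
        hcP hc₁mem.1 hc₂mem.1 (hmaps c hcP) hk2P hc₁mem.2 hc₂mem.2
        hmaxbelow hminabove hk hKA hKB
  -- apply to ch (preimage of max) or cd (preimage of min)
  by_cases hchbot : ch = hbot
  · -- f hbot = htop; use cd, which must be interior
    have hcdtop : cd ≠ htop := by
      intro h
      apply hno2 hbot (hchbot ▸ hchP)
      rw [← hchbot, hch, ← h, hcd, ← hchbot]
    have h1 : hbot < cd := lt_of_le_of_ne (P.min'_le cd hcdP) (Ne.symm hcdne)
    have h2 : cd < htop := lt_of_le_of_ne (P.le_max' cd hcdP) hcdtop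
    apply main cd hcdP h1 h2
    right
    intro y hy
    rw [hcd]
    exact P.min'_le (f y) (hmaps y hy)
  · -- ch interior, fold up
    have h1 : hbot < ch := lt_of_le_of_ne (P.min'_le ch hchP) (Ne.symm hchbot)
    have h2 : ch < htop := lt_of_le_of_ne (P.le_max' ch hchP) hchne
    apply main ch hchP h1 h2
    left
    intro y hy
    rw [hch]
    exact P.le_max' (f y) (hmaps y hy)
end

section
/- Let f : [0,1] → [0,1] be continuous and not admitting a splitting sequence. Suppose 0 ≤ d < e ≤ 1 and either d and e are both fixed points of f, or {d, e} is a 2-cycle (f(d) = e and f(e) = d). Then there is exactly one connected component C of f⁻¹((d, e)) with f(C) = (d, e). -/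
open Set Filter Topology

lemma abs_eq_max_sub_min (x y : ℝ) : |x - y| = max x y - min x y := by
  rw [abs_sub_comm, ← max_sub_min_eq_abs]

lemma key_lemma (f : ℝ → ℝ) (u v c1 c2 : ℝ) (hc : c1 ≤ c2)
    (hf : ContinuousOn f (Icc u v))
    (h1 : ∃ x ∈ Icc u v, f x = c1) (h2 : ∃ y ∈ Icc u v, f y = c2) :
    ∃ a b, u ≤ a ∧ a ≤ b ∧ b ≤ v ∧ f '' Icc a b = Icc c1 c2 ∧
      f a ∈ ({c1, c2} : Set ℝ) ∧ f b ∈ ({c1, c2} : Set ℝ) ∧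
      ∀ t ∈ Ioo a b, f t ≠ c1 ∧ f t ≠ c2 := by
  classical
  obtain ⟨x, hx, hfx⟩ := h1
  obtain ⟨y, hy, hfy⟩ := h2
  set A : Set ℝ := Icc u v ∩ f ⁻¹' {c1} with hA
  set B : Set ℝ := Icc u v ∩ f ⁻¹' {c2} with hB
  have hAc : IsCompact A :=
    isCompact_Icc.of_isClosed_subset
      (hf.preimage_isClosed_of_isClosed isClosed_Icc isClosed_singleton) inter_subset_left
  have hBc : IsCompact B :=
    isCompact_Icc.of_isClosed_subset
      (hf.preimage_isClosed_of_isClosed isClosed_Icc isClosed_singleton) inter_subset_left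
  have hK : IsCompact (A ×ˢ B) := hAc.prod hBc
  have hKne : (A ×ˢ B).Nonempty := ⟨(x, y), ⟨hx, hfx⟩, ⟨hy, hfy⟩⟩
  obtain ⟨⟨a0, b0⟩, hmem, hmin⟩ := hK.exists_isMinOn hKne
    (Continuous.continuousOn (by continuity : Continuous fun p : ℝ × ℝ => |p.1 - p.2|))
  rw [isMinOn_iff] at hmin
  obtain ⟨⟨ha0, hfa0⟩, ⟨hb0, hfb0⟩⟩ := hmem
  simp only [mem_preimage, mem_singleton_iff] at hfa0 hfb0
  refine ⟨min a0 b0, max a0 b0, le_min ha0.1 hb0.1, min_le_max, max_le ha0.2 hb0.2, ?_, ?_, ?_, ?_⟩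
  rotate_left
  · rcases min_cases a0 b0 with ⟨h, _⟩ | ⟨h, _⟩ <;> rw [h] <;> simp [hfa0, hfb0]
  · rcases max_cases a0 b0 with ⟨h, _⟩ | ⟨h, _⟩ <;> rw [h] <;> simp [hfa0, hfb0]
  · -- interior avoids c1 c2
    intro t ht
    have habs : |a0 - b0| = max a0 b0 - min a0 b0 := abs_eq_max_sub_min a0 b0
    have htuv : t ∈ Icc u v := ⟨(le_min ha0.1 hb0.1).trans ht.1.le, ht.2.le.trans (max_le ha0.2 hb0.2)⟩
    constructor
    · intro hft
      have := hmin (t, b0) ⟨⟨htuv, hft⟩, ⟨hb0, hfb0⟩⟩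
      simp only at this
      have h1 : |t - b0| < |a0 - b0| := by
        rw [abs_sub_lt_iff, habs]
        constructor <;> linarith [ht.1, ht.2, min_le_right a0 b0, le_max_right a0 b0]
      linarith
    · intro hft
      have := hmin (a0, t) ⟨⟨ha0, hfa0⟩, ⟨htuv, hft⟩⟩
      simp only at this
      have h1 : |a0 - t| < |a0 - b0| := by
        rw [abs_sub_lt_iff, habs]
        constructor <;> linarith [ht.1, ht.2, min_le_left a0 b0, le_max_left a0 b0]
      linarith
  · -- image equality
    have huIcc : uIcc a0 b0 = Icc (min a0 b0) (max a0 b0) := rfl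
    have hsubuv : Icc (min a0 b0) (max a0 b0) ⊆ Icc u v :=
      Icc_subset_Icc (le_min ha0.1 hb0.1) (max_le ha0.2 hb0.2)
    apply Subset.antisymm
    · rintro w ⟨t, ht, rfl⟩
      by_contra hw
      rw [mem_Icc, not_and_or, not_le, not_le] at hw
      have habs : |a0 - b0| = max a0 b0 - min a0 b0 := abs_eq_max_sub_min a0 b0
      have htuv : t ∈ Icc u v := hsubuv ht
      rcases hw with hw | hw
      · -- f t < c1
        have hta0 : t ≠ a0 := fun h => by rw [h, hfa0] at hw; exact absurd hw (lt_irrefl _)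
        have htb0 : t ≠ b0 := fun h => by rw [h, hfb0] at hw; linarith
        have htlt : min a0 b0 < t ∧ t < max a0 b0 := by
          rcases ht with ⟨h1, h2⟩
          constructor
          · rcases h1.lt_or_eq with h | h
            · exact h
            · exfalso; rcases min_cases a0 b0 with ⟨hm, _⟩ | ⟨hm, _⟩ <;> rw [hm] at h <;>
                [exact hta0 h.symm; exact htb0 h.symm]
          · rcases h2.lt_or_eq with h | h
            · exact h
            · exfalso; rcases max_cases a0 b0 with ⟨hm, _⟩ | ⟨hm, _⟩ <;> rw [hm] at h <;>
                [exact hta0 h; exact htb0 h]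
        have hc1mem : c1 ∈ uIcc (f t) (f b0) := by
          rw [hfb0]; exact mem_uIcc_of_le hw.le hc
        obtain ⟨s, hs, hfs⟩ := intermediate_value_uIcc
          (hf.mono (uIcc_subset_Icc htuv ⟨hb0.1, hb0.2⟩)) hc1mem
        have hsuv : s ∈ Icc u v := uIcc_subset_Icc htuv ⟨hb0.1, hb0.2⟩ hs
        have := hmin (s, b0) ⟨⟨hsuv, hfs⟩, ⟨hb0, hfb0⟩⟩
        simp only at this
        have hs' : s ∈ Icc (min t b0) (max t b0) := hs
        have habs2 : |t - b0| = max t b0 - min t b0 := abs_eq_max_sub_min t b0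
        have h1 : |s - b0| ≤ |t - b0| := by
          rw [abs_sub_le_iff, habs2]
          constructor <;> linarith [hs'.1, hs'.2, min_le_right t b0, le_max_right t b0]
        have h2 : |t - b0| < |a0 - b0| := by
          rw [abs_sub_lt_iff, habs]
          constructor <;> linarith [htlt.1, htlt.2, min_le_right a0 b0, le_max_right a0 b0]
        linarith
      · -- f t > c2
        have hta0 : t ≠ a0 := fun h => by rw [h, hfa0] at hw; linarith
        have htb0 : t ≠ b0 := fun h => by rw [h, hfb0] at hw; exact absurd hw (lt_irrefl _)
        have htlt : min a0 b0 < t ∧ t < max a0 b0 := by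
          rcases ht with ⟨h1, h2⟩
          constructor
          · rcases h1.lt_or_eq with h | h
            · exact h
            · exfalso; rcases min_cases a0 b0 with ⟨hm, _⟩ | ⟨hm, _⟩ <;> rw [hm] at h <;>
                [exact hta0 h.symm; exact htb0 h.symm]
          · rcases h2.lt_or_eq with h | h
            · exact h
            · exfalso; rcases max_cases a0 b0 with ⟨hm, _⟩ | ⟨hm, _⟩ <;> rw [hm] at h <;>
                [exact hta0 h; exact htb0 h]
        have hc2mem : c2 ∈ uIcc (f a0) (f t) := by
          rw [hfa0]; exact mem_uIcc_of_le hc hw.le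
        obtain ⟨s, hs, hfs⟩ := intermediate_value_uIcc
          (hf.mono (uIcc_subset_Icc ⟨ha0.1, ha0.2⟩ htuv)) hc2mem
        have hsuv : s ∈ Icc u v := uIcc_subset_Icc ⟨ha0.1, ha0.2⟩ htuv hs
        have := hmin (a0, s) ⟨⟨ha0, hfa0⟩, ⟨hsuv, hfs⟩⟩
        simp only at this
        have hs' : s ∈ Icc (min a0 t) (max a0 t) := hs
        have habs2 : |a0 - t| = max a0 t - min a0 t := abs_eq_max_sub_min a0 t
        have h1 : |a0 - s| ≤ |a0 - t| := by
          rw [abs_sub_le_iff, habs2]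
          constructor <;> linarith [hs'.1, hs'.2, min_le_left a0 t, le_max_left a0 t]
        have h2 : |a0 - t| < |a0 - b0| := by
          rw [abs_sub_lt_iff, habs]
          constructor <;> linarith [htlt.1, htlt.2, min_le_left a0 b0, le_max_left a0 b0]
        linarith
    · have : uIcc (f a0) (f b0) ⊆ f '' uIcc a0 b0 :=
        intermediate_value_uIcc (hf.mono (uIcc_subset_Icc ⟨ha0.1, ha0.2⟩ ⟨hb0.1, hb0.2⟩))
      rw [hfa0, hfb0, uIcc_of_le hc] at this
      exact this

theorem stmt_2 (f : ℝ → ℝ) (hf : ContinuousOn f (Icc 0 1))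
    (hmaps : MapsTo f (Icc 0 1) (Icc 0 1))
    (hns : ¬ SplittingSeq f) (d e : ℝ) (hd0 : 0 ≤ d) (hde : d < e) (he1 : e ≤ 1)
    (hfix : (f d = d ∧ f e = e) ∨ (f d = e ∧ f e = d)) :
    ∃! C : Set ℝ, (∃ x ∈ Icc (0:ℝ) 1 ∩ f ⁻¹' Ioo d e,
        C = connectedComponentIn (Icc (0:ℝ) 1 ∩ f ⁻¹' Ioo d e) x) ∧
      f '' C = Ioo d e := by
  classical
  set U : Set ℝ := Icc (0:ℝ) 1 ∩ f ⁻¹' Ioo d e with hU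
  have hde01 : Icc d e ⊆ Icc (0:ℝ) 1 := Icc_subset_Icc hd0 he1
  have hfde : ContinuousOn f (Icc d e) := hf.mono hde01
  have h1 : ∃ x ∈ Icc d e, f x = d := by
    rcases hfix with ⟨h, _⟩ | ⟨_, h⟩
    · exact ⟨d, left_mem_Icc.2 hde.le, h⟩
    · exact ⟨e, right_mem_Icc.2 hde.le, h⟩
  have h2 : ∃ x ∈ Icc d e, f x = e := by
    rcases hfix with ⟨_, h⟩ | ⟨h, _⟩
    · exact ⟨e, right_mem_Icc.2 hde.le, h⟩
    · exact ⟨d, left_mem_Icc.2 hde.le, h⟩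
  obtain ⟨a, b, hda, hab, hbe, himg, hfa, hfb, havoid⟩ :=
    key_lemma f d e d e hde.le hfde h1 h2
  have hab01 : Icc a b ⊆ Icc (0:ℝ) 1 := (Icc_subset_Icc hda hbe).trans hde01
  have haltb : a < b := by
    rcases hab.lt_or_eq with h | h
    · exact h
    · exfalso
      have hd' : (d:ℝ) ∈ f '' Icc a b := by rw [himg]; exact left_mem_Icc.2 hde.le
      have he' : (e:ℝ) ∈ f '' Icc a b := by rw [himg]; exact right_mem_Icc.2 hde.le
      rw [← h, Icc_self, image_singleton, mem_singleton_iff] at hd' he'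
      exact hde.ne (hd'.trans he'.symm)
  have hmemIoo : ∀ t ∈ Ioo a b, f t ∈ Ioo d e := by
    intro t ht
    have h1' : f t ∈ Icc d e := by
      rw [← himg]; exact mem_image_of_mem f (Ioo_subset_Icc_self ht)
    obtain ⟨hne1, hne2⟩ := havoid t ht
    exact ⟨lt_of_le_of_ne h1'.1 (Ne.symm hne1), lt_of_le_of_ne h1'.2 hne2⟩
  have hIooU : Ioo a b ⊆ U := fun t ht =>
    ⟨hab01 (Ioo_subset_Icc_self ht), hmemIoo t ht⟩
  have hIoo : f '' Ioo a b = Ioo d e := by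
    apply Subset.antisymm
    · rintro w ⟨t, ht, rfl⟩; exact hmemIoo t ht
    · intro w hw
      have hw' : w ∈ f '' Icc a b := by rw [himg]; exact Ioo_subset_Icc_self hw
      obtain ⟨t, ht, rfl⟩ := hw'
      refine ⟨t, ⟨lt_of_le_of_ne ht.1 ?_, lt_of_le_of_ne ht.2 ?_⟩, rfl⟩
      · intro hta; rw [← hta] at hw
        rcases hfa with h | h <;> rw [h] at hw
        · exact lt_irrefl d hw.1
        · exact lt_irrefl e hw.2
      · intro htb; rw [htb] at hw
        rcases hfb with h | h <;> rw [h] at hw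
        · exact lt_irrefl d hw.1
        · exact lt_irrefl e hw.2
  have hcomp : ∀ x ∈ Ioo a b, connectedComponentIn U x = Ioo a b := by
    intro x hx
    apply Subset.antisymm
    · intro y hy
      by_contra hyIoo
      have hOC : OrdConnected (connectedComponentIn U x) :=
        isPreconnected_connectedComponentIn.ordConnected
      have hxK : x ∈ connectedComponentIn U x := mem_connectedComponentIn (hIooU hx)
      rw [mem_Ioo, not_and_or, not_lt, not_lt] at hyIoo
      rcases hyIoo with h | h
      · have haK : a ∈ connectedComponentIn U x := hOC.out hy hxK ⟨h, hx.1.le⟩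
        have : f a ∈ Ioo d e := (connectedComponentIn_subset U x haK).2
        rcases hfa with h' | h' <;> rw [h'] at this
        · exact lt_irrefl d this.1
        · exact lt_irrefl e this.2
      · have hbK : b ∈ connectedComponentIn U x := hOC.out hxK hy ⟨hx.2.le, h⟩
        have : f b ∈ Ioo d e := (connectedComponentIn_subset U x hbK).2
        rcases hfb with h' | h' <;> rw [h'] at this
        · exact lt_irrefl d this.1
        · exact lt_irrefl e this.2
    · exact isPreconnected_Ioo.subset_connectedComponentIn hx hIooU
  have hmid : (a + b) / 2 ∈ Ioo a b := ⟨by linarith, by linarith⟩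
  refine ⟨Ioo a b, ⟨⟨(a + b) / 2, hIooU hmid, (hcomp _ hmid).symm⟩, hIoo⟩, ?_⟩
  rintro C ⟨⟨x', hx'U, rfl⟩, hCimg⟩
  by_cases hcase : (connectedComponentIn U x' ∩ Ioo a b).Nonempty
  · obtain ⟨z, hz1, hz2⟩ := hcase
    rw [connectedComponentIn_eq hz1]
    exact hcomp z hz2
  · exfalso
    set C' := connectedComponentIn U x' with hC'def
    have hdisj : ∀ z ∈ C', z ∉ Ioo a b := fun z hz hz2 => hcase ⟨z, hz, hz2⟩
    have hC'ne : C'.Nonempty := ⟨x', mem_connectedComponentIn hx'U⟩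
    have hC'U : C' ⊆ U := connectedComponentIn_subset U x'
    have hC'01 : C' ⊆ Icc 0 1 := fun z hz => (hC'U hz).1
    have hOC : OrdConnected C' := isPreconnected_connectedComponentIn.ordConnected
    have hpos : (∀ z ∈ C', z ≤ a) ∨ (∀ z ∈ C', b ≤ z) := by
      by_contra h
      push_neg at h
      obtain ⟨⟨z1, hz1, hz1'⟩, ⟨z2, hz2, hz2'⟩⟩ := h
      have hz1b : b ≤ z1 := by
        by_contra hh; push_neg at hh; exact hdisj z1 hz1 ⟨hz1', hh⟩
      have hz2a : z2 ≤ a := by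
        by_contra hh; push_neg at hh; exact hdisj z2 hz2 ⟨hh, hz2'⟩
      have hm : (a + b) / 2 ∈ Icc z2 z1 := ⟨by linarith, by linarith⟩
      exact hdisj _ (hOC.out hz2 hz1 hm) ⟨by linarith, by linarith⟩
    set a2 := sInf C' with ha2def
    set b2 := sSup C' with hb2def
    have hbdd : BddAbove C' := ⟨1, fun z hz => (hC'01 hz).2⟩
    have hbddb : BddBelow C' := ⟨0, fun z hz => (hC'01 hz).1⟩
    have ha20 : 0 ≤ a2 := le_csInf hC'ne fun z hz => (hC'01 hz).1
    have hb21 : b2 ≤ 1 := csSup_le hC'ne fun z hz => (hC'01 hz).2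
    have hC'sub : C' ⊆ Icc a2 b2 := fun z hz => ⟨csInf_le hbddb hz, le_csSup hbdd hz⟩
    have ha2b2 : a2 ≤ b2 := by
      obtain ⟨z, hz⟩ := hC'ne
      exact (csInf_le hbddb hz).trans (le_csSup hbdd hz)
    have hcont2 : ContinuousOn f (Icc a2 b2) := hf.mono (Icc_subset_Icc ha20 hb21)
    have himg2 : Icc d e ⊆ f '' Icc a2 b2 := by
      have h1' : Ioo d e ⊆ f '' Icc a2 b2 := by
        rw [← hCimg]; exact image_mono hC'sub
      have hcpt : IsCompact (f '' Icc a2 b2) := isCompact_Icc.image_of_continuousOn hcont2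
      calc Icc d e = closure (Ioo d e) := (closure_Ioo hde.ne).symm
        _ ⊆ f '' Icc a2 b2 := closure_minimal h1' hcpt.isClosed
    have hinter : Icc a2 b2 ∩ Icc a b ⊆ ({a, b} : Set ℝ) := by
      rcases hpos with hp | hp
      · have hb2a : b2 ≤ a := csSup_le hC'ne hp
        rintro z ⟨hz1, hz2⟩
        exact Or.inl (le_antisymm (hz1.2.trans hb2a) hz2.1)
      · have hab2 : b ≤ a2 := le_csInf hC'ne hp
        rintro z ⟨hz1, hz2⟩
        exact Or.inr (le_antisymm hz2.2 (hab2.trans hz1.1))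
    have hne01 : ¬(a = 0 ∧ b = 1) := by
      rintro ⟨ha0, hb1⟩
      have hsingle : ∃ c, ∀ z ∈ C', z = c := by
        rcases hpos with hp | hp
        · exact ⟨0, fun z hz => le_antisymm (ha0 ▸ hp z hz) (hC'01 hz).1⟩
        · exact ⟨1, fun z hz => le_antisymm (hC'01 hz).2 (hb1 ▸ hp z hz)⟩
      obtain ⟨c, hc⟩ := hsingle
      have hw1 : (2 * d + e) / 3 ∈ Ioo d e := ⟨by linarith, by linarith⟩
      have hw2 : (d + 2 * e) / 3 ∈ Ioo d e := ⟨by linarith, by linarith⟩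
      rw [← hCimg] at hw1 hw2
      obtain ⟨t1, ht1, hft1⟩ := hw1
      obtain ⟨t2, ht2, hft2⟩ := hw2
      rw [hc t1 ht1] at hft1
      rw [hc t2 ht2] at hft2
      have := hft1.symm.trans hft2
      linarith
    -- step functions
    have step : ∀ p : ℝ × ℝ, ∃ q : ℝ × ℝ,
        (a ≤ p.1 ∧ p.1 ≤ p.2 ∧ p.2 ≤ b) →
        ((a ≤ q.1 ∧ q.1 ≤ q.2 ∧ q.2 ≤ b) ∧ f '' Icc q.1 q.2 = Icc p.1 p.2) := by
      intro p
      by_cases hp : a ≤ p.1 ∧ p.1 ≤ p.2 ∧ p.2 ≤ b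
      · obtain ⟨hp1, hp2, hp3⟩ := hp
        have hm1 : p.1 ∈ f '' Icc a b := by
          rw [himg]; exact ⟨hda.trans hp1, (hp2.trans hp3).trans hbe⟩
        have hm2 : p.2 ∈ f '' Icc a b := by
          rw [himg]; exact ⟨hda.trans (hp1.trans hp2), hp3.trans hbe⟩
        obtain ⟨x1, hx1, hfx1⟩ := hm1
        obtain ⟨x2, hx2, hfx2⟩ := hm2
        obtain ⟨q1, q2, hq1, hq2, hq3, hq4, -, -, -⟩ :=
          key_lemma f a b p.1 p.2 hp2 (hf.mono hab01) ⟨x1, hx1, hfx1⟩ ⟨x2, hx2, hfx2⟩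
        exact ⟨(q1, q2), fun _ => ⟨⟨hq1, hq2, hq3⟩, hq4⟩⟩
      · exact ⟨p, fun h => absurd h hp⟩
    have stepS : ∀ p : ℝ × ℝ, ∃ q : ℝ × ℝ,
        (a ≤ p.1 ∧ p.1 ≤ p.2 ∧ p.2 ≤ b) →
        ((a2 ≤ q.1 ∧ q.1 ≤ q.2 ∧ q.2 ≤ b2) ∧ f '' Icc q.1 q.2 = Icc p.1 p.2) := by
      intro p
      by_cases hp : a ≤ p.1 ∧ p.1 ≤ p.2 ∧ p.2 ≤ b
      · obtain ⟨hp1, hp2, hp3⟩ := hp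
        have hm1 : p.1 ∈ f '' Icc a2 b2 :=
          himg2 ⟨hda.trans hp1, (hp2.trans hp3).trans hbe⟩
        have hm2 : p.2 ∈ f '' Icc a2 b2 :=
          himg2 ⟨hda.trans (hp1.trans hp2), hp3.trans hbe⟩
        obtain ⟨x1, hx1, hfx1⟩ := hm1
        obtain ⟨x2, hx2, hfx2⟩ := hm2
        obtain ⟨q1, q2, hq1, hq2, hq3, hq4, -, -, -⟩ :=
          key_lemma f a2 b2 p.1 p.2 hp2 hcont2 ⟨x1, hx1, hfx1⟩ ⟨x2, hx2, hfx2⟩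
        exact ⟨(q1, q2), fun _ => ⟨⟨hq1, hq2, hq3⟩, hq4⟩⟩
      · exact ⟨p, fun h => absurd h hp⟩
    choose g hg using step
    choose gS hgS using stepS
    set T : ℕ → ℝ × ℝ := fun n => Nat.rec (a, b) (fun _ p => g p) n with hT
    have hTsucc : ∀ n, T (n + 1) = g (T n) := fun n => rfl
    have hInv : ∀ n, a ≤ (T n).1 ∧ (T n).1 ≤ (T n).2 ∧ (T n).2 ≤ b := by
      intro n
      induction n with
      | zero => exact ⟨le_refl a, haltb.le, le_refl b⟩
      | succ n ih => rw [hTsucc]; exact (hg (T n) ih).1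
    have hImg : ∀ n, f '' Icc (T (n + 1)).1 (T (n + 1)).2 = Icc (T n).1 (T n).2 := by
      intro n; rw [hTsucc]; exact (hg (T n) (hInv n)).2
    have hNondeg : ∀ n, (T n).1 < (T n).2 := by
      intro n
      induction n with
      | zero => exact haltb
      | succ n ih =>
        rcases (hInv (n + 1)).2.1.lt_or_eq with h | h
        · exact h
        · exfalso
          have h2 := hImg n
          rw [h, Icc_self, image_singleton] at h2
          have e1 : (T n).1 ∈ ({f (T (n + 1)).2} : Set ℝ) := by
            rw [h2]; exact left_mem_Icc.2 (hInv n).2.1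
          have e2 : (T n).2 ∈ ({f (T (n + 1)).2} : Set ℝ) := by
            rw [h2]; exact right_mem_Icc.2 (hInv n).2.1
          rw [mem_singleton_iff] at e1 e2
          rw [e1.trans e2.symm] at ih
          exact lt_irrefl _ ih
    apply hns
    refine ⟨fun n => (T n).1, fun n => (T n).2, Ici 1, fun n => Icc (gS (T (n - 1))).1 (gS (T (n - 1))).2,
      fun n => (hInv n).2.1, ?_, ?_, hImg, ⟨0, fun n _ => hNondeg n⟩, Ici_infinite 1, ?_⟩
    · intro n
      exact (Icc_subset_Icc (hInv n).1 (hInv n).2.2).trans hab01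
    · intro n heq
      apply hne01
      have hsub : Icc (0:ℝ) 1 ⊆ Icc a b :=
        heq ▸ Icc_subset_Icc (hInv n).1 (hInv n).2.2
      have h0 : (0:ℝ) ∈ Icc a b := hsub (left_mem_Icc.2 zero_le_one)
      have h1' : (1:ℝ) ∈ Icc a b := hsub (right_mem_Icc.2 zero_le_one)
      have ha0' : 0 ≤ a := (hab01 (left_mem_Icc.2 haltb.le)).1
      have hb1' : b ≤ 1 := (hab01 (right_mem_Icc.2 haltb.le)).2
      exact ⟨le_antisymm h0.1 ha0', le_antisymm hb1' h1'.2⟩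
    · intro n hn
      obtain ⟨m, rfl⟩ : ∃ m, n = m + 1 := ⟨n - 1, (Nat.succ_pred_eq_of_pos hn).symm⟩
      obtain ⟨⟨hq1, hq2, hq3⟩, hqimg⟩ := hgS (T m) ⟨(hInv m).1, (hInv m).2.1, (hInv m).2.2⟩
      have hmm : (m + 1 : ℕ) - 1 = m := rfl
      have hq2' : (gS (T m)).1 < (gS (T m)).2 := by
        rcases hq2.lt_or_eq with h | h
        · exact h
        · exfalso
          rw [h, Icc_self, image_singleton] at hqimg
          have e1 : (T m).1 ∈ ({f (gS (T m)).2} : Set ℝ) := by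
            rw [hqimg]; exact left_mem_Icc.2 (hInv m).2.1
          have e2 : (T m).2 ∈ ({f (gS (T m)).2} : Set ℝ) := by
            rw [hqimg]; exact right_mem_Icc.2 (hInv m).2.1
          rw [mem_singleton_iff] at e1 e2
          have := hNondeg m
          rw [e1.trans e2.symm] at this
          exact lt_irrefl _ this
      refine ⟨⟨(gS (T m)).1, (gS (T m)).2, hq2', by simp only [Nat.add_sub_cancel]⟩, ?_, ?_, ?_⟩
      · simp only [Nat.add_sub_cancel]
        exact (Icc_subset_Icc hq1 hq3).trans (Icc_subset_Icc ha20 hb21)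
      · simp only [Nat.add_sub_cancel]
        rintro z ⟨hzS, hzT⟩
        have hz2 : z ∈ Icc a2 b2 := Icc_subset_Icc hq1 hq3 hzS
        have hzab : z ∈ Icc a b :=
          Icc_subset_Icc (hInv (m + 1)).1 (hInv (m + 1)).2.2 hzT
        rcases hinter ⟨hz2, hzab⟩ with h | h
        · left
          rw [h] at hzT ⊢
          exact (le_antisymm hzT.1 (hInv (m + 1)).1).symm
        · right
          rw [h] at hzT ⊢
          exact le_antisymm hzT.2 (hInv (m + 1)).2.2
      · simp only [Nat.add_sub_cancel]; rw [hqimg]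
        exact (hImg m).symm
end

section
/- Let f : [0,1] → [0,1] be continuous, surjective, and not admitting a splitting sequence. If f admits two 2-cycles {s, t} and {u, v} with s < t and u < v, then either s < u and v < t, or u < s and t < v (i.e., the intervals [s,t] and [u,v] are nested). -/
open Set Filter Topology

private lemma pullback_aux {f : ℝ → ℝ} {x y p q : ℝ} (hxy : x ≤ y)
    (hf : ContinuousOn f (Icc x y)) (hfx : f x = p) (hfy : f y = q) (hpq : p ≤ q) :
    ∃ a b, x ≤ a ∧ a ≤ b ∧ b ≤ y ∧ f '' Icc a b = Icc p q := by
  set Sq : Set ℝ := Icc x y ∩ f ⁻¹' {q} with hSqdef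
  have hSqc : IsClosed Sq := hf.preimage_isClosed_of_isClosed isClosed_Icc isClosed_singleton
  have hySq : y ∈ Sq := ⟨right_mem_Icc.2 hxy, hfy⟩
  have hSqbd : BddBelow Sq := ⟨x, fun z hz => hz.1.1⟩
  set b := sInf Sq with hbdef
  have hbSq : b ∈ Sq := hSqc.csInf_mem ⟨y, hySq⟩ hSqbd
  have hxb : x ≤ b := hbSq.1.1
  have hby : b ≤ y := hbSq.1.2
  have hfb : f b = q := hbSq.2
  set Sp : Set ℝ := Icc x b ∩ f ⁻¹' {p} with hSpdef
  have hSpc : IsClosed Sp :=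
    (hf.mono (Icc_subset_Icc le_rfl hby)).preimage_isClosed_of_isClosed isClosed_Icc
      isClosed_singleton
  have hxSp : x ∈ Sp := ⟨left_mem_Icc.2 hxb, hfx⟩
  have hSpbd : BddAbove Sp := ⟨b, fun z hz => hz.1.2⟩
  set a := sSup Sp with hadef
  have haSp : a ∈ Sp := hSpc.csSup_mem ⟨x, hxSp⟩ hSpbd
  have hxa : x ≤ a := haSp.1.1
  have hab : a ≤ b := haSp.1.2
  have hfa : f a = p := haSp.2
  refine ⟨a, b, hxa, hab, hby, ?_⟩
  have hsub : Icc a b ⊆ Icc x y := Icc_subset_Icc hxa hby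
  apply Subset.antisymm
  · rintro _ ⟨z, hz, rfl⟩
    constructor
    · by_contra hlt
      push_neg at hlt
      have hmem : p ∈ Icc (f z) (f b) := ⟨hlt.le, by rw [hfb]; exact hpq⟩
      obtain ⟨w, hw, hfw⟩ := intermediate_value_Icc hz.2
        (hf.mono (Icc_subset_Icc (hxa.trans hz.1) hby)) hmem
      have hwSp : w ∈ Sp := ⟨⟨hxa.trans (hz.1.trans hw.1), hw.2⟩, hfw⟩
      have hwa : w ≤ a := le_csSup hSpbd hwSp
      have hza : z = a := le_antisymm (le_trans hw.1 hwa) hz.1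
      rw [hza, hfa] at hlt
      exact lt_irrefl _ hlt
    · by_contra hlt
      push_neg at hlt
      have hmem : q ∈ Icc (f a) (f z) := ⟨by rw [hfa]; exact hpq, hlt.le⟩
      obtain ⟨w, hw, hfw⟩ := intermediate_value_Icc hz.1
        (hf.mono (Icc_subset_Icc hxa (hz.2.trans hby))) hmem
      have hwSq : w ∈ Sq := ⟨⟨hxa.trans hw.1, (hw.2.trans hz.2).trans hby⟩, hfw⟩
      have hbw : b ≤ w := csInf_le hSqbd hwSq
      have hzb : z = b := le_antisymm hz.2 (hbw.trans hw.2)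
      rw [hzb, hfb] at hlt
      exact lt_irrefl _ hlt
  · have h := intermediate_value_Icc hab (hf.mono hsub)
    rwa [hfa, hfb] at h

private lemma pullback_sub {f : ℝ → ℝ} {d₁ d₂ p q : ℝ} (hd : d₁ ≤ d₂)
    (hf : ContinuousOn f (Icc d₁ d₂)) (hpq : p ≤ q)
    (hcov : Icc p q ⊆ f '' Icc d₁ d₂) :
    ∃ a b, d₁ ≤ a ∧ a ≤ b ∧ b ≤ d₂ ∧ f '' Icc a b = Icc p q := by
  obtain ⟨x, hx, hfx⟩ := hcov (left_mem_Icc.2 hpq)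
  obtain ⟨y, hy, hfy⟩ := hcov (right_mem_Icc.2 hpq)
  rcases le_total x y with h | h
  · obtain ⟨a, b, h1, h2, h3, h4⟩ :=
      pullback_aux h (hf.mono (Icc_subset_Icc hx.1 hy.2)) hfx hfy hpq
    exact ⟨a, b, hx.1.trans h1, h2, h3.trans hy.2, h4⟩
  · have hg : ContinuousOn (fun z => f (-z)) (Icc (-x) (-y)) := by
      apply hf.comp continuous_neg.continuousOn
      intro z hz
      have h1 : -x ≤ z := hz.1
      have h2 : z ≤ -y := hz.2
      have hy1 : d₁ ≤ y := hy.1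
      have hx2 : x ≤ d₂ := hx.2
      show -z ∈ Icc d₁ d₂
      rw [Set.mem_Icc]
      constructor
      · linarith
      · linarith
    obtain ⟨a, b, h1, h2, h3, h4⟩ :=
      pullback_aux (neg_le_neg h) hg (by simp [hfx]) (by simp [hfy]) hpq
    refine ⟨-b, -a, ?_, neg_le_neg h2, ?_, ?_⟩
    · have : b ≤ -y := h3
      have : y ≤ -b := by linarith
      exact hy.1.trans this
    · have : -x ≤ a := h1
      have : -a ≤ x := by linarith
      exact this.trans hx.2
    · rw [← h4]
      have : Icc (-b) (-a) = Neg.neg '' Icc a b := by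
        rw [Set.image_neg_eq_neg, Set.neg_Icc]
      rw [this, ← Set.image_comp]
      rfl

private lemma strict_of_image {f : ℝ → ℝ} {A B p q : ℝ} (hab : A ≤ B) (hpq : p < q)
    (h : f '' Icc A B = Icc p q) : A < B := by
  rcases hab.lt_or_eq with h' | rfl
  · exact h'
  · exfalso
    rw [Icc_self, image_singleton] at h
    have hp : p ∈ ({f A} : Set ℝ) := h.symm ▸ left_mem_Icc.2 hpq.le
    have hq : q ∈ ({f A} : Set ℝ) := h.symm ▸ right_mem_Icc.2 hpq.le
    rw [mem_singleton_iff] at hp hq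
    exact absurd (hp ▸ hq) hpq.ne'

/-- Auxiliary predicate : at even times the interval sits inside `[a₁,a₂]`,
at odd times inside `[b₁,b₂]`, and it is nondegenerate. -/
private def GoodAt (a₁ a₂ b₁ b₂ : ℝ) (n : ℕ) (pq : ℝ × ℝ) : Prop :=
  pq.1 < pq.2 ∧ (Even n → a₁ ≤ pq.1 ∧ pq.2 ≤ a₂) ∧ (¬ Even n → b₁ ≤ pq.1 ∧ pq.2 ≤ b₂)

private lemma key_split (f : ℝ → ℝ) (hf : ContinuousOn f (Icc 0 1))
    (a₁ a₂ b₁ b₂ c₁ c₂ : ℝ)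
    (ha : a₁ < a₂) (hb : b₁ ≤ b₂) (hc : c₁ ≤ c₂)
    (hA : Icc a₁ a₂ ⊆ Icc 0 1) (hB : Icc b₁ b₂ ⊆ Icc 0 1) (hC : Icc c₁ c₂ ⊆ Icc 0 1)
    (hApr : Icc a₁ a₂ ≠ Icc (0:ℝ) 1) (hBpr : Icc b₁ b₂ ≠ Icc (0:ℝ) 1)
    (hAB : Icc b₁ b₂ ⊆ f '' Icc a₁ a₂)
    (hBA : Icc a₁ a₂ ⊆ f '' Icc b₁ b₂)
    (hCA : Icc a₁ a₂ ⊆ f '' Icc c₁ c₂)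
    (hCB : Icc c₁ c₂ ∩ Icc b₁ b₂ ⊆ {b₁, b₂}) : SplittingSeq f := by
  have hstep : ∀ (n : ℕ) (pq : ℝ × ℝ), ∃ pq' : ℝ × ℝ,
      GoodAt a₁ a₂ b₁ b₂ n pq →
        (GoodAt a₁ a₂ b₁ b₂ (n+1) pq' ∧ f '' Icc pq'.1 pq'.2 = Icc pq.1 pq.2) := by
    intro n pq
    by_cases hg : GoodAt a₁ a₂ b₁ b₂ n pq
    · by_cases he : Even n
      · -- pq ⊆ A ; pull back into B
        obtain ⟨hin1, hin2⟩ := hg.2.1 he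
        obtain ⟨x, y, h1, h2, h3, h4⟩ := pullback_sub hb (hf.mono hB) hg.1.le
          ((Icc_subset_Icc hin1 hin2).trans hBA)
        refine ⟨(x, y), fun _ => ⟨⟨strict_of_image h2 hg.1 h4, ?_, fun _ => ⟨h1, h3⟩⟩, h4⟩⟩
        intro hev
        exact absurd (Nat.even_add_one.mp hev) (not_not.2 he)
      · -- pq ⊆ B ; pull back into A
        obtain ⟨hin1, hin2⟩ := hg.2.2 he
        obtain ⟨x, y, h1, h2, h3, h4⟩ := pullback_sub ha.le (hf.mono hA) hg.1.le
          ((Icc_subset_Icc hin1 hin2).trans hAB)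
        refine ⟨(x, y), fun _ => ⟨⟨strict_of_image h2 hg.1 h4, fun _ => ⟨h1, h3⟩, ?_⟩, h4⟩⟩
        intro hev
        exact absurd (show Even n by simpa [Nat.even_add_one, not_not] using hev) he
    · exact ⟨pq, fun h => absurd h hg⟩
  choose step hstepspec using hstep
  set F : ℕ → ℝ × ℝ := fun n => Nat.rec (a₁, a₂) (fun k pq => step k pq) n with hF
  have hF0 : F 0 = (a₁, a₂) := rfl
  have hFs : ∀ n, F (n+1) = step n (F n) := fun n => rfl
  have hGood : ∀ n, GoodAt a₁ a₂ b₁ b₂ n (F n) := by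
    intro n
    induction n with
    | zero =>
      refine ⟨ha, fun _ => ⟨le_rfl, le_rfl⟩, fun h => absurd Even.zero h⟩
    | succ n ih =>
      rw [hFs]
      exact (hstepspec n (F n) ih).1
  have himg : ∀ n, f '' Icc (F (n+1)).1 (F (n+1)).2 = Icc (F n).1 (F n).2 := by
    intro n
    rw [hFs]
    exact (hstepspec n (F n) (hGood n)).2
  -- construct the splitting intervals S n for odd n
  have hSex : ∀ n : ℕ, ∃ Sn : Set ℝ, ¬ Even n →
      ((∃ x y : ℝ, x < y ∧ Sn = Icc x y) ∧ Sn ⊆ Icc 0 1 ∧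
        Sn ∩ Icc (F n).1 (F n).2 ⊆ {(F n).1, (F n).2} ∧
        f '' Sn = f '' Icc (F n).1 (F n).2) := by
    intro n
    by_cases he : Even n
    · exact ⟨∅, fun h => absurd he h⟩
    · obtain ⟨m, rfl⟩ : ∃ m, n = m + 1 := by
        rcases n with _ | m
        · exact absurd Even.zero he
        · exact ⟨m, rfl⟩
      have hem : Even m := by
        simpa [Nat.even_add_one, not_not] using he
      have hGm := hGood m
      obtain ⟨hinm1, hinm2⟩ := hGm.2.1 hem
      obtain ⟨x, y, h1, h2, h3, h4⟩ := pullback_sub hc (hf.mono hC) hGm.1.le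
        ((Icc_subset_Icc hinm1 hinm2).trans hCA)
      have hGn := hGood (m+1)
      obtain ⟨hinn1, hinn2⟩ := hGn.2.2 he
      refine ⟨Icc x y, fun _ => ⟨⟨x, y, strict_of_image h2 hGm.1 h4, rfl⟩,
        (Icc_subset_Icc h1 h3).trans hC, ?_, ?_⟩⟩
      · intro z hz
        have hzC : z ∈ Icc c₁ c₂ := Icc_subset_Icc h1 h3 hz.1
        have hzB : z ∈ Icc b₁ b₂ := Icc_subset_Icc hinn1 hinn2 hz.2
        have hmem := hCB ⟨hzC, hzB⟩
        have hl : (F (m+1)).1 ≤ z := hz.2.1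
        have hr : z ≤ (F (m+1)).2 := hz.2.2
        simp only [mem_insert_iff, mem_singleton_iff] at hmem ⊢
        rcases hmem with h | h
        · left; linarith
        · right; linarith
      · rw [h4, himg m]
  choose S hSspec using hSex
  refine ⟨fun n => (F n).1, fun n => (F n).2, {n | ¬ Even n}, S,
    fun n => (hGood n).1.le, ?_, ?_, himg, ⟨0, fun n _ => (hGood n).1⟩, ?_, ?_⟩
  · intro n
    by_cases he : Even n
    · obtain ⟨h1, h2⟩ := (hGood n).2.1 he
      exact (Icc_subset_Icc h1 h2).trans hA
    · obtain ⟨h1, h2⟩ := (hGood n).2.2 he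
      exact (Icc_subset_Icc h1 h2).trans hB
  · intro n heq
    by_cases he : Even n
    · obtain ⟨h1, h2⟩ := (hGood n).2.1 he
      exact hApr (Subset.antisymm hA (heq ▸ Icc_subset_Icc h1 h2))
    · obtain ⟨h1, h2⟩ := (hGood n).2.2 he
      exact hBpr (Subset.antisymm hB (heq ▸ Icc_subset_Icc h1 h2))
  · have hinj : Function.Injective (fun k : ℕ => 2 * k + 1) := by
      intro a b hab
      have h' : 2 * a + 1 = 2 * b + 1 := hab
      omega
    have hmem : ∀ k : ℕ, (fun k : ℕ => 2 * k + 1) k ∈ {n : ℕ | ¬ Even n} := by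
      intro k
      simp only [mem_setOf_eq, Nat.even_add_one, not_not]
      exact even_two_mul k
    exact Set.infinite_of_injective_forall_mem hinj hmem
  · exact fun n hn => hSspec n hn


private lemma cycles_split (f : ℝ → ℝ) (hf : ContinuousOn f (Icc 0 1))
    (s t u v : ℝ) (hs : s ∈ Icc (0:ℝ) 1) (ht : t ∈ Icc (0:ℝ) 1)
    (hu : u ∈ Icc (0:ℝ) 1) (hv : v ∈ Icc (0:ℝ) 1)
    (hst : s < t) (huv : u < v)
    (h1 : f s = t) (h2 : f t = s) (h3 : f u = v) (h4 : f v = u)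
    (hsu : s < u) (htv : t < v) : SplittingSeq f := by
  rcases lt_trichotomy u t with hut | rfl | htu
  · -- linked case : s < u < t < v ;  A = [s,u], B = [t,v], C = [u,t]
    have hA : Icc s u ⊆ Icc (0:ℝ) 1 := Icc_subset_Icc hs.1 hu.2
    have hB : Icc t v ⊆ Icc (0:ℝ) 1 := Icc_subset_Icc ht.1 hv.2
    have hC : Icc u t ⊆ Icc (0:ℝ) 1 := Icc_subset_Icc hu.1 ht.2
    apply key_split f hf s u t v u t hsu htv.le hut.le hA hB hC
    · intro heq
      have h1' : (1:ℝ) ∈ Icc s u := heq ▸ right_mem_Icc.2 zero_le_one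
      have : u < 1 := hut.trans_le ht.2
      exact absurd h1'.2 (not_le.2 this)
    · intro heq
      have h0' : (0:ℝ) ∈ Icc t v := heq ▸ left_mem_Icc.2 zero_le_one
      have : 0 < t := hs.1.trans_lt hst
      exact absurd h0'.1 (not_le.2 this)
    · have h := intermediate_value_Icc hsu.le (hf.mono hA)
      rwa [h1, h3] at h
    · have h := intermediate_value_Icc htv.le (hf.mono hB)
      rwa [h2, h4] at h
    · have h := intermediate_value_Icc' hut.le (hf.mono hC)
      rw [h2, h3] at h
      exact (Icc_subset_Icc_right (hut.trans htv).le).trans h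
    · intro z hz
      left
      exact le_antisymm hz.1.2 hz.2.1
  · -- u = t impossible : then v = f t = s but s < v
    rw [h2] at h3
    exact absurd h3 (by linarith)
  · -- disjoint case : s < t < u < v ; A = B = [s,t], C = [t,u]
    have hA : Icc s t ⊆ Icc (0:ℝ) 1 := Icc_subset_Icc hs.1 ht.2
    have hC : Icc t u ⊆ Icc (0:ℝ) 1 := Icc_subset_Icc ht.1 hu.2
    have hApr : Icc s t ≠ Icc (0:ℝ) 1 := by
      intro heq
      have h1' : (1:ℝ) ∈ Icc s t := heq ▸ right_mem_Icc.2 zero_le_one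
      have : t < 1 := htu.trans_le hu.2
      exact absurd h1'.2 (not_le.2 this)
    have hAA : Icc s t ⊆ f '' Icc s t := by
      have h := intermediate_value_Icc' hst.le (hf.mono hA)
      rwa [h1, h2] at h
    apply key_split f hf s t s t t u hst hst.le htu.le hA hA hC hApr hApr hAA hAA
    · have h := intermediate_value_Icc htu.le (hf.mono hC)
      rw [h2, h3] at h
      exact (Icc_subset_Icc_right htv.le).trans h
    · intro z hz
      right
      exact le_antisymm hz.2.2 hz.1.1

theorem stmt_3 (f : ℝ → ℝ) (hf : ContinuousOn f (Icc 0 1))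
    (hsurj : f '' Icc 0 1 = Icc 0 1) (hns : ¬ SplittingSeq f)
    (s t u v : ℝ) (hs : s ∈ Icc (0:ℝ) 1) (ht : t ∈ Icc (0:ℝ) 1)
    (hu : u ∈ Icc (0:ℝ) 1) (hv : v ∈ Icc (0:ℝ) 1)
    (hst : s < t) (huv : u < v)
    (h1 : f s = t) (h2 : f t = s) (h3 : f u = v) (h4 : f v = u)
    (hne : s ≠ u) :
    (s < u ∧ v < t) ∨ (u < s ∧ t < v) := by
  by_contra hcon
  push_neg at hcon
  obtain ⟨hc1, hc2⟩ := hcon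
  rcases hne.lt_or_gt with hsu | hus
  · have htv' : t ≤ v := hc1 hsu
    have htv : t < v := by
      rcases htv'.lt_or_eq with h | h
      · exact h
      · exfalso
        rw [h] at h2
        rw [h2] at h4
        exact hne h4
    exact hns (cycles_split f hf s t u v hs ht hu hv hst huv h1 h2 h3 h4 hsu htv)
  · have hvt' : v ≤ t := hc2 hus
    have hvt : v < t := by
      rcases hvt'.lt_or_eq with h | h
      · exact h
      · exfalso
        rw [h] at h4
        rw [h4] at h2
        exact hne h2.symm
    exact hns (cycles_split f hf u v s t hu hv hs ht huv hst h3 h4 h1 h2 hus hvt)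
end

section
/- Let f : [0,1] → [0,1] be continuous and surjective. Then f admits a splitting sequence if and only if f∘f admits a splitting sequence. -/
open Set Filter Topology

def MinProp (f : ℝ → ℝ) (c d u v : ℝ) : Prop :=
  (f u = c ∧ f v = d ∨ f u = d ∧ f v = c) ∧ ∀ t ∈ Ioo u v, f t ≠ c ∧ f t ≠ d

lemma helper {f : ℝ → ℝ} {x y c d : ℝ} (hxy : x < y) (hfx : f x = c) (hfy : f y = d)
    (hcd : c ≠ d) (hcont : ContinuousOn f (Icc x y)) :
    ∃ u v, u < v ∧ Icc u v ⊆ Icc x y ∧ f u = c ∧ f v = d ∧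
      (∀ t ∈ Ioo u v, f t ≠ c ∧ f t ≠ d) ∧ f '' Icc u v = uIcc c d := by
  classical
  set E : Set ℝ := Icc x y ∩ f ⁻¹' {d} with hE
  have hEclosed : IsClosed E := hcont.preimage_isClosed_of_isClosed isClosed_Icc isClosed_singleton
  have hEne : E.Nonempty := ⟨y, ⟨hxy.le, le_refl _⟩, by simp [hfy]⟩
  have hEbdd : BddBelow E := bddBelow_Icc.mono inter_subset_left
  set v := sInf E with hv
  have hvE : v ∈ E := hEclosed.csInf_mem hEne hEbdd
  have hfv : f v = d := hvE.2
  have hxv : x ≤ v := hvE.1.1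
  have hvy : v ≤ y := hvE.1.2
  have hvmin : ∀ t, x ≤ t → t < v → f t ≠ d := by
    intro t hxt htv hft
    exact absurd (csInf_le hEbdd ⟨⟨hxt, htv.le.trans hvy⟩, hft⟩) (not_le.2 htv)
  set F : Set ℝ := Icc x v ∩ f ⁻¹' {c} with hF
  have hFclosed : IsClosed F :=
    (hcont.mono (Icc_subset_Icc_right hvy)).preimage_isClosed_of_isClosed isClosed_Icc
      isClosed_singleton
  have hFne : F.Nonempty := ⟨x, ⟨le_refl _, hxv⟩, by simp [hfx]⟩
  have hFbdd : BddAbove F := bddAbove_Icc.mono inter_subset_left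
  set u := sSup F with hu
  have huF : u ∈ F := hFclosed.csSup_mem hFne hFbdd
  have hfu : f u = c := huF.2
  have hxu : x ≤ u := huF.1.1
  have huv' : u ≤ v := huF.1.2
  have humax : ∀ t, u < t → t ≤ v → f t ≠ c := by
    intro t hut htv hft
    exact absurd (le_csSup hFbdd ⟨⟨hxu.trans hut.le, htv⟩, hft⟩) (not_le.2 hut)
  have huv : u < v := lt_of_le_of_ne huv' (fun h => hcd (hfu.symm.trans (h ▸ hfv)))
  have hsub : Icc u v ⊆ Icc x y := Icc_subset_Icc hxu hvy
  have hint : ∀ t ∈ Ioo u v, f t ≠ c ∧ f t ≠ d := by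
    intro t ht
    exact ⟨humax t ht.1 ht.2.le, hvmin t (hxu.trans ht.1.le) ht.2⟩
  refine ⟨u, v, huv, hsub, hfu, hfv, hint, ?_⟩
  have hcont' : ContinuousOn f (Icc u v) := hcont.mono hsub
  apply subset_antisymm
  · rintro w ⟨t, ht, rfl⟩
    by_contra hmem
    rw [mem_uIcc] at hmem
    push_neg at hmem
    -- hmem : (c ≤ f t → ¬ f t ≤ d) ∧ (d ≤ f t → ¬ f t ≤ c)
    have htv : t < v := by
      rcases lt_or_eq_of_le ht.2 with h | h
      · exact h
      · exfalso; rw [h, hfv] at hmem; rcases le_total c d with hcd' | hcd'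
        · exact absurd (hmem.1 hcd') (lt_irrefl d)
        · exact absurd (hmem.2 le_rfl) (not_lt.2 hcd')
    have htu : u < t := by
      rcases lt_or_eq_of_le ht.1 with h | h
      · exact h
      · exfalso; rw [← h, hfu] at hmem; rcases le_total c d with hcd' | hcd'
        · exact absurd (hmem.1 le_rfl) (not_lt.2 hcd')
        · exact absurd (hmem.2 hcd') (lt_irrefl c)
    rcases le_total c d with hcd' | hcd'
    · -- c ≤ d
      rcases lt_or_ge (f t) c with hlo | hge
      · -- f t < c : find s ∈ (t, v] with f s = c using IVT on [t,v], f v = d ≥ c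
        have : c ∈ Icc (f t) (f v) := ⟨hlo.le, hfv ▸ hcd'⟩
        obtain ⟨s, hs, hfs⟩ := intermediate_value_Icc ht.2 (hcont'.mono (Icc_subset_Icc ht.1 le_rfl)) this
        have hst : t < s := hs.1.lt_of_ne (by rintro rfl; rw [hfs] at hlo; linarith)
        exact humax s (htu.trans hst) hs.2 hfs
      · -- c ≤ f t, so by hmem, d < f t : find s ∈ [u,t) with f s = d on [u,t], f u = c ≤ d
        have hdt : d < f t := hmem.1 hge
        have : d ∈ Icc (f u) (f t) := ⟨hfu ▸ hcd', hdt.le⟩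
        obtain ⟨s, hs, hfs⟩ := intermediate_value_Icc ht.1 (hcont'.mono (Icc_subset_Icc le_rfl ht.2)) this
        have hst : s < t := hs.2.lt_of_ne (by rintro rfl; rw [hfs] at hdt; linarith)
        exact hvmin s (hxu.trans hs.1) (hst.trans htv) hfs
    · -- d ≤ c
      rcases lt_or_ge (f t) d with hlo | hge
      · -- f t < d : find s ∈ [u,t) with f s = d?? use f u = c ≥ d > f t : IVT decreasing on [u,t]
        have : d ∈ Icc (f t) (f u) := ⟨hlo.le, hfu ▸ hcd'⟩
        obtain ⟨s, hs, hfs⟩ := intermediate_value_Icc' ht.1 (hcont'.mono (Icc_subset_Icc le_rfl ht.2)) this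
        have hst : s < t := hs.2.lt_of_ne (by rintro rfl; rw [hfs] at hlo; linarith)
        exact hvmin s (hxu.trans hs.1) (hst.trans htv) hfs
      · -- d ≤ f t so by hmem c < f t : IVT on [t,v] decreasing: f v = d ≤ c < f t
        have hct : c < f t := hmem.2 hge
        have : c ∈ Icc (f v) (f t) := ⟨hfv ▸ hcd', hct.le⟩
        obtain ⟨s, hs, hfs⟩ := intermediate_value_Icc' ht.2 (hcont'.mono (Icc_subset_Icc ht.1 le_rfl)) this
        have hst : t < s := hs.1.lt_of_ne (by rintro rfl; rw [hfs] at hct; linarith)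
        exact humax s (htu.trans hst) hs.2 hfs
  · have := intermediate_value_uIcc (f := f) (a := u) (b := v) (by rw [uIcc_of_le huv.le]; exact hcont')
    rw [uIcc_of_le huv.le, hfu, hfv] at this
    exact this

lemma pullback_s4 {f : ℝ → ℝ} {a b c d : ℝ} (hcont : ContinuousOn f (Icc a b))
    (hcd : c < d) (hc : c ∈ f '' Icc a b) (hd : d ∈ f '' Icc a b) :
    ∃ u v, u < v ∧ Icc u v ⊆ Icc a b ∧ f '' Icc u v = Icc c d ∧ MinProp f c d u v := by
  obtain ⟨x, hx, hfx⟩ := hc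
  obtain ⟨y, hy, hfy⟩ := hd
  rcases lt_trichotomy x y with h | h | h
  · obtain ⟨u, v, huv, hsub, hu, hv, hint, him⟩ :=
      helper h hfx hfy hcd.ne (hcont.mono (Icc_subset_Icc hx.1 hy.2))
    exact ⟨u, v, huv, hsub.trans (Icc_subset_Icc hx.1 hy.2),
      by rw [him, uIcc_of_le hcd.le], Or.inl ⟨hu, hv⟩, hint⟩
  · exact absurd (hfx.symm.trans (h ▸ hfy)) hcd.ne
  · obtain ⟨u, v, huv, hsub, hu, hv, hint, him⟩ :=
      helper h hfy hfx hcd.ne' (hcont.mono (Icc_subset_Icc hy.1 hx.2))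
    refine ⟨u, v, huv, hsub.trans (Icc_subset_Icc hy.1 hx.2),
      by rw [him, uIcc_comm, uIcc_of_le hcd.le], Or.inr ⟨hu, hv⟩, ?_⟩
    intro t ht
    exact ⟨(hint t ht).2, (hint t ht).1⟩

lemma image_Icc_eq {f : ℝ → ℝ} {a b : ℝ} (hab : a ≤ b) (hcont : ContinuousOn f (Icc a b)) :
    ∃ p q, p ≤ q ∧ f '' Icc a b = Icc p q := by
  have h := hcont.image_Icc hab
  refine ⟨_, _, ?_, h⟩
  have hne : (f '' Icc a b).Nonempty := ⟨f a, a, ⟨le_refl _, hab⟩, rfl⟩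
  rw [h] at hne
  exact nonempty_Icc.1 hne

lemma minprop_eq_or_inter {f : ℝ → ℝ} {c d u1 v1 u2 v2 : ℝ} (h1 : MinProp f c d u1 v1)
    (h2 : MinProp f c d u2 v2) (hv1 : u1 < v1) (hv2 : u2 < v2) :
    (u1 = u2 ∧ v1 = v2) ∨ Icc u2 v2 ∩ Icc u1 v1 ⊆ {u1, v1} := by
  by_cases hincl : Icc u2 v2 ∩ Icc u1 v1 ⊆ {u1, v1}
  · exact Or.inr hincl
  · left
    rw [not_subset] at hincl
    obtain ⟨t, ⟨ht2, ht1⟩, htn⟩ := hincl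
    simp only [mem_insert_iff, mem_singleton_iff, not_or] at htn
    have htoo : t ∈ Ioo u1 v1 := ⟨ht1.1.lt_of_ne (Ne.symm htn.1), ht1.2.lt_of_ne htn.2⟩
    have hend1 : ∀ w, f w = c ∨ f w = d → w ∉ Ioo u1 v1 := by
      intro w hw hmem
      rcases hw with hw | hw
      · exact (h1.2 w hmem).1 hw
      · exact (h1.2 w hmem).2 hw
    have hend2 : ∀ w, f w = c ∨ f w = d → w ∉ Ioo u2 v2 := by
      intro w hw hmem
      rcases hw with hw | hw
      · exact (h2.2 w hmem).1 hw
      · exact (h2.2 w hmem).2 hw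
    have hu2cd : f u2 = c ∨ f u2 = d := by rcases h2.1 with ⟨h, _⟩ | ⟨h, _⟩ <;> [exact Or.inl h; exact Or.inr h]
    have hv2cd : f v2 = c ∨ f v2 = d := by rcases h2.1 with ⟨_, h⟩ | ⟨_, h⟩ <;> [exact Or.inr h; exact Or.inl h]
    have hu1cd : f u1 = c ∨ f u1 = d := by rcases h1.1 with ⟨h, _⟩ | ⟨h, _⟩ <;> [exact Or.inl h; exact Or.inr h]
    have hv1cd : f v1 = c ∨ f v1 = d := by rcases h1.1 with ⟨_, h⟩ | ⟨_, h⟩ <;> [exact Or.inr h; exact Or.inl h]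
    have hu21 : u2 ≤ u1 := by
      by_contra hlt
      push_neg at hlt
      exact hend1 u2 hu2cd ⟨hlt, ht2.1.trans_lt htoo.2⟩
    have hv21 : v1 ≤ v2 := by
      by_contra hlt
      push_neg at hlt
      exact hend1 v2 hv2cd ⟨htoo.1.trans_le ht2.2, hlt⟩
    have hu : u1 = u2 := by
      by_contra hne
      exact hend2 u1 hu1cd ⟨hu21.lt_of_ne (fun h => hne h.symm), hv1.trans_le hv21⟩
    have hv : v1 = v2 := by
      by_contra hne
      exact hend2 v1 hv1cd ⟨hu21.trans_lt (hu ▸ hu ▸ hv1), hv21.lt_of_ne hne⟩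
    exact ⟨hu, hv⟩

noncomputable def chainAux {α : Type} (P : ℕ → α → Prop) (base : {p // P 0 p})
    (g : ∀ k, {p // P k p} → {q // P (k + 1) q}) : ∀ k, {p // P k p}
  | 0 => base
  | (k + 1) => g k (chainAux P base g k)

lemma chain_exists {f : ℝ → ℝ} (hf : ContinuousOn f (Icc 0 1)) (D : ℕ → Set ℝ)
    (hIcc : ∀ k, ∃ a b, a ≤ b ∧ D k = Icc a b) (hsub : ∀ k, D k ⊆ Icc 0 1)
    (him : ∀ k, f '' D (k + 1) = D k) {a0 b0 : ℝ} (h0 : a0 < b0) (hD0 : D 0 = Icc a0 b0) :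
    ∃ V : ℕ → ℝ × ℝ, V 0 = (a0, b0) ∧ (∀ k, (V k).1 < (V k).2 ∧ Icc (V k).1 (V k).2 ⊆ D k) ∧
      ∀ k, f '' Icc (V (k + 1)).1 (V (k + 1)).2 = Icc (V k).1 (V k).2 ∧
        MinProp f (V k).1 (V k).2 (V (k + 1)).1 (V (k + 1)).2 := by
  classical
  set P : ℕ → ℝ × ℝ → Prop := fun k p => p.1 < p.2 ∧ Icc p.1 p.2 ⊆ D k with hP
  have step : ∀ k (p : ℝ × ℝ), P k p → ∃ q : ℝ × ℝ, P (k + 1) q ∧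
      f '' Icc q.1 q.2 = Icc p.1 p.2 ∧ MinProp f p.1 p.2 q.1 q.2 := by
    intro k p hp
    obtain ⟨a, b, hab, hDk⟩ := hIcc (k + 1)
    have hcont : ContinuousOn f (Icc a b) := hf.mono (hDk ▸ hsub (k + 1))
    have hmem : ∀ w ∈ Icc p.1 p.2, w ∈ f '' Icc a b := by
      intro w hw
      have : w ∈ D k := hp.2 hw
      rw [← him k, hDk] at this
      exact this
    obtain ⟨u, v, huv, hsubuv, himuv, hmin⟩ := pullback_s4 hcont hp.1
      (hmem p.1 ⟨le_refl _, hp.1.le⟩) (hmem p.2 ⟨hp.1.le, le_refl _⟩)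
    exact ⟨(u, v), ⟨huv, hDk ▸ hsubuv⟩, himuv, hmin⟩
  have base : P 0 (a0, b0) := ⟨h0, by rw [hD0]⟩
  set g : ∀ k, {p // P k p} → {q // P (k + 1) q} :=
    fun k p => ⟨(step k p.1 p.2).choose, (step k p.1 p.2).choose_spec.1⟩ with hg
  set W : ∀ k, {p // P k p} := chainAux P ⟨(a0, b0), base⟩ g with hW
  refine ⟨fun k => (W k).1, rfl, fun k => (W k).2, fun k => ?_⟩
  have hrec : W (k + 1) = g k (W k) := rfl
  simp only []
  rw [hrec]
  exact ⟨(step k (W k).1 (W k).2).choose_spec.2.1, (step k (W k).1 (W k).2).choose_spec.2.2⟩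

lemma forward_dir {f : ℝ → ℝ} (h : SplittingSeq f) : SplittingSeq (f ∘ f) := by
  obtain ⟨l, r, N, S, hl, hsub, hne, hchain, ⟨m, hm⟩, hNinf, hsplit⟩ := h
  have key : ∀ p : ℕ, ({k | 2 * k + p ∈ N}).Infinite → SplittingSeq (f ∘ f) := by
    intro p hp
    refine ⟨fun n => l (2 * n + p), fun n => r (2 * n + p), {k | 2 * k + p ∈ N},
      fun k => S (2 * k + p), fun n => hl _, fun n => hsub _, fun n => hne _, ?_, ?_, hp, ?_⟩
    · intro n
      have e : 2 * (n + 1) + p = (2 * n + p + 1) + 1 := by ring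
      show f ∘ f '' Icc (l (2 * (n + 1) + p)) (r (2 * (n + 1) + p)) = _
      rw [e, Set.image_comp, hchain (2 * n + p + 1), hchain (2 * n + p)]
    · exact ⟨m, fun n hn => hm (2 * n + p) (by omega)⟩
    · intro k hk
      obtain ⟨h1, h2, h3, h4⟩ := hsplit (2 * k + p) hk
      exact ⟨h1, h2, h3, by rw [Set.image_comp, Set.image_comp, h4]⟩
  have hsplitpar : ({k | 2 * k + 0 ∈ N}).Infinite ∨ ({k | 2 * k + 1 ∈ N}).Infinite := by
    by_contra hcon
    push_neg at hcon
    apply hNinf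
    have hsubN : N ⊆ (fun k => 2 * k + 0) '' {k | 2 * k + 0 ∈ N} ∪
        (fun k => 2 * k + 1) '' {k | 2 * k + 1 ∈ N} := by
      intro n hn
      rcases Nat.even_or_odd n with ⟨k, hk⟩ | ⟨k, hk⟩
      · left
        have e : 2 * k + 0 = n := by omega
        exact ⟨k, by rw [mem_setOf_eq, e]; exact hn, e⟩
      · right
        have e : 2 * k + 1 = n := by omega
        exact ⟨k, by rw [mem_setOf_eq, e]; exact hn, e⟩
    exact Set.Finite.subset ((hcon.1.image _).union (hcon.2.image _)) hsubN
  rcases hsplitpar with hp | hp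
  · exact key 0 hp
  · exact key 1 hp

def SpP (f : ℝ → ℝ) (p : ℝ × ℝ) : Prop :=
  ∃ s : Set ℝ, (∃ u v : ℝ, u < v ∧ s = Icc u v) ∧ s ⊆ Icc 0 1 ∧
    s ∩ Icc p.1 p.2 ⊆ {p.1, p.2} ∧ f '' s = f '' Icc p.1 p.2

lemma backward_dir {f : ℝ → ℝ} (hf : ContinuousOn f (Icc 0 1))
    (hsurj : f '' Icc 0 1 = Icc 0 1) (h : SplittingSeq (f ∘ f)) : SplittingSeq f := by
  classical
  obtain ⟨l, r, N, S, hl, hTsub, hTne, hchain, ⟨m, hm⟩, hNinf, hsplit⟩ := h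
  set M := m + 1 with hM
  set D : ℕ → Set ℝ := fun k =>
    if k % 2 = 0 then Icc (l (k / 2 + M)) (r (k / 2 + M))
    else f '' Icc (l (k / 2 + M + 1)) (r (k / 2 + M + 1)) with hD
  have hDeven : ∀ n, D (2 * n) = Icc (l (n + M)) (r (n + M)) := by
    intro n
    have h1 : (2 * n) % 2 = 0 := by omega
    have h2 : (2 * n) / 2 = n := by omega
    simp [hD, h1, h2]
  have hDodd : ∀ n, D (2 * n + 1) = f '' Icc (l (n + M + 1)) (r (n + M + 1)) := by
    intro n
    have h1 : (2 * n + 1) % 2 = 1 := by omega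
    have h2 : (2 * n + 1) / 2 = n := by omega
    simp [hD, h1, h2]
  have hgchain : ∀ n, f '' (f '' Icc (l (n + 1)) (r (n + 1))) = Icc (l n) (r n) := by
    intro n
    rw [← Set.image_comp]
    exact hchain n
  have hDIcc : ∀ k, ∃ a b, a ≤ b ∧ D k = Icc a b := by
    intro k
    rcases Nat.even_or_odd k with ⟨n, hn⟩ | ⟨n, hn⟩
    · exact ⟨l (n + M), r (n + M), hl _, by rw [show k = 2 * n by omega]; exact hDeven n⟩
    · obtain ⟨p, q, hpq, heq⟩ := image_Icc_eq (hl (n + M + 1)) (hf.mono (hTsub _))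
      exact ⟨p, q, hpq, by rw [show k = 2 * n + 1 by omega, hDodd n]; exact heq⟩
  have hDsub : ∀ k, D k ⊆ Icc 0 1 := by
    intro k
    rcases Nat.even_or_odd k with ⟨n, hn⟩ | ⟨n, hn⟩
    · rw [show k = 2 * n by omega, hDeven n]; exact hTsub _
    · rw [show k = 2 * n + 1 by omega, hDodd n]
      exact (Set.image_mono (hTsub _)).trans hsurj.subset
  have hDim : ∀ k, f '' D (k + 1) = D k := by
    intro k
    rcases Nat.even_or_odd k with ⟨n, hn⟩ | ⟨n, hn⟩
    · rw [show k + 1 = 2 * n + 1 by omega, hDodd n, show k = 2 * n by omega, hDeven n]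
      exact hgchain (n + M)
    · rw [show k + 1 = 2 * (n + 1) by omega, hDeven (n + 1), show k = 2 * n + 1 by omega,
        hDodd n, show n + 1 + M = n + M + 1 by omega]
  have hDne : ∀ k, D k ≠ Icc 0 1 := by
    intro k
    induction k with
    | zero =>
      have h0 : D 0 = Icc (l M) (r M) := by simpa using hDeven 0
      rw [h0]
      exact hTne M
    | succ k ih =>
      intro hcon
      apply ih
      rw [← hDim k, hcon, hsurj]
  have h0eq : D 0 = Icc (l M) (r M) := by simpa using hDeven 0
  have h0lt : l M < r M := hm M (by omega)
  obtain ⟨V, hV0, hVk, hVchain⟩ := chain_exists hf D hDIcc hDsub hDim h0lt h0eq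
  -- the key claim
  have claim : ∀ n : ℕ, (n + M + 1) ∈ N → SpP f (V (2 * n + 1)) ∨ SpP f (V (2 * n + 2)) := by
    intro n hj
    obtain ⟨⟨a, b, hab, hSj⟩, hS01, hSinter, hSim⟩ := hsplit _ hj
    have hS01' : Icc a b ⊆ Icc 0 1 := hSj ▸ hS01
    have hgS : f '' (f '' Icc a b) = Icc (l (n + M)) (r (n + M)) := by
      rw [← hSj, ← Set.image_comp, hSim]
      exact hchain (n + M)
    obtain ⟨p, q, hpq, hB⟩ := image_Icc_eq hab.le (hf.mono hS01')
    have hB01 : Icc p q ⊆ Icc 0 1 := by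
      rw [← hB]; exact (Set.image_mono hS01').trans hsurj.subset
    have hfB : f '' Icc p q = Icc (l (n + M)) (r (n + M)) := by rw [← hB]; exact hgS
    have hsub0 : Icc (V (2 * n)).1 (V (2 * n)).2 ⊆ f '' Icc p q := by
      rw [hfB, ← hDeven n]; exact (hVk (2 * n)).2
    obtain ⟨u1, v1, huv1, hsub1, him1, hmin1⟩ := pullback_s4 (hf.mono hB01) (hVk (2 * n)).1
      (hsub0 ⟨le_refl _, (hVk (2 * n)).1.le⟩) (hsub0 ⟨(hVk (2 * n)).1.le, le_refl _⟩)
    rcases minprop_eq_or_inter (hVchain (2 * n)).2 hmin1 (hVk (2 * n + 1)).1 huv1 with heq | hdisj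
    · -- V (2n+1) coincides with [u1,v1] ⊆ f '' S j ; go one level up
      have hsubV1 : Icc (V (2 * n + 1)).1 (V (2 * n + 1)).2 ⊆ f '' Icc a b := by
        rw [heq.1, heq.2, hB]; exact hsub1
      obtain ⟨u2, v2, huv2, hsub2, him2, hmin2⟩ := pullback_s4 (hf.mono hS01') (hVk (2 * n + 1)).1
        (hsubV1 ⟨le_refl _, (hVk (2 * n + 1)).1.le⟩) (hsubV1 ⟨(hVk (2 * n + 1)).1.le, le_refl _⟩)
      rcases minprop_eq_or_inter (hVchain (2 * n + 1)).2 hmin2 (hVk (2 * n + 2)).1 huv2 with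
        heq2 | hdisj2
      · -- impossible: V (2n+2) inside both S j and T j
        exfalso
        have hIccS : Icc (V (2 * n + 2)).1 (V (2 * n + 2)).2 ⊆ Icc a b := by
          rw [heq2.1, heq2.2]; exact hsub2
        have hIccT : Icc (V (2 * n + 2)).1 (V (2 * n + 2)).2 ⊆
            Icc (l (n + M + 1)) (r (n + M + 1)) := by
          have hsb := (hVk (2 * n + 2)).2
          rw [show 2 * n + 2 = 2 * (n + 1) by ring, hDeven (n + 1),
            show n + 1 + M = n + M + 1 by omega] at hsb
          exact hsb
        have hget : ∀ t ∈ Icc (V (2 * n + 2)).1 (V (2 * n + 2)).2,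
            t ∈ ({l (n + M + 1), r (n + M + 1)} : Set ℝ) := by
          intro t ht
          exact hSinter ⟨by rw [hSj]; exact hIccS ht, hIccT ht⟩
        have hwz : (V (2 * n + 2)).1 < (V (2 * n + 2)).2 := (hVk (2 * n + 2)).1
        have h1 := hget (V (2 * n + 2)).1 ⟨le_refl _, hwz.le⟩
        have h2 := hget (V (2 * n + 2)).2 ⟨hwz.le, le_refl _⟩
        have h3 := hget (((V (2 * n + 2)).1 + (V (2 * n + 2)).2) / 2)
          ⟨by linarith, by linarith⟩
        simp only [mem_insert_iff, mem_singleton_iff] at h1 h2 h3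
        rcases h1 with h1 | h1 <;> rcases h2 with h2 | h2 <;> rcases h3 with h3 | h3 <;> linarith
      · right
        exact ⟨Icc u2 v2, ⟨u2, v2, huv2, rfl⟩, hsub2.trans hS01', hdisj2,
          by rw [him2]; exact ((hVchain (2 * n + 1)).1).symm⟩
    · left
      exact ⟨Icc u1 v1, ⟨u1, v1, huv1, rfl⟩, hsub1.trans hB01, hdisj,
        by rw [him1]; exact ((hVchain (2 * n)).1).symm⟩
  have hinf : ({k | SpP f (V k)}).Infinite := by
    apply Set.infinite_of_forall_exists_gt
    intro K
    obtain ⟨j, hjN, hjK⟩ := hNinf.exists_gt (M + K)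
    have hj' : (j - M - 1) + M + 1 = j := by omega
    rcases claim (j - M - 1) (by rw [hj']; exact hjN) with hsp | hsp
    · exact ⟨2 * (j - M - 1) + 1, hsp, by omega⟩
    · exact ⟨2 * (j - M - 1) + 2, hsp, by omega⟩
  refine ⟨fun k => (V k).1, fun k => (V k).2, {k | SpP f (V k)},
    fun k => if h : SpP f (V k) then h.choose else ∅,
    fun k => ((hVk k).1).le, fun k => ((hVk k).2).trans (hDsub k), ?_,
    fun k => (hVchain k).1, ⟨0, fun n _ => (hVk n).1⟩, hinf, ?_⟩
  · intro k hcon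
    exact hDne k (subset_antisymm (hDsub k) (hcon ▸ (hVk k).2))
  · intro k hk
    have hk' : SpP f (V k) := hk
    simp only [dif_pos hk']
    exact hk'.choose_spec

theorem stmt_4 (f : ℝ → ℝ) (hf : ContinuousOn f (Icc 0 1))
    (hsurj : f '' Icc 0 1 = Icc 0 1) :
    SplittingSeq f ↔ SplittingSeq (f ∘ f) :=
  ⟨forward_dir, backward_dir hf hsurj⟩
end

section
/- Let f : [0,1] → [0,1] be continuous, surjective, and not admitting a splitting sequence. Let a = max f⁻¹(0) and b = min f⁻¹(1), and suppose a < b. Then the maximum fixed point d of f is the only fixed point of f in [b, 1]. -/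
open Set Filter Topology

lemma cover_lemma {f : ℝ → ℝ} {p q c e : ℝ} (hf : ContinuousOn f (Icc p q))
    (hce : c ≤ e) (hsub : Icc c e ⊆ f '' Icc p q) :
    ∃ u v, u ≤ v ∧ Icc u v ⊆ Icc p q ∧ f '' Icc u v = Icc c e := by
  obtain ⟨α, hα, hfα⟩ := hsub (left_mem_Icc.2 hce)
  obtain ⟨β, hβ, hfβ⟩ := hsub (right_mem_Icc.2 hce)
  rcases le_total α β with hαβ | hβα
  · set A := {t | t ∈ Icc α β ∧ f t = c} with hA
    have hAcl : IsClosed A := by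
      have := (hf.mono (Icc_subset_Icc hα.1 hβ.2)).preimage_isClosed_of_isClosed
        isClosed_Icc (isClosed_singleton (x := c))
      simpa [A, Set.inter_def] using this
    have hAcp : IsCompact A := isCompact_Icc.of_isClosed_subset hAcl (fun t ht => ht.1)
    obtain ⟨u, huA, huub⟩ := hAcp.exists_isGreatest ⟨α, left_mem_Icc.2 hαβ, hfα⟩
    set B := {t | t ∈ Icc u β ∧ f t = e} with hB
    have hBcl : IsClosed B := by
      have := (hf.mono (Icc_subset_Icc (le_trans hα.1 huA.1.1) hβ.2)).preimage_isClosed_of_isClosed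
        isClosed_Icc (isClosed_singleton (x := e))
      simpa [B, Set.inter_def] using this
    have hBcp : IsCompact B := isCompact_Icc.of_isClosed_subset hBcl (fun t ht => ht.1)
    obtain ⟨v, hvB, hvlb⟩ := hBcp.exists_isLeast ⟨β, right_mem_Icc.2 huA.1.2, hfβ⟩
    have huv : u ≤ v := hvB.1.1
    have hsub' : Icc u v ⊆ Icc p q :=
      Icc_subset_Icc (le_trans hα.1 huA.1.1) (le_trans hvB.1.2 hβ.2)
    refine ⟨u, v, huv, hsub', ?_⟩
    have hfc : ContinuousOn f (Icc u v) := hf.mono hsub'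
    apply Subset.antisymm
    · rintro _ ⟨t, ht, rfl⟩
      constructor
      · by_contra h
        push_neg at h
        have hcm : c ∈ Icc (f t) (f v) := ⟨h.le, by rw [hvB.2]; exact hce⟩
        obtain ⟨s, hs, hfs⟩ :=
          intermediate_value_Icc ht.2 (hfc.mono (Icc_subset_Icc ht.1 le_rfl)) hcm
        have hsu : s ≤ u := huub ⟨⟨le_trans huA.1.1 (ht.1.trans hs.1), hs.2.trans hvB.1.2⟩, hfs⟩
        have hst : s = t := le_antisymm (hsu.trans ht.1) hs.1
        exact absurd (hst ▸ hfs) h.ne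
      · by_contra h
        push_neg at h
        have hem : e ∈ Icc (f u) (f t) := ⟨by rw [huA.2]; exact hce, h.le⟩
        obtain ⟨s, hs, hfs⟩ :=
          intermediate_value_Icc ht.1 (hfc.mono (Icc_subset_Icc le_rfl ht.2)) hem
        have hvs : v ≤ s := hvlb ⟨⟨hs.1, (hs.2.trans ht.2).trans hvB.1.2⟩, hfs⟩
        have hst : s = t := le_antisymm hs.2 (ht.2.trans hvs)
        exact absurd (hst ▸ hfs) h.ne'
    · have : Icc (f u) (f v) ⊆ f '' Icc u v := intermediate_value_Icc huv hfc
      rwa [huA.2, hvB.2] at this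
  · set A := {t | t ∈ Icc β α ∧ f t = c} with hA
    have hAcl : IsClosed A := by
      have := (hf.mono (Icc_subset_Icc hβ.1 hα.2)).preimage_isClosed_of_isClosed
        isClosed_Icc (isClosed_singleton (x := c))
      simpa [A, Set.inter_def] using this
    have hAcp : IsCompact A := isCompact_Icc.of_isClosed_subset hAcl (fun t ht => ht.1)
    obtain ⟨u, huA, hulb⟩ := hAcp.exists_isLeast ⟨α, right_mem_Icc.2 hβα, hfα⟩
    set B := {t | t ∈ Icc β u ∧ f t = e} with hB
    have hBcl : IsClosed B := by
      have := (hf.mono (Icc_subset_Icc hβ.1 (le_trans huA.1.2 hα.2))).preimage_isClosed_of_isClosed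
        isClosed_Icc (isClosed_singleton (x := e))
      simpa [B, Set.inter_def] using this
    have hBcp : IsCompact B := isCompact_Icc.of_isClosed_subset hBcl (fun t ht => ht.1)
    obtain ⟨v, hvB, hvub⟩ := hBcp.exists_isGreatest ⟨β, left_mem_Icc.2 huA.1.1, hfβ⟩
    have hvu : v ≤ u := hvB.1.2
    have hsub' : Icc v u ⊆ Icc p q :=
      Icc_subset_Icc (le_trans hβ.1 hvB.1.1) (le_trans huA.1.2 hα.2)
    refine ⟨v, u, hvu, hsub', ?_⟩
    have hfc : ContinuousOn f (Icc v u) := hf.mono hsub'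
    apply Subset.antisymm
    · rintro _ ⟨t, ht, rfl⟩
      constructor
      · by_contra h
        push_neg at h
        have hcm : c ∈ Icc (f t) (f v) := ⟨h.le, by rw [hvB.2]; exact hce⟩
        obtain ⟨s, hs, hfs⟩ :=
          intermediate_value_Icc' ht.1 (hfc.mono (Icc_subset_Icc le_rfl ht.2)) hcm
        have hus : u ≤ s := hulb ⟨⟨hvB.1.1.trans hs.1, (hs.2.trans ht.2).trans huA.1.2⟩, hfs⟩
        have hst : s = t := le_antisymm hs.2 (ht.2.trans hus)
        exact absurd (hst ▸ hfs) h.ne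
      · by_contra h
        push_neg at h
        have hem : e ∈ Icc (f u) (f t) := ⟨by rw [huA.2]; exact hce, h.le⟩
        obtain ⟨s, hs, hfs⟩ :=
          intermediate_value_Icc' ht.2 (hfc.mono (Icc_subset_Icc ht.1 le_rfl)) hem
        have hsv : s ≤ v := hvub ⟨⟨hvB.1.1.trans (ht.1.trans hs.1), hs.2⟩, hfs⟩
        have hst : s = t := le_antisymm (hsv.trans ht.1) hs.1
        exact absurd (hst ▸ hfs) h.ne'
    · have : Icc (f u) (f v) ⊆ f '' Icc v u := intermediate_value_Icc' hvu hfc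
      rwa [huA.2, hvB.2] at this


lemma chain_lemma {α : Type*} (P : α → Prop) (R : α → α → Prop) (p0 : α) (h0 : P p0)
    (step : ∀ p, P p → ∃ q, P q ∧ R q p) :
    ∃ T : ℕ → α, T 0 = p0 ∧ (∀ n, P (T n)) ∧ ∀ n, R (T (n+1)) (T n) := by
  choose g h1 h2 using step
  let T : ℕ → {p : α // P p} := fun n => Nat.rec ⟨p0, h0⟩ (fun _ ih => ⟨g ih.1 ih.2, h1 _ _⟩) n
  exact ⟨fun n => (T n).1, rfl, fun n => (T n).2, fun n => h2 (T n).1 (T n).2⟩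

lemma nondeg_lemma {f : ℝ → ℝ} {u v c e : ℝ} (huv : u ≤ v) (hce : c < e)
    (h : f '' Icc u v = Icc c e) : u < v := by
  rcases huv.lt_or_eq with h' | h'
  · exact h'
  · exfalso
    subst h'
    rw [Icc_self, image_singleton] at h
    have hc : c ∈ ({f u} : Set ℝ) := h ▸ left_mem_Icc.2 hce.le
    have he : e ∈ ({f u} : Set ℝ) := h ▸ right_mem_Icc.2 hce.le
    rw [mem_singleton_iff] at hc he
    exact hce.ne (hc.trans he.symm)

theorem stmt_5 (f : ℝ → ℝ) (hf : ContinuousOn f (Icc 0 1))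
    (hsurj : f '' Icc 0 1 = Icc 0 1) (hns : ¬ SplittingSeq f)
    (a b d : ℝ)
    (ha : IsGreatest {x ∈ Icc (0:ℝ) 1 | f x = 0} a)
    (hb : IsLeast {x ∈ Icc (0:ℝ) 1 | f x = 1} b)
    (hab : a < b)
    (hd : IsGreatest {x ∈ Icc (0:ℝ) 1 | f x = x} d) :
    ∀ x ∈ Icc b 1, f x = x → x = d := by
  intro x hx hfx
  by_contra hxd0
  obtain ⟨⟨⟨ha0, ha1⟩, hfa⟩, haub⟩ := ha
  obtain ⟨⟨⟨hb0, hb1⟩, hfb⟩, hblb⟩ := hb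
  obtain ⟨⟨⟨hd0, hd1⟩, hfd⟩, hdub⟩ := hd
  have hbx : b ≤ x := hx.1
  have hx1 : x ≤ 1 := hx.2
  have hx0 : (0:ℝ) ≤ x := hb0.trans hbx
  have hxd : x < d := lt_of_le_of_ne (hdub ⟨⟨hx0, hx1⟩, hfx⟩) hxd0
  have hxpos : (0:ℝ) < x := lt_of_le_of_lt ha0 (lt_of_lt_of_le hab hbx)
  -- the invariant predicate
  set P : ℝ × ℝ → Prop := fun pr =>
    x ≤ pr.1 ∧ pr.2 ≤ d ∧ pr.1 < pr.2 ∧ Icc pr.1 pr.2 ⊆ f '' Icc pr.1 pr.2 with hPdef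
  have hP0 : P (x, d) := by
    refine ⟨le_refl _, le_refl _, hxd, ?_⟩
    have := intermediate_value_Icc hxd.le (hf.mono (Icc_subset_Icc hx0 hd1))
    rwa [hfx, hfd] at this
  have step : ∀ pr, P pr → ∃ qr, P qr ∧ f '' Icc qr.1 qr.2 = Icc pr.1 pr.2 := by
    rintro ⟨l, r⟩ ⟨h1, h2, h3, h4⟩
    have hsub01 : Icc l r ⊆ Icc (0:ℝ) 1 := Icc_subset_Icc (hx0.trans h1) (h2.trans hd1)
    obtain ⟨u, v, huv, hsubuv, himg⟩ := cover_lemma (hf.mono hsub01) h3.le h4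
    have huv' : u < v := nondeg_lemma huv h3 himg
    have hlu : l ≤ u := (hsubuv (left_mem_Icc.2 huv)).1
    have hvr : v ≤ r := (hsubuv (right_mem_Icc.2 huv)).2
    exact ⟨(u, v), ⟨h1.trans hlu, hvr.trans h2, huv', himg ▸ hsubuv⟩, himg⟩
  obtain ⟨T, hT0, hTP, hTR⟩ := chain_lemma P _ (x, d) hP0 step
  set l : ℕ → ℝ := fun n => (T n).1 with hl
  set r : ℕ → ℝ := fun n => (T n).2 with hr
  have hsub01 : ∀ n, Icc (l n) (r n) ⊆ Icc (0:ℝ) 1 := fun n =>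
    Icc_subset_Icc (hx0.trans (hTP n).1) ((hTP n).2.1.trans hd1)
  -- choose splitting intervals inside [a, b]
  have hSex : ∀ m : ℕ, ∃ u v, u ≤ v ∧ Icc u v ⊆ Icc a b ∧ f '' Icc u v = Icc (l m) (r m) := by
    intro m
    refine cover_lemma (hf.mono (Icc_subset_Icc ha0 hb1)) (hTP m).2.2.1.le ?_
    have h01 : Icc (0:ℝ) 1 ⊆ f '' Icc a b := by
      have := intermediate_value_Icc hab.le (hf.mono (Icc_subset_Icc ha0 hb1))
      rwa [hfa, hfb] at this
    exact (hsub01 m).trans h01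
  choose u v huv hsubS himgS using hSex
  have huv' : ∀ m, u m < v m := fun m => nondeg_lemma (huv m) (hTP m).2.2.1 (himgS m)
  apply hns
  refine ⟨l, r, {n | 1 ≤ n}, fun n => Icc (u (n - 1)) (v (n - 1)),
    fun n => (hTP n).2.2.1.le, hsub01, ?_, hTR, ⟨0, fun n _ => (hTP n).2.2.1⟩,
    Set.Ici_infinite 1, ?_⟩
  · intro n h
    have h0 : (0:ℝ) ∈ Icc (l n) (r n) := h ▸ left_mem_Icc.2 zero_le_one
    exact absurd ((hTP n).1.trans h0.1) (not_le.2 hxpos)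
  · intro n hn
    obtain ⟨m, rfl⟩ : ∃ m, n = m + 1 := ⟨n - 1, (Nat.succ_pred_eq_of_pos hn).symm⟩
    simp only [Nat.add_sub_cancel]
    refine ⟨⟨u m, v m, huv' m, rfl⟩, (hsubS m).trans (Icc_subset_Icc ha0 hb1), ?_, ?_⟩
    · intro y hy
      have hyb : y ≤ b := ((hsubS m) hy.1).2
      have hly : l (m + 1) ≤ y := hy.2.1
      have hxl : x ≤ l (m + 1) := (hTP (m + 1)).1
      have hyl : y = l (m + 1) := le_antisymm (hyb.trans (hbx.trans hxl)) hly
      exact mem_insert_iff.2 (Or.inl hyl)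
    · rw [himgS m, hTR m]
end

section
/- Let f : [0,1] → [0,1] be continuous, surjective, and not admitting a splitting sequence. Let a = max f⁻¹(0) and b = min f⁻¹(1), and suppose a < b. Then the restriction of f to [b, 1] admits no 2-cycle: there are no p, q ∈ [b,1] with p ≠ q, f(p) = q, and f(q) = p. -/
open Set Filter Topology

/-- Key lemma (increasing case): if `f x = u`, `f y = v` with `x ≤ y`, `u ≤ v`, then some
closed subinterval of `[c,d]` has image exactly `[u,v]`. -/
lemma lemA1 {f : ℝ → ℝ} {c d x y u v : ℝ} (hf : ContinuousOn f (Icc c d))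
    (hx : x ∈ Icc c d) (hy : y ∈ Icc c d) (hxy : x ≤ y)
    (hfx : f x = u) (hfy : f y = v) (huv : u ≤ v) :
    ∃ s t : ℝ, s ≤ t ∧ Icc s t ⊆ Icc c d ∧ f '' Icc s t = Icc u v := by
  have hsubxy : Icc x y ⊆ Icc c d := Icc_subset_Icc hx.1 hy.2
  set A : Set ℝ := Icc x y ∩ f ⁻¹' {v} with hA
  have hAne : A.Nonempty := ⟨y, ⟨hxy, le_refl y⟩, hfy⟩
  have hAclosed : IsClosed A :=
    (hf.mono hsubxy).preimage_isClosed_of_isClosed isClosed_Icc isClosed_singleton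
  have hAbdd : BddBelow A := ⟨x, fun z hz => hz.1.1⟩
  set t := sInf A with ht
  have htA : t ∈ A := hAclosed.csInf_mem hAne hAbdd
  have hxt : x ≤ t := htA.1.1
  have hty : t ≤ y := htA.1.2
  have hft : f t = v := htA.2
  set B : Set ℝ := Icc x t ∩ f ⁻¹' {u} with hB
  have hBne : B.Nonempty := ⟨x, ⟨le_refl x, hxt⟩, hfx⟩
  have hsubxt : Icc x t ⊆ Icc c d := Icc_subset_Icc hx.1 (hty.trans hy.2)
  have hBclosed : IsClosed B :=
    (hf.mono hsubxt).preimage_isClosed_of_isClosed isClosed_Icc isClosed_singleton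
  have hBbdd : BddAbove B := ⟨t, fun z hz => hz.1.2⟩
  set s := sSup B with hs
  have hsB : s ∈ B := hBclosed.csSup_mem hBne hBbdd
  have hxs : x ≤ s := hsB.1.1
  have hst : s ≤ t := hsB.1.2
  have hfs : f s = u := hsB.2
  have hsubst : Icc s t ⊆ Icc c d := Icc_subset_Icc (hx.1.trans hxs) (hty.trans hy.2)
  refine ⟨s, t, hst, hsubst, ?_⟩
  apply Subset.antisymm
  · rintro w ⟨z, hz, rfl⟩
    constructor
    · by_contra h
      push_neg at h
      have hsz : s < z := by
        rcases eq_or_lt_of_le hz.1 with h' | h'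
        · exact absurd (h' ▸ hfs) (by rw [← h'] at h; linarith)
        · exact h'
      have : u ∈ Icc (f z) (f t) := ⟨h.le, hft ▸ huv⟩
      obtain ⟨w, hw, hfw⟩ := intermediate_value_Icc hz.2
        (hf.mono (Icc_subset_Icc (hsubst hz).1 (hty.trans hy.2))) this
      have hwB : w ∈ B := ⟨⟨hxs.trans (hsz.le.trans hw.1), hw.2⟩, hfw⟩
      have : w ≤ s := le_csSup hBbdd hwB
      linarith [hw.1]
    · by_contra h
      push_neg at h
      have hzt : z < t := by
        rcases eq_or_lt_of_le hz.2 with h' | h'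
        · rw [h', hft] at h; linarith
        · exact h'
      have : v ∈ Icc (f s) (f z) := ⟨hfs ▸ huv, h.le⟩
      obtain ⟨w, hw, hfw⟩ := intermediate_value_Icc hz.1
        (hf.mono (Icc_subset_Icc (hx.1.trans hxs) (hsubst hz).2)) this
      have hwA : w ∈ A := ⟨⟨hxs.trans hw.1, (hw.2.trans hz.2).trans hty⟩, hfw⟩
      have : t ≤ w := csInf_le hAbdd hwA
      linarith [hw.2, hzt]
  · have := intermediate_value_Icc hst (hf.mono hsubst)
    rw [hfs, hft] at this
    exact this

/-- Key lemma: if `f x = u`, `f y = v` with `u ≤ v`, then some closed subinterval of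
`[c,d]` has image exactly `[u,v]`. -/
lemma lemA {f : ℝ → ℝ} {c d x y u v : ℝ} (hf : ContinuousOn f (Icc c d))
    (hx : x ∈ Icc c d) (hy : y ∈ Icc c d)
    (hfx : f x = u) (hfy : f y = v) (huv : u ≤ v) :
    ∃ s t : ℝ, s ≤ t ∧ Icc s t ⊆ Icc c d ∧ f '' Icc s t = Icc u v := by
  rcases le_total x y with h | h
  · exact lemA1 hf hx hy h hfx hfy huv
  · -- use the reflection g z = f (-z)
    have hg : ContinuousOn (fun z => f (-z)) (Icc (-d) (-c)) := by
      apply hf.comp (continuousOn_neg)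
      intro z hz
      exact ⟨by linarith [hz.2], by linarith [hz.1]⟩
    have hx' : -x ∈ Icc (-d) (-c) := ⟨by linarith [hx.2], by linarith [hx.1]⟩
    have hy' : -y ∈ Icc (-d) (-c) := ⟨by linarith [hy.2], by linarith [hy.1]⟩
    obtain ⟨s, t, hst, hsub, himg⟩ := lemA1 hg hx' hy' (by linarith)
      (by simpa using hfx) (by simpa using hfy) huv
    refine ⟨-t, -s, by linarith, ?_, ?_⟩
    · intro z hz
      have : -z ∈ Icc (-d) (-c) := hsub ⟨by linarith [hz.2], by linarith [hz.1]⟩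
      exact ⟨by linarith [this.2], by linarith [this.1]⟩
    · rw [← himg]
      ext w
      constructor
      · rintro ⟨z, hz, rfl⟩
        exact ⟨-z, ⟨by linarith [hz.2], by linarith [hz.1]⟩, by simp⟩
      · rintro ⟨z, hz, rfl⟩
        exact ⟨-z, ⟨by linarith [hz.2], by linarith [hz.1]⟩, rfl⟩

lemma buildSeq {f : ℝ → ℝ} (hf : ContinuousOn f (Icc 0 1))
    {a b p q : ℝ} (ha0 : 0 ≤ a) (hab : a < b) (hb1 : b ≤ 1)
    (hfa : f a = 0) (hfb : f b = 1) (hbp : b ≤ p) (hpq : p < q) (hq1 : q ≤ 1)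
    (hfp : f p = q) (hfq : f q = p) : SplittingSeq f := by
  have hb0 : 0 < b := lt_of_le_of_lt ha0 hab
  have hp0 : 0 < p := lt_of_lt_of_le hb0 hbp
  have hpq01 : Icc p q ⊆ Icc 0 1 := Icc_subset_Icc hp0.le hq1
  have hfcpq : ContinuousOn f (Icc p q) := hf.mono hpq01
  -- f '' Icc p q ⊇ Icc p q
  have himg : Icc p q ⊆ f '' Icc p q := by
    have := intermediate_value_Icc' hpq.le hfcpq
    rw [hfq, hfp] at this
    exact this
  -- step function
  have hstep : ∀ x : ℝ × ℝ, ∃ y : ℝ × ℝ,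
      p ≤ x.1 → x.1 < x.2 → x.2 ≤ q →
      p ≤ y.1 ∧ y.1 < y.2 ∧ y.2 ≤ q ∧ f '' Icc y.1 y.2 = Icc x.1 x.2 := by
    intro x
    by_cases h : p ≤ x.1 ∧ x.1 < x.2 ∧ x.2 ≤ q
    · obtain ⟨h1, h2, h3⟩ := h
      obtain ⟨x', hx', hfx'⟩ := himg ⟨h1, h2.le.trans h3⟩
      obtain ⟨y', hy', hfy'⟩ := himg ⟨h1.trans h2.le, h3⟩
      obtain ⟨s, t, hst, hsub, him⟩ := lemA hfcpq hx' hy' hfx' hfy' h2.le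
      have hslt : s < t := by
        rcases eq_or_lt_of_le hst with h' | h'
        · exfalso
          have h1' : x.1 ∈ f '' Icc s t := him ▸ (⟨le_refl _, h2.le⟩ : x.1 ∈ Icc x.1 x.2)
          have h2' : x.2 ∈ f '' Icc s t := him ▸ (⟨h2.le, le_refl _⟩ : x.2 ∈ Icc x.1 x.2)
          rw [← h'] at h1' h2'
          simp only [Icc_self, image_singleton, mem_singleton_iff] at h1' h2'
          rw [← h1'] at h2'
          linarith
        · exact h'
      exact ⟨(s, t), fun _ _ _ => ⟨(hsub ⟨le_refl s, hst⟩).1, hslt,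
        (hsub ⟨hst, le_refl t⟩).2, him⟩⟩
    · exact ⟨x, fun h1 h2 h3 => absurd ⟨h1, h2, h3⟩ h⟩
  choose step hstep using hstep
  set T : ℕ → ℝ × ℝ := fun n => Nat.rec (p, q) (fun _ ih => step ih) n with hT
  have hT0 : T 0 = (p, q) := rfl
  have hTs : ∀ n, T (n + 1) = step (T n) := fun n => rfl
  have inv : ∀ n, p ≤ (T n).1 ∧ (T n).1 < (T n).2 ∧ (T n).2 ≤ q := by
    intro n
    induction n with
    | zero => exact ⟨le_refl p, hpq, le_refl q⟩
    | succ n ih =>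
      rw [hTs]
      obtain ⟨h1, h2, h3, _⟩ := hstep (T n) ih.1 ih.2.1 ih.2.2
      exact ⟨h1, h2, h3⟩
  have img : ∀ n, f '' Icc (T (n+1)).1 (T (n+1)).2 = Icc (T n).1 (T n).2 := by
    intro n
    rw [hTs]
    exact (hstep (T n) (inv n).1 (inv n).2.1 (inv n).2.2).2.2.2
  -- construct the splitting intervals
  have hab01 : Icc a b ⊆ Icc 0 1 := Icc_subset_Icc ha0 hb1
  have himgab : Icc 0 1 ⊆ f '' Icc a b := by
    have := intermediate_value_Icc hab.le (hf.mono hab01)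
    rw [hfa, hfb] at this
    exact this
  have hS : ∀ m : ℕ, ∃ st : ℝ × ℝ, st.1 < st.2 ∧ Icc st.1 st.2 ⊆ Icc a b ∧
      f '' Icc st.1 st.2 = Icc (T m).1 (T m).2 := by
    intro m
    obtain ⟨h1, h2, h3⟩ := inv m
    have hm1 : (T m).1 ∈ Icc (0:ℝ) 1 := ⟨hp0.le.trans h1, (h2.le.trans h3).trans hq1⟩
    have hm2 : (T m).2 ∈ Icc (0:ℝ) 1 := ⟨hm1.1.trans h2.le, h3.trans hq1⟩
    obtain ⟨x', hx', hfx'⟩ := himgab hm1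
    obtain ⟨y', hy', hfy'⟩ := himgab hm2
    obtain ⟨s, t, hst, hsub, him⟩ := lemA (hf.mono hab01) hx' hy' hfx' hfy' h2.le
    have hslt : s < t := by
      rcases eq_or_lt_of_le hst with h' | h'
      · exfalso
        have h1' : (T m).1 ∈ f '' Icc s t := him ▸ (⟨le_refl _, h2.le⟩ : (T m).1 ∈ Icc _ _)
        have h2' : (T m).2 ∈ f '' Icc s t := him ▸ (⟨h2.le, le_refl _⟩ : (T m).2 ∈ Icc _ _)
        rw [← h'] at h1' h2'
        simp only [Icc_self, image_singleton, mem_singleton_iff] at h1' h2'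
        rw [← h1'] at h2'
        linarith
      · exact h'
    exact ⟨(s, t), hslt, hsub, him⟩
  choose σ hσ using hS
  refine ⟨fun n => (T n).1, fun n => (T n).2, Set.Ici 1,
    fun n => Icc (σ (n - 1)).1 (σ (n - 1)).2, ?_, ?_, ?_, ?_, ?_, ?_, ?_⟩
  · exact fun n => (inv n).2.1.le
  · exact fun n => Icc_subset_Icc (hp0.le.trans (inv n).1) ((inv n).2.2.trans hq1)
  · intro n h
    have h0 : (0:ℝ) ∈ Icc (T n).1 (T n).2 := h ▸ (⟨le_refl 0, zero_le_one⟩ : (0:ℝ) ∈ Icc 0 1)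
    have := h0.1
    have := (inv n).1
    linarith
  · exact img
  · exact ⟨0, fun n _ => (inv n).2.1⟩
  · exact Set.Ici_infinite 1
  · intro n hn
    have hn1 : 1 ≤ n := hn
    have hmn : n - 1 + 1 = n := Nat.succ_pred_eq_of_pos hn1
    obtain ⟨hσ1, hσ2, hσ3⟩ := hσ (n - 1)
    refine ⟨⟨(σ (n-1)).1, (σ (n-1)).2, hσ1, rfl⟩, hσ2.trans hab01, ?_, ?_⟩
    · rintro z ⟨hz1, hz2⟩
      have hzb : z ≤ b := (hσ2 hz1).2
      have hlz : (T n).1 ≤ z := hz2.1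
      have hbl : b ≤ (T n).1 := hbp.trans (inv n).1
      have : z = (T n).1 := le_antisymm (hzb.trans hbl) hlz
      exact Or.inl this
    · have h4 := img (n - 1)
      rw [hmn] at h4
      rw [hσ3, h4]

theorem stmt_7 (f : ℝ → ℝ) (hf : ContinuousOn f (Icc 0 1))
    (hsurj : f '' Icc 0 1 = Icc 0 1) (hns : ¬ SplittingSeq f)
    (a b : ℝ)
    (ha : IsGreatest {x ∈ Icc (0:ℝ) 1 | f x = 0} a)
    (hb : IsLeast {x ∈ Icc (0:ℝ) 1 | f x = 1} b)
    (hab : a < b) :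
    ¬ ∃ p q : ℝ, p ∈ Icc b 1 ∧ q ∈ Icc b 1 ∧ p ≠ q ∧ f p = q ∧ f q = p := by
  rintro ⟨p, q, hp, hq, hpq, hfp, hfq⟩
  have ha0 : 0 ≤ a := ha.1.1.1
  have hfa : f a = 0 := ha.1.2
  have hb1 : b ≤ 1 := hb.1.1.2
  have hfb : f b = 1 := hb.1.2
  apply hns
  rcases hpq.lt_or_gt with h | h
  · exact buildSeq hf ha0 hab hb1 hfa hfb hp.1 h hq.2 hfp hfq
  · exact buildSeq hf ha0 hab hb1 hfa hfb hq.1 h hp.2 hfq hfp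
end

section
/- Let f : [0,1] → [0,1] be continuous, surjective, and not admitting a splitting sequence. Let a = max f⁻¹(0) and b = min f⁻¹(1), and suppose b < a. Then f has exactly one fixed point. -/
open Set Filter Topology

lemma cross_incr {f : ℝ → ℝ} (hf : ContinuousOn f (Icc 0 1)) {c d α β : ℝ}
    (hcd : c < d) (hsub : Icc c d ⊆ Icc 0 1) (hab : α < β)
    (hfc : f c = α) (hfd : f d = β) :
    ∃ u v, c ≤ u ∧ u < v ∧ v ≤ d ∧ f u = α ∧ f v = β ∧
      (∀ s, u < s → s < v → α < f s ∧ f s < β) ∧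
      f '' Icc u v = Icc α β := by
  have hfcd : ContinuousOn f (Icc c d) := hf.mono hsub
  -- the set of preimages of β in [c,d]
  set A : Set ℝ := Icc c d ∩ f ⁻¹' {β} with hA
  have hAne : A.Nonempty := ⟨d, ⟨hcd.le, le_rfl⟩, by simp [hfd]⟩
  have hAcl : IsClosed A := hfcd.preimage_isClosed_of_isClosed isClosed_Icc isClosed_singleton
  have hAbdd : BddBelow A := ⟨c, fun s hs => hs.1.1⟩
  set v := sInf A with hv
  have hvA : v ∈ A := hAcl.csInf_mem hAne hAbdd
  have hfv : f v = β := hvA.2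
  have hvmem : v ∈ Icc c d := hvA.1
  have hcv : c < v := by
    rcases eq_or_lt_of_le hvmem.1 with h | h
    · exfalso; rw [← h, hfc] at hfv; exact hab.ne hfv
    · exact h
  -- the set of preimages of α in [c,v]
  set B : Set ℝ := Icc c v ∩ f ⁻¹' {α} with hB
  have hBne : B.Nonempty := ⟨c, ⟨le_rfl, hcv.le⟩, by simp [hfc]⟩
  have hsubcv : Icc c v ⊆ Icc c d := Icc_subset_Icc le_rfl hvmem.2
  have hBcl : IsClosed B := (hfcd.mono hsubcv).preimage_isClosed_of_isClosed isClosed_Icc isClosed_singleton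
  have hBbdd : BddAbove B := ⟨v, fun s hs => hs.1.2⟩
  set u := sSup B with hu
  have huB : u ∈ B := hBcl.csSup_mem hBne hBbdd
  have hfu : f u = α := huB.2
  have humem : u ∈ Icc c v := huB.1
  have huv : u < v := by
    rcases eq_or_lt_of_le humem.2 with h | h
    · rw [h, hfv] at hfu; exact absurd hfu (by simp [hab.ne'])
    · exact h
  have huvsub : Icc u v ⊆ Icc c d := Icc_subset_Icc humem.1 hvmem.2
  have hfuv : ContinuousOn f (Icc u v) := hfcd.mono huvsub
  have hint : ∀ s, u < s → s < v → α < f s ∧ f s < β := by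
    intro s hus hsv
    have hsmem : s ∈ Icc c d := ⟨humem.1.trans hus.le, hsv.le.trans hvmem.2⟩
    constructor
    · by_contra h
      push_neg at h
      -- f s ≤ α : find preimage of α in [s,v], contradicting sSup
      have : α ∈ Icc (f s) (f v) := ⟨h, by rw [hfv]; exact hab.le⟩
      obtain ⟨t, htm, hft⟩ := intermediate_value_Icc hsv.le (hfcd.mono
        (Icc_subset_Icc hsmem.1 hvmem.2)) this
      have : t ∈ B := ⟨⟨hsmem.1.trans htm.1, htm.2⟩, by simp [hft]⟩
      have := le_csSup hBbdd this
      have : u < u := lt_of_lt_of_le (lt_of_lt_of_le hus htm.1) this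
      exact lt_irrefl _ this
    · by_contra h
      push_neg at h
      have : β ∈ Icc (f u) (f s) := ⟨by rw [hfu]; exact hab.le, h⟩
      obtain ⟨t, htm, hft⟩ := intermediate_value_Icc hus.le (hfcd.mono
        (Icc_subset_Icc humem.1 hsmem.2)) this
      have htA : t ∈ A := ⟨⟨humem.1.trans htm.1, htm.2.trans hsmem.2⟩, by simp [hft]⟩
      have := csInf_le hAbdd htA
      have : v < v := lt_of_le_of_lt (this.trans htm.2) hsv
      exact lt_irrefl _ this
  refine ⟨u, v, humem.1, huv, hvmem.2, hfu, hfv, hint, ?_⟩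
  apply Subset.antisymm
  · rintro _ ⟨s, hsm, rfl⟩
    rcases eq_or_lt_of_le hsm.1 with h | h1
    · rw [← h, hfu]; exact ⟨le_rfl, hab.le⟩
    rcases eq_or_lt_of_le hsm.2 with h | h2
    · rw [h, hfv]; exact ⟨hab.le, le_rfl⟩
    · exact ⟨(hint s h1 h2).1.le, (hint s h1 h2).2.le⟩
  · have := intermediate_value_Icc huv.le hfuv
    rw [hfu, hfv] at this
    exact this

lemma cross_decr {f : ℝ → ℝ} (hf : ContinuousOn f (Icc 0 1)) {c d α β : ℝ}
    (hcd : c < d) (hsub : Icc c d ⊆ Icc 0 1) (hab : α < β)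
    (hfc : f c = β) (hfd : f d = α) :
    ∃ u v, c ≤ u ∧ u < v ∧ v ≤ d ∧ f u = β ∧ f v = α ∧
      (∀ s, u < s → s < v → α < f s ∧ f s < β) ∧
      f '' Icc u v = Icc α β := by
  set g : ℝ → ℝ := fun t => α + β - f t with hg
  have hgc : ContinuousOn g (Icc 0 1) := continuousOn_const.sub hf
  have h1 : g c = α := by simp [hg, hfc]
  have h2 : g d = β := by simp [hg, hfd]
  obtain ⟨u, v, hcu, huv, hvd, hgu, hgv, hint, himg⟩ :=
    cross_incr hgc hcd hsub hab h1 h2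
  have hfu : f u = β := by have : α + β - f u = α := hgu; linarith
  have hfv : f v = α := by have : α + β - f v = β := hgv; linarith
  refine ⟨u, v, hcu, huv, hvd, hfu, hfv, ?_, ?_⟩
  · intro s h1' h2'
    obtain ⟨ha', hb'⟩ := hint s h1' h2'
    simp only [hg] at ha' hb'
    constructor <;> linarith
  · have hcomp : f = (fun t => α + β - t) ∘ g := by
      funext t; simp [hg]
    rw [hcomp, image_comp, himg, image_const_sub_Icc]
    congr 1 <;> ring

lemma cross_disj {f : ℝ → ℝ} {α β u v u' v' : ℝ}
    (huv : u < v) (h'uv : u' < v')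
    (hfu : f u = α ∨ f u = β) (hfu' : f u' = α ∨ f u' = β)
    (hint : ∀ s, u < s → s < v → α < f s ∧ f s < β)
    (hint' : ∀ s, u' < s → s < v' → α < f s ∧ f s < β)
    (hne : u ≠ u') :
    Icc u v ∩ Icc u' v' ⊆ {u', v'} := by
  rintro s ⟨hs1, hs2⟩
  by_contra h
  simp only [mem_insert_iff, mem_singleton_iff] at h
  push_neg at h
  obtain ⟨hne1, hne2⟩ := h
  have h1' : u' < s := lt_of_le_of_ne hs2.1 (Ne.symm hne1)
  have h2' : s < v' := lt_of_le_of_ne hs2.2 hne2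
  rcases lt_or_gt_of_ne hne with hlt | hgt
  · -- u < u', so u' ∈ (u, v)
    have hv : u' < v := lt_of_lt_of_le h1' hs1.2
    obtain ⟨hA, hB⟩ := hint u' hlt hv
    rcases hfu' with h | h <;> rw [h] at hA hB <;> linarith
  · -- u' < u, so u ∈ (u', v')
    have hv : u < v' := lt_of_le_of_lt hs1.1 h2'
    obtain ⟨hA, hB⟩ := hint' u hgt hv
    rcases hfu with h | h <;> rw [h] at hA hB <;> linarith

lemma fold_cross {f : ℝ → ℝ} (hf : ContinuousOn f (Icc 0 1)) {a b α β : ℝ}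
    (hbm : b ∈ Icc (0:ℝ) 1) (ham : a ∈ Icc (0:ℝ) 1)
    (hfb : f b = 1) (hfa : f a = 0) (hba : b < a)
    (hab : α < β) (hα : 0 ≤ α) (hβ : β ≤ 1) :
    ∃ u v, u < v ∧ Icc u v ⊆ Icc 0 1 ∧ f u = β ∧ f v = α ∧
      (∀ s, u < s → s < v → α < f s ∧ f s < β) ∧
      f '' Icc u v = Icc α β := by
  have hsubba : Icc b a ⊆ Icc 0 1 := Icc_subset_Icc hbm.1 ham.2
  have h1 : α ∈ Icc (f a) (f b) := by rw [hfa, hfb]; exact ⟨hα, hab.le.trans hβ⟩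
  obtain ⟨sα, hsαm, hfsα⟩ := intermediate_value_Icc' hba.le (hf.mono hsubba) h1
  have hsubb : Icc b sα ⊆ Icc 0 1 := Icc_subset_Icc hbm.1 (hsαm.2.trans ham.2)
  have h2 : β ∈ Icc (f sα) (f b) := by rw [hfsα, hfb]; exact ⟨hab.le, hβ⟩
  obtain ⟨sβ, hsβm, hfsβ⟩ := intermediate_value_Icc' hsαm.1 (hf.mono hsubb) h2
  have hlt : sβ < sα := by
    rcases eq_or_lt_of_le hsβm.2 with h | h
    · exfalso; rw [h, hfsα] at hfsβ; exact hab.ne hfsβ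
    · exact h
  obtain ⟨u, v, h1', h2', h3', h4', h5', h6', h7'⟩ :=
    cross_decr hf hlt (Icc_subset_Icc (hbm.1.trans hsβm.1) (hsαm.2.trans ham.2)) hab hfsβ hfsα
  exact ⟨u, v, h2', (Icc_subset_Icc (h1'.trans' (hbm.1.trans hsβm.1)) (h3'.trans (hsαm.2.trans ham.2))), h4', h5', h6', h7'⟩

/-- A nondegenerate closed subinterval of `[0,1]` covered by its own image. -/
def SplitBox (f : ℝ → ℝ) : Type :=
  {c : ℝ × ℝ // c.1 < c.2 ∧ Icc c.1 c.2 ⊆ Icc (0:ℝ) 1 ∧ Icc c.1 c.2 ⊆ f '' Icc c.1 c.2}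

lemma box_step {f : ℝ → ℝ} (hf : ContinuousOn f (Icc 0 1)) (t : SplitBox f) :
    ∃ t' : SplitBox f,
      t.1.1 ≤ t'.1.1 ∧ t'.1.2 ≤ t.1.2 ∧
      f '' Icc t'.1.1 t'.1.2 = Icc t.1.1 t.1.2 ∧
      (∀ s, t'.1.1 < s → s < t'.1.2 → t.1.1 < f s ∧ f s < t.1.2) ∧
      ((f t'.1.1 = t.1.1 ∧ f t'.1.2 = t.1.2) ∨ (f t'.1.1 = t.1.2 ∧ f t'.1.2 = t.1.1)) := by
  obtain ⟨⟨X, Y⟩, hXY, hsub, hcov⟩ := t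
  dsimp only at *
  obtain ⟨s1, hs1m, hfs1⟩ := hcov ⟨le_rfl, hXY.le⟩
  obtain ⟨s2, hs2m, hfs2⟩ := hcov ⟨hXY.le, le_rfl⟩
  have hs12 : s1 ≠ s2 := by
    intro h; rw [h, hfs2] at hfs1; exact hXY.ne' hfs1
  rcases lt_or_gt_of_ne hs12 with hlt | hgt
  · obtain ⟨u, v, hcu, huv, hvd, hfu, hfv, hint, himg⟩ :=
      cross_incr hf hlt ((Icc_subset_Icc hs1m.1 hs2m.2).trans hsub) hXY hfs1 hfs2
    have hsub' : Icc u v ⊆ Icc X Y :=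
      (Icc_subset_Icc hcu hvd).trans (Icc_subset_Icc hs1m.1 hs2m.2)
    refine ⟨⟨(u, v), huv, hsub'.trans hsub, ?_⟩, (hsub' ⟨le_rfl, huv.le⟩).1,
      (hsub' ⟨huv.le, le_rfl⟩).2, himg, hint, Or.inl ⟨hfu, hfv⟩⟩
    rw [himg]; exact hsub'
  · obtain ⟨u, v, hcu, huv, hvd, hfu, hfv, hint, himg⟩ :=
      cross_decr hf hgt ((Icc_subset_Icc hs2m.1 hs1m.2).trans hsub) hXY hfs2 hfs1
    have hsub' : Icc u v ⊆ Icc X Y :=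
      (Icc_subset_Icc hcu hvd).trans (Icc_subset_Icc hs2m.1 hs1m.2)
    refine ⟨⟨(u, v), huv, hsub'.trans hsub, ?_⟩, (hsub' ⟨le_rfl, huv.le⟩).1,
      (hsub' ⟨huv.le, le_rfl⟩).2, himg, hint, Or.inr ⟨hfu, hfv⟩⟩
    rw [himg]; exact hsub'

lemma key {f : ℝ → ℝ} (hf : ContinuousOn f (Icc 0 1))
    {a b p q : ℝ}
    (hbm : b ∈ Icc (0:ℝ) 1) (ham : a ∈ Icc (0:ℝ) 1)
    (hfb : f b = 1) (hfa : f a = 0) (hba : b < a)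
    (hpq : p < q) (hpm : p ∈ Icc (0:ℝ) 1) (hqm : q ∈ Icc (0:ℝ) 1)
    (hfp : f p = p) (hfq : f q = q) (hne01 : ¬(p = 0 ∧ q = 1)) :
    SplittingSeq f := by
  classical
  have hsubpq : Icc p q ⊆ Icc (0:ℝ) 1 := Icc_subset_Icc hpm.1 hqm.2
  have hcov0 : Icc p q ⊆ f '' Icc p q := by
    have := intermediate_value_Icc hpq.le (hf.mono hsubpq)
    rw [hfp, hfq] at this; exact this
  choose step hstep using fun t => box_step (f := f) hf t
  set t0 : SplitBox f := ⟨(p, q), hpq, hsubpq, hcov0⟩ with ht0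
  set seq : ℕ → SplitBox f := fun n => step^[n] t0 with hseqdef
  set x : ℕ → ℝ := fun n => (seq n).1.1 with hxdef
  set y : ℕ → ℝ := fun n => (seq n).1.2 with hydef
  have hseqsucc : ∀ n, seq (n+1) = step (seq n) := fun n =>
    Function.iterate_succ_apply' step n t0
  have hxy : ∀ n, x n < y n := fun n => (seq n).2.1
  have hsub01 : ∀ n, Icc (x n) (y n) ⊆ Icc (0:ℝ) 1 := fun n => (seq n).2.2.1
  have hrel : ∀ n, x n ≤ x (n+1) ∧ y (n+1) ≤ y n ∧
      f '' Icc (x (n+1)) (y (n+1)) = Icc (x n) (y n) ∧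
      (∀ s, x (n+1) < s → s < y (n+1) → x n < f s ∧ f s < y n) ∧
      ((f (x (n+1)) = x n ∧ f (y (n+1)) = y n) ∨
       (f (x (n+1)) = y n ∧ f (y (n+1)) = x n)) := by
    intro n
    have h := hstep (seq n)
    rw [← hseqsucc n] at h
    exact h
  have hx0 : x 0 = p := rfl
  have hy0 : y 0 = q := rfl
  have hsubpq' : ∀ n, Icc (x n) (y n) ⊆ Icc p q := by
    intro n
    induction n with
    | zero => rw [hx0, hy0]
    | succ k ih => exact (Icc_subset_Icc (hrel k).1 (hrel k).2.1).trans ih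
  have hx0le : ∀ n, (0:ℝ) ≤ x n := fun n => (hsub01 n ⟨le_rfl, (hxy n).le⟩).1
  have hy1le : ∀ n, y n ≤ 1 := fun n => (hsub01 n ⟨(hxy n).le, le_rfl⟩).2
  -- the set of levels admitting a split
  set SplitN : Set ℕ := {n | ∃ u v : ℝ, u < v ∧ Icc u v ⊆ Icc (0:ℝ) 1 ∧
    (Icc u v ∩ Icc (x (n+1)) (y (n+1)) ⊆ ({x (n+1), y (n+1)} : Set ℝ)) ∧
    f '' Icc u v = Icc (x n) (y n)} with hSplitN
  -- dichotomy
  have hdich : ∀ n, n ∈ SplitN ∨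
      (f (x (n+1)) = y n ∧ f (y (n+1)) = x n ∧
       (∀ s ∈ Icc (0:ℝ) 1, y (n+1) < s → f s < y n) ∧
       (∀ s ∈ Icc (0:ℝ) 1, s < x (n+1) → x n < f s)) := by
    intro n
    rcases (hrel n).2.2.2.2 with hincr | hdecr
    · -- increasing crossing: split via the fold
      obtain ⟨u, v, huv, hsubS, hfu, hfv, hintS, himgS⟩ :=
        fold_cross hf hbm ham hfb hfa hba (hxy n) (hx0le n) (hy1le n)
      left
      refine ⟨u, v, huv, hsubS, ?_, himgS⟩
      refine cross_disj (f := f) (α := x n) (β := y n) huv (hxy (n+1))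
        (Or.inr hfu) (Or.inl hincr.1) hintS (hrel n).2.2.2.1 ?_
      intro h
      rw [h, hincr.1] at hfu
      exact (hxy n).ne hfu
    · -- decreasing crossing
      by_cases hex1 : ∃ s ∈ Icc (0:ℝ) 1, y (n+1) < s ∧ y n ≤ f s
      · obtain ⟨s, hsm, hys, hfs⟩ := hex1
        have h0y : (0:ℝ) ≤ y (n+1) := (hsub01 (n+1) ⟨(hxy (n+1)).le, le_rfl⟩).1
        have hsubys : Icc (y (n+1)) s ⊆ Icc (0:ℝ) 1 := Icc_subset_Icc h0y hsm.2
        have hyn : y n ∈ Icc (f (y (n+1))) (f s) := by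
          rw [hdecr.2]; exact ⟨(hxy n).le, hfs⟩
        obtain ⟨s', hs'm, hfs'⟩ := intermediate_value_Icc hys.le (hf.mono hsubys) hyn
        have hlt : y (n+1) < s' := by
          rcases eq_or_lt_of_le hs'm.1 with h | h
          · exfalso; rw [← h, hdecr.2] at hfs'; exact (hxy n).ne hfs'
          · exact h
        obtain ⟨u, v, hcu, huv, hvd, hfu, hfv, hintS, himgS⟩ :=
          cross_incr hf hlt (Icc_subset_Icc h0y (hs'm.2.trans hsm.2)) (hxy n)
            hdecr.2 hfs'
        left
        refine ⟨u, v, huv, Icc_subset_Icc (h0y.trans hcu)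
          ((hvd.trans hs'm.2).trans hsm.2), ?_, himgS⟩
        rintro t ⟨ht1, ht2⟩
        right
        exact le_antisymm ht2.2 (hcu.trans ht1.1)
      · by_cases hex2 : ∃ s ∈ Icc (0:ℝ) 1, s < x (n+1) ∧ f s ≤ x n
        · obtain ⟨s, hsm, hxs, hfs⟩ := hex2
          have hx1 : x (n+1) ≤ 1 := (hsub01 (n+1) ⟨le_rfl, (hxy (n+1)).le⟩).2
          have hsubsx : Icc s (x (n+1)) ⊆ Icc (0:ℝ) 1 := Icc_subset_Icc hsm.1 hx1
          have hxn : x n ∈ Icc (f s) (f (x (n+1))) := by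
            rw [hdecr.1]; exact ⟨hfs, (hxy n).le⟩
          obtain ⟨s', hs'm, hfs'⟩ := intermediate_value_Icc hxs.le (hf.mono hsubsx) hxn
          have hlt : s' < x (n+1) := by
            rcases eq_or_lt_of_le hs'm.2 with h | h
            · exfalso; rw [h, hdecr.1] at hfs'; exact (hxy n).ne hfs'.symm
            · exact h
          obtain ⟨u, v, hcu, huv, hvd, hfu, hfv, hintS, himgS⟩ :=
            cross_incr hf hlt (Icc_subset_Icc (hsm.1.trans hs'm.1) hx1) (hxy n)
              hfs' hdecr.1
          left
          refine ⟨u, v, huv, Icc_subset_Icc ((hsm.1.trans hs'm.1).trans hcu)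
            (hvd.trans hx1), ?_, himgS⟩
          rintro t ⟨ht1, ht2⟩
          left
          exact le_antisymm (ht1.2.trans hvd) ht2.1
        · right
          push_neg at hex1 hex2
          exact ⟨hdecr.1, hdecr.2, hex1, hex2⟩

  by_cases hinf : SplitN.Infinite
  · -- infinitely many split levels: build a splitting sequence
    refine ⟨x, y, (fun k => k + 1) '' SplitN,
      fun m => Nat.casesOn m (∅ : Set ℝ) (fun n =>
        if h : ∃ u v : ℝ, u < v ∧ Icc u v ⊆ Icc (0:ℝ) 1 ∧
            (Icc u v ∩ Icc (x (n+1)) (y (n+1)) ⊆ ({x (n+1), y (n+1)} : Set ℝ)) ∧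
            f '' Icc u v = Icc (x n) (y n)
        then Icc h.choose h.choose_spec.choose else ∅),
      fun n => (hxy n).le, hsub01, ?_, fun n => (hrel n).2.2.1, ⟨0, fun n _ => hxy n⟩,
      hinf.image ((add_left_injective 1).injOn), ?_⟩
    · intro n h
      have h0 : (0:ℝ) ∈ Icc (x n) (y n) := by
        rw [h]; exact left_mem_Icc.mpr zero_le_one
      have h1 : (1:ℝ) ∈ Icc (x n) (y n) := by
        rw [h]; exact right_mem_Icc.mpr zero_le_one
      exact hne01 ⟨le_antisymm (hsubpq' n h0).1 hpm.1,
        le_antisymm hqm.2 (hsubpq' n h1).2⟩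
    · rintro m ⟨n, hn, rfl⟩
      have h' : ∃ u v : ℝ, u < v ∧ Icc u v ⊆ Icc (0:ℝ) 1 ∧
          (Icc u v ∩ Icc (x (n+1)) (y (n+1)) ⊆ ({x (n+1), y (n+1)} : Set ℝ)) ∧
          f '' Icc u v = Icc (x n) (y n) := hn
      have hspec := h'.choose_spec.choose_spec
      simp only [dif_pos h']
      exact ⟨⟨h'.choose, h'.choose_spec.choose, hspec.1, rfl⟩, hspec.2.1, hspec.2.2.1,
        by rw [hspec.2.2.2, ← (hrel n).2.2.1]⟩
  · -- finitely many split levels: derive a contradiction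
    exfalso
    obtain ⟨M, hM⟩ := (Set.not_infinite.mp hinf).bddAbove
    have hgood : ∀ n, M < n → (f (x (n+1)) = y n ∧ f (y (n+1)) = x n ∧
        (∀ s ∈ Icc (0:ℝ) 1, y (n+1) < s → f s < y n) ∧
        (∀ s ∈ Icc (0:ℝ) 1, s < x (n+1) → x n < f s)) := by
      intro n hn
      refine (hdich n).resolve_left fun hmem => absurd (hM hmem) (not_le.mpr hn)
    have hmono : Monotone x := monotone_nat_of_le_succ fun n => (hrel n).1
    have hanti : Antitone y := antitone_nat_of_succ_le fun n => (hrel n).2.1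
    have hbddx : BddAbove (range x) := by
      refine ⟨q, ?_⟩; rintro _ ⟨n, rfl⟩
      exact (hsubpq' n ⟨le_rfl, (hxy n).le⟩).2
    have hbddy : BddBelow (range y) := by
      refine ⟨p, ?_⟩; rintro _ ⟨n, rfl⟩
      exact (hsubpq' n ⟨(hxy n).le, le_rfl⟩).1
    have hxT : Tendsto x atTop (𝓝 (⨆ n, x n)) := tendsto_atTop_ciSup hmono hbddx
    have hyT : Tendsto y atTop (𝓝 (⨅ n, y n)) := tendsto_atTop_ciInf hanti hbddy
    set X : ℝ := ⨆ n, x n with hX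
    set Y : ℝ := ⨅ n, y n with hY
    have hpX : p ≤ X := by
      have := le_ciSup hbddx 0
      rwa [hx0] at this
    have hXq : X ≤ q := ciSup_le fun n => (hsubpq' n ⟨le_rfl, (hxy n).le⟩).2
    have hXm : X ∈ Icc (0:ℝ) 1 := ⟨hpm.1.trans hpX, hXq.trans hqm.2⟩
    -- f X = Y
    have hfXY : f X = Y := by
      have hxs : Tendsto (fun n => x (n+1)) atTop (𝓝 X) :=
        hxT.comp (tendsto_add_atTop_nat 1)
      have hin : Tendsto (fun n => x (n+1)) atTop (𝓝[Icc (0:ℝ) 1] X) :=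
        tendsto_nhdsWithin_of_tendsto_nhds_of_eventually_within _ hxs
          (Eventually.of_forall fun n => hsub01 (n+1) ⟨le_rfl, (hxy (n+1)).le⟩)
      have h1 : Tendsto (fun n => f (x (n+1))) atTop (𝓝 (f X)) :=
        ((hf X hXm).tendsto).comp hin
      have h2 : Tendsto (fun n => y n) atTop (𝓝 (f X)) := by
        refine h1.congr' ?_
        filter_upwards [eventually_ge_atTop (M+1)] with n hn
        exact (hgood n (Nat.lt_of_succ_le hn)).1
      exact tendsto_nhds_unique h2 hyT
    -- limit versions of the no-splitting inequalities
    have hlim2 : ∀ s ∈ Icc (0:ℝ) 1, s < X → X ≤ f s := by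
      intro s hsm hs
      have hev : ∀ᶠ n in atTop, s < x n := hxT.eventually (eventually_gt_nhds hs)
      refine le_of_tendsto hxT ?_
      obtain ⟨n1, hn1⟩ := (hev.and (eventually_ge_atTop (M+1))).exists_forall_of_atTop
      filter_upwards [eventually_ge_atTop n1] with n hn
      obtain ⟨hs1, hs2⟩ := hn1 n hn
      have : s < x (n+1) := lt_of_lt_of_le hs1 (hmono (Nat.le_succ n))
      exact ((hgood n (Nat.lt_of_succ_le hs2)).2.2.2 s hsm this).le
    have hlim1 : ∀ s ∈ Icc (0:ℝ) 1, Y < s → f s ≤ Y := by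
      intro s hsm hs
      have hev : ∀ᶠ n in atTop, y n < s := hyT.eventually (eventually_lt_nhds hs)
      refine ge_of_tendsto hyT ?_
      obtain ⟨n1, hn1⟩ := (hev.and (eventually_ge_atTop (M+1))).exists_forall_of_atTop
      filter_upwards [eventually_ge_atTop n1] with n hn
      obtain ⟨hs1, hs2⟩ := hn1 n hn
      have : y (n+1) < s := lt_of_le_of_lt (hanti (Nat.le_succ n)) hs1
      exact ((hgood n (Nat.lt_of_succ_le hs2)).2.2.1 s hsm this).le
    -- conclude
    have hXp : X ≤ p := by
      by_contra h
      push_neg at h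
      have := hlim2 p hpm h
      rw [hfp] at this
      exact absurd this (not_le.mpr h)
    have hXeq : X = p := le_antisymm hXp hpX
    have hYeq : Y = p := by rw [← hfXY, hXeq, hfp]
    have hq : f q ≤ Y := hlim1 q hqm (by rw [hYeq]; exact hpq)
    rw [hfq, hYeq] at hq
    exact absurd hq (not_le.mpr hpq)

theorem stmt_8 (f : ℝ → ℝ) (hf : ContinuousOn f (Icc 0 1))
    (hsurj : f '' Icc 0 1 = Icc 0 1) (hns : ¬ SplittingSeq f)
    (a b : ℝ)
    (ha : IsGreatest {x ∈ Icc (0:ℝ) 1 | f x = 0} a)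
    (hb : IsLeast {x ∈ Icc (0:ℝ) 1 | f x = 1} b)
    (hba : b < a) :
    ∃! x, x ∈ Icc (0:ℝ) 1 ∧ f x = x := by
  obtain ⟨⟨ham, hfa⟩, -⟩ := ha
  obtain ⟨⟨hbm, hfb⟩, -⟩ := hb
  have hsubba : Icc b a ⊆ Icc (0:ℝ) 1 := Icc_subset_Icc hbm.1 ham.2
  -- existence of a fixed point in (b, a)
  have hg : ContinuousOn (fun t => f t - t) (Icc b a) :=
    (hf.mono hsubba).sub continuousOn_id
  have h0m : (0:ℝ) ∈ Icc (f a - a) (f b - b) := by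
    rw [hfa, hfb]
    constructor
    · simp only [zero_sub, neg_nonpos]; linarith [hbm.1]
    · linarith [ham.2]
  obtain ⟨z, hzm, hgz⟩ := intermediate_value_Icc' hba.le hg h0m
  have hfz : f z = z := by linarith [sub_eq_zero.mp hgz]
  have hzm01 : z ∈ Icc (0:ℝ) 1 := hsubba hzm
  have hzb : z ≠ b := by
    intro h
    rw [h, hfb] at hfz
    have : a ≤ 1 := ham.2
    linarith [hba]
  have hza : z ≠ a := by
    intro h
    rw [h, hfa] at hfz
    have : 0 ≤ b := hbm.1
    linarith [hba]
  have hz0 : 0 < z := by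
    rcases eq_or_lt_of_le (le_trans hbm.1 hzm.1) with h | h
    · exfalso
      exact hzb (le_antisymm (by linarith [hzm.1, hbm.1]) (by linarith [hzm.1]))
    · exact h
  have hz1 : z < 1 := by
    rcases eq_or_lt_of_le (le_trans hzm.2 ham.2) with h | h
    · exact absurd (le_antisymm hzm.2 (by rw [h]; exact ham.2)) hza
    · exact h
  refine ⟨z, ⟨hzm01, hfz⟩, ?_⟩
  rintro w ⟨hwm, hfw⟩
  by_contra hwz
  set p := min w z with hp
  set q := max w z with hq
  have hpq : p < q := min_lt_max.mpr hwz
  have hcase : (p = w ∧ q = z) ∨ (p = z ∧ q = w) := by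
    rcases le_total w z with h | h
    · exact Or.inl ⟨min_eq_left h, max_eq_right h⟩
    · exact Or.inr ⟨min_eq_right h, max_eq_left h⟩
  have hfp : f p = p := by rcases hcase with ⟨h, -⟩ | ⟨h, -⟩ <;> rw [h] <;> assumption
  have hfq : f q = q := by rcases hcase with ⟨-, h⟩ | ⟨-, h⟩ <;> rw [h] <;> assumption
  have hpm : p ∈ Icc (0:ℝ) 1 := by
    rcases hcase with ⟨h, -⟩ | ⟨h, -⟩ <;> rw [h] <;> assumption
  have hqm : q ∈ Icc (0:ℝ) 1 := by
    rcases hcase with ⟨-, h⟩ | ⟨-, h⟩ <;> rw [h] <;> assumption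
  have hne01 : ¬(p = 0 ∧ q = 1) := by
    rintro ⟨h0, h1⟩
    rcases hcase with ⟨-, h⟩ | ⟨h, -⟩
    · rw [h] at h1; exact absurd h1 (ne_of_lt hz1)
    · rw [h] at h0; exact absurd h0 (ne_of_gt hz0)
  exact hns (key hf hbm ham hfb hfa hba hpq hpm hqm hfp hfq hne01)
end

section
/- Let f : [0,1] → [0,1] be the tent map defined by f(x) = 2x for x ≤ 1/2 and f(x) = 2 - 2x for x ≥ 1/2. Then f admits a splitting sequence. -/
open Set Filter Topology

private lemma tent_img_left (a : ℝ) (h0 : 0 ≤ a) (h : a ≤ 1/2) :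
    (fun x : ℝ => if x ≤ 1/2 then 2*x else 2 - 2*x) '' Icc 0 a = Icc 0 (2*a) := by
  ext y
  constructor
  · rintro ⟨x, ⟨hx0, hx1⟩, rfl⟩
    have : x ≤ 1/2 := by linarith
    simp only [if_pos this]
    constructor <;> linarith
  · rintro ⟨hy0, hy1⟩
    refine ⟨y/2, ⟨by linarith, by linarith⟩, ?_⟩
    have : y/2 ≤ 1/2 := by linarith
    simp only [if_pos this]; ring

private lemma tent_img_right (a : ℝ) (h0 : 0 ≤ a) (h : a ≤ 1/2) :
    (fun x : ℝ => if x ≤ 1/2 then 2*x else 2 - 2*x) '' Icc (1-a) 1 = Icc 0 (2*a) := by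
  ext y
  constructor
  · rintro ⟨x, ⟨hx0, hx1⟩, rfl⟩
    by_cases hc : x ≤ 1/2
    · simp only [if_pos hc]
      have : x = 1/2 := by linarith
      constructor <;> nlinarith
    · simp only [if_neg hc]
      push_neg at hc
      constructor <;> linarith
  · rintro ⟨hy0, hy1⟩
    refine ⟨1 - y/2, ⟨by linarith, by linarith⟩, ?_⟩
    by_cases hc : 1 - y/2 ≤ (1:ℝ)/2
    · simp only [if_pos hc]
      have : y = 1 := by linarith
      linarith
    · simp only [if_neg hc]; ring
private lemma r_facts (n : ℕ) : 0 < ((1:ℝ)/2)^(n+1) ∧ ((1:ℝ)/2)^(n+1) ≤ 1/2 := by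
  constructor
  · positivity
  · calc ((1:ℝ)/2)^(n+1) ≤ ((1:ℝ)/2)^1 :=
        pow_le_pow_of_le_one (by norm_num) (by norm_num) (by omega)
    _ = 1/2 := pow_one _

theorem stmt_9 :
    SplittingSeq (fun x : ℝ => if x ≤ 1/2 then 2*x else 2 - 2*x) := by
  refine ⟨fun _ => 0, fun n => ((1:ℝ)/2)^(n+1), Set.univ,
    fun n => Icc (1 - ((1:ℝ)/2)^(n+1)) 1, ?_, ?_, ?_, ?_, ?_, ?_, ?_⟩
  · intro n; exact (r_facts n).1.le
  · intro n
    exact Icc_subset_Icc le_rfl (by linarith [(r_facts n).2])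
  · intro n h
    have h1 : (1:ℝ) ∈ Icc (0:ℝ) (((1:ℝ)/2)^(n+1)) := by
      rw [h]; exact ⟨zero_le_one, le_rfl⟩
    have := h1.2
    linarith [(r_facts n).2]
  · intro n
    have h := tent_img_left (((1:ℝ)/2)^(n+2)) (r_facts (n+1)).1.le (r_facts (n+1)).2
    rw [h]
    congr 1
    rw [pow_succ]; ring
  · exact ⟨0, fun n _ => (r_facts n).1⟩
  · exact Set.infinite_univ
  · intro n _
    obtain ⟨hr0, hr2⟩ := r_facts n
    refine ⟨⟨1 - ((1:ℝ)/2)^(n+1), 1, by linarith, rfl⟩,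
      Icc_subset_Icc (by linarith) le_rfl, ?_, ?_⟩
    · rintro x ⟨⟨hx1, _⟩, _, hx2⟩
      right
      have : (1:ℝ)/2 ≤ 1 - ((1:ℝ)/2)^(n+1) := by linarith
      show x = _
      linarith
    · rw [tent_img_left _ hr0.le hr2, tent_img_right _ hr0.le hr2]
end
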